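/- arXiv:1807.01878 — 11 statements merged into one kernel-verified Lean document; each statement's English description precedes it below -/
import Mathlib

section
/- The derivative ∂₂f(y, y₀) is nonzero for every y ∈ I, so the function g : I → ℝ defined by g(y) := ∫_{y₀}^{y} (∂₂f(t, y₀))⁻¹ dt is well defined; moreover g is a C^k-diffeomorphism from I onto all of ℝ and a group isomorphism from (I, ⋆) onto (ℝ, +), i.e. g(f(y, z)) = g(y) + g(z) for all y, z ∈ I. -/
open MeasureTheory intervalIntegral

/-%% auxiliary lemmas %%-/

section
variable (k : ℕ) {I : Set ℝ} {f : ℝ → ℝ → ℝ} {y₀ : ℝ}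

-- slice smoothness
lemma aux_slice (hIopen : IsOpen I)
    (hf_smooth : ContDiffOn ℝ k (fun p : ℝ × ℝ => f p.1 p.2) (I ×ˢ I))
    {y : ℝ} (hy : y ∈ I) : ContDiffOn ℝ k (fun x => f y x) I :=
  hf_smooth.comp ((contDiff_const.prodMk contDiff_id).contDiffOn) (fun x hx => ⟨hy, hx⟩)

lemma aux_hasDerivAt (hk : 1 ≤ k) (hIopen : IsOpen I)
    (hf_smooth : ContDiffOn ℝ k (fun p : ℝ × ℝ => f p.1 p.2) (I ×ˢ I))
    {y x : ℝ} (hy : y ∈ I) (hx : x ∈ I) :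
    HasDerivAt (fun x => f y x) (deriv (fun x => f y x) x) x := by
  have := ((aux_slice k hIopen hf_smooth hy).contDiffAt (hIopen.mem_nhds hx)).differentiableAt
    (by exact_mod_cast Nat.one_le_iff_ne_zero.mp hk)
  exact this.hasDerivAt

end
section
variable {k : ℕ} {I : Set ℝ} {f : ℝ → ℝ → ℝ} {y₀ : ℝ} {inv : ℝ → ℝ}

lemma aux_ne_zero (hk : 1 ≤ k) (hIopen : IsOpen I) (hy₀ : y₀ ∈ I)
    (hmul : ∀ a ∈ I, ∀ b ∈ I, f a b ∈ I)
    (hassoc : ∀ a ∈ I, ∀ b ∈ I, ∀ c ∈ I, f (f a b) c = f a (f b c))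
    (hone_mul : ∀ a ∈ I, f y₀ a = a)
    (hinv_mem : ∀ a ∈ I, inv a ∈ I)
    (hmul_inv : ∀ a ∈ I, f a (inv a) = y₀)
    (hinv_mul : ∀ a ∈ I, f (inv a) a = y₀)
    (hf_smooth : ContDiffOn ℝ k (fun p : ℝ × ℝ => f p.1 p.2) (I ×ˢ I))
    {y : ℝ} (hy : y ∈ I) : deriv (fun x => f y x) y₀ ≠ 0 := by
  have hiy : inv y ∈ I := hinv_mem y hy
  have h1 : HasDerivAt (fun x => f (inv y) x) (deriv (fun x => f (inv y) x) y) y :=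
    aux_hasDerivAt k hk hIopen hf_smooth hiy hy
  have h2 : HasDerivAt (fun x => f y x) (deriv (fun x => f y x) y₀) (f (inv y) y) := by
    rw [hinv_mul y hy]
    exact aux_hasDerivAt k hk hIopen hf_smooth hy hy₀
  have hcomp := HasDerivAt.comp y h2 h1
  have heq : (fun x => id x) =ᶠ[nhds y] (fun x => f y (f (inv y) x)) := by
    filter_upwards [hIopen.mem_nhds hy] with x hx
    rw [← hassoc y hy (inv y) hiy x hx, hmul_inv y hy, hone_mul x hx]; rfl
  have := (hcomp.congr_of_eventuallyEq heq).unique (hasDerivAt_id y)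
  intro h0
  rw [h0] at this
  simpa using this

-- R2: cocycle identity
lemma aux_cocycle (hk : 1 ≤ k) (hIopen : IsOpen I) (hy₀ : y₀ ∈ I)
    (hmul : ∀ a ∈ I, ∀ b ∈ I, f a b ∈ I)
    (hassoc : ∀ a ∈ I, ∀ b ∈ I, ∀ c ∈ I, f (f a b) c = f a (f b c))
    (hmul_one : ∀ a ∈ I, f a y₀ = a)
    (hf_smooth : ContDiffOn ℝ k (fun p : ℝ × ℝ => f p.1 p.2) (I ×ˢ I))
    {y z : ℝ} (hy : y ∈ I) (hz : z ∈ I) :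
    deriv (fun w => f y w) z * deriv (fun x => f z x) y₀
      = deriv (fun x => f (f y z) x) y₀ := by
  have h1 : HasDerivAt (fun x => f z x) (deriv (fun x => f z x) y₀) y₀ :=
    aux_hasDerivAt k hk hIopen hf_smooth hz hy₀
  have h2 : HasDerivAt (fun w => f y w) (deriv (fun w => f y w) z) (f z y₀) := by
    rw [hmul_one z hz]
    exact aux_hasDerivAt k hk hIopen hf_smooth hy hz
  have hcomp := HasDerivAt.comp y₀ h2 h1
  have heq : (fun x => f (f y z) x) =ᶠ[nhds y₀] (fun x => f y (f z x)) := by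
    filter_upwards [hIopen.mem_nhds hy₀] with x hx
    rw [hassoc y hy z hz x hx]
  have h3 : HasDerivAt (fun x => f (f y z) x) (deriv (fun x => f (f y z) x) y₀) y₀ :=
    aux_hasDerivAt k hk hIopen hf_smooth (hmul y hy z hz) hy₀
  exact (hcomp.congr_of_eventuallyEq heq).unique h3

end
section
variable {k : ℕ} {I : Set ℝ} {f : ℝ → ℝ → ℝ} {y₀ : ℝ}

lemma aux_deriv_eq_fderiv (hk : 1 ≤ k) (hIopen : IsOpen I)
    (hf_smooth : ContDiffOn ℝ k (fun p : ℝ × ℝ => f p.1 p.2) (I ×ˢ I))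
    {y x : ℝ} (hy : y ∈ I) (hx : x ∈ I) :
    deriv (fun x => f y x) x
      = fderiv ℝ (fun p : ℝ × ℝ => f p.1 p.2) (y, x) ((0 : ℝ), (1 : ℝ)) := by
  have hF : DifferentiableAt ℝ (fun p : ℝ × ℝ => f p.1 p.2) (y, x) :=
    (hf_smooth.contDiffAt ((hIopen.prod hIopen).mem_nhds ⟨hy, hx⟩)).differentiableAt
      (by exact_mod_cast Nat.one_le_iff_ne_zero.mp hk)
  have hφ : HasDerivAt (fun t : ℝ => ((y : ℝ), t)) ((0 : ℝ), (1 : ℝ)) x :=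
    (hasDerivAt_const x y).prodMk (hasDerivAt_id x)
  have := hF.hasFDerivAt.comp_hasDerivAt x hφ
  exact this.deriv

lemma aux_hsmooth (hk : 1 ≤ k) (hIopen : IsOpen I) (hy₀ : y₀ ∈ I)
    (hf_smooth : ContDiffOn ℝ k (fun p : ℝ × ℝ => f p.1 p.2) (I ×ˢ I)) :
    ContDiffOn ℝ (k - 1 : ℕ) (fun y => deriv (fun x => f y x) y₀) I := by
  have hF' : ContDiffOn ℝ (k - 1 : ℕ) (fderiv ℝ (fun p : ℝ × ℝ => f p.1 p.2)) (I ×ˢ I) :=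
    hf_smooth.fderiv_of_isOpen (hIopen.prod hIopen)
      (by exact_mod_cast (Nat.succ_pred_eq_of_pos hk).le)
  have hF1 : ContDiffOn ℝ (k - 1 : ℕ) (fun y : ℝ => fderiv ℝ (fun p : ℝ × ℝ => f p.1 p.2) (y, y₀)) I :=
    hF'.comp ((contDiff_id.prodMk contDiff_const).contDiffOn) (fun y hy => ⟨hy, hy₀⟩)
  have h2 : ContDiffOn ℝ (k - 1 : ℕ)
      (fun y : ℝ => fderiv ℝ (fun p : ℝ × ℝ => f p.1 p.2) (y, y₀) ((0 : ℝ), (1 : ℝ))) I :=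
    (ContinuousLinearMap.apply ℝ ℝ ((0 : ℝ), (1 : ℝ))).contDiff.comp_contDiffOn hF1
  exact h2.congr (fun y hy => aux_deriv_eq_fderiv hk hIopen hf_smooth hy hy₀)

end
section
variable {I : Set ℝ} {h : ℝ → ℝ} {y₀ : ℝ}

lemma aux_g_hasDerivAt (hIopen : IsOpen I) (hIconn : I.OrdConnected) (hy₀ : y₀ ∈ I)
    (hcont : ContinuousOn (fun t => (h t)⁻¹) I) {y : ℝ} (hy : y ∈ I) :
    HasDerivAt (fun y => ∫ t in y₀..y, (h t)⁻¹) ((h y)⁻¹) y := by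
  have hsub : Set.uIcc y₀ y ⊆ I := hIconn.uIcc_subset hy₀ hy
  have hint : IntervalIntegrable (fun t => (h t)⁻¹) volume y₀ y :=
    (hcont.mono hsub).intervalIntegrable
  have hmeas : StronglyMeasurableAtFilter (fun t => (h t)⁻¹) (nhds y) volume :=
    AEStronglyMeasurable.stronglyMeasurableAtFilter_of_mem
      (hcont.aestronglyMeasurable hIopen.measurableSet) (hIopen.mem_nhds hy)
  exact intervalIntegral.integral_hasDerivAt_right hint hmeas
    (hcont.continuousAt (hIopen.mem_nhds hy))

lemma aux_g_contDiffOn {k : ℕ} (hk : 1 ≤ k) (hIopen : IsOpen I) (hIconn : I.OrdConnected)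
    (hy₀ : y₀ ∈ I) (hsm : ContDiffOn ℝ (k - 1 : ℕ) h I) (hne : ∀ y ∈ I, h y ≠ 0) :
    ContDiffOn ℝ k (fun y => ∫ t in y₀..y, (h t)⁻¹) I := by
  have hinv : ContDiffOn ℝ (k - 1 : ℕ) (fun t => (h t)⁻¹) I := hsm.inv hne
  have hd : ∀ y ∈ I, HasDerivAt (fun y => ∫ t in y₀..y, (h t)⁻¹) ((h y)⁻¹) y :=
    fun y hy => aux_g_hasDerivAt hIopen hIconn hy₀ (hinv.continuousOn) hy
  have hkk : (k : WithTop ℕ∞) = ((k - 1 : ℕ) : WithTop ℕ∞) + 1 := by exact_mod_cast (Nat.succ_pred_eq_of_pos hk).symm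
  rw [hkk, contDiffOn_succ_iff_deriv_of_isOpen hIopen]
  refine ⟨fun y hy => ((hd y hy).differentiableAt).differentiableWithinAt, ?_, ?_⟩
  · exact fun h' => (by simp at h' : False).elim
  · exact hinv.congr (fun y hy => (hd y hy).deriv)
end
section
variable {k : ℕ} {I : Set ℝ} {f : ℝ → ℝ → ℝ} {y₀ : ℝ}

lemma aux_hom (hk : 1 ≤ k) (hIopen : IsOpen I) (hIconn : I.OrdConnected) (hy₀ : y₀ ∈ I)
    (hmul : ∀ a ∈ I, ∀ b ∈ I, f a b ∈ I)
    (hassoc : ∀ a ∈ I, ∀ b ∈ I, ∀ c ∈ I, f (f a b) c = f a (f b c))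
    (hmul_one : ∀ a ∈ I, f a y₀ = a)
    (hf_smooth : ContDiffOn ℝ k (fun p : ℝ × ℝ => f p.1 p.2) (I ×ˢ I))
    (hne : ∀ y ∈ I, deriv (fun x => f y x) y₀ ≠ 0)
    {y z : ℝ} (hy : y ∈ I) (hz : z ∈ I) :
    (∫ t in y₀..(f y z), (deriv (fun x => f t x) y₀)⁻¹)
      = (∫ t in y₀..y, (deriv (fun x => f t x) y₀)⁻¹)
        + ∫ t in y₀..z, (deriv (fun x => f t x) y₀)⁻¹ := by
  set h : ℝ → ℝ := fun t => deriv (fun x => f t x) y₀ with hh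
  set g : ℝ → ℝ := fun y => ∫ t in y₀..y, (h t)⁻¹ with hg
  have hcont : ContinuousOn (fun t => (h t)⁻¹) I :=
    ((aux_hsmooth hk hIopen hy₀ hf_smooth).inv hne).continuousOn
  set u : ℝ → ℝ := fun z => g (f y z) - g z with hu
  have hud : ∀ w ∈ I, HasDerivAt u 0 w := by
    intro w hw
    have hfyw : f y w ∈ I := hmul y hy w hw
    have h1 : HasDerivAt g ((h (f y w))⁻¹) (f y w) :=
      aux_g_hasDerivAt hIopen hIconn hy₀ hcont hfyw
    have h2 : HasDerivAt (fun w => f y w) (deriv (fun w => f y w) w) w :=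
      aux_hasDerivAt k hk hIopen hf_smooth hy hw
    have h3 : HasDerivAt g ((h w)⁻¹) w := aux_g_hasDerivAt hIopen hIconn hy₀ hcont hw
    have hchain := HasDerivAt.comp w h1 h2
    have hco : deriv (fun w => f y w) w * h w = h (f y w) :=
      aux_cocycle hk hIopen hy₀ hmul hassoc hmul_one hf_smooth hy hw
    have hD : deriv (fun w => f y w) w ≠ 0 := by
      intro h0
      have : h (f y w) = 0 := by rw [← hco, h0, zero_mul]
      exact hne _ hfyw this
    have key : (h (f y w))⁻¹ * deriv (fun w => f y w) w = (h w)⁻¹ := by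
      rw [← hco, mul_inv]
      field_simp [hD]
    rw [key] at hchain
    have h4 := hchain.sub h3
    rw [sub_self] at h4
    exact h4
  have hconv : Convex ℝ I := hIconn.convex  -- might not exist; test
  have hdiff : DifferentiableOn ℝ u I := fun w hw => ((hud w hw).differentiableAt).differentiableWithinAt
  have hconst : u z = u y₀ := by
    apply hconv.is_const_of_fderivWithin_eq_zero hdiff _ hz hy₀
    intro w hw
    rw [fderivWithin_of_isOpen hIopen hw, (hud w hw).hasFDerivAt.fderiv]
    ext t; simp
  have hgy0 : g y₀ = 0 := intervalIntegral.integral_same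
  have := hconst
  rw [hu] at this
  simp only [hmul_one y hy, hgy0, sub_zero] at this
  have : g (f y z) = g y + g z := by linarith
  exact this
end
section
variable {I : Set ℝ} {h : ℝ → ℝ}

lemma aux_sign (hIconn : I.OrdConnected) (hcont : ContinuousOn h I)
    (hne : ∀ y ∈ I, h y ≠ 0) :
    (∀ y ∈ I, 0 < h y) ∨ (∀ y ∈ I, h y < 0) := by
  have hpre : IsPreconnected I := hIconn.convex.isPreconnected
  by_cases hp : ∀ y ∈ I, 0 < h y
  · exact Or.inl hp
  · push_neg at hp
    obtain ⟨a, ha, hha⟩ := hp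
    have hna : h a < 0 := lt_of_le_of_ne hha (hne a ha)
    refine Or.inr fun b hb => ?_
    by_contra hnb
    push_neg at hnb
    have hpb : 0 < h b := lt_of_le_of_ne hnb (Ne.symm (hne b hb))
    have : (0 : ℝ) ∈ Set.Icc (h a) (h b) := ⟨hna.le, hpb.le⟩
    obtain ⟨c, hc, hc0⟩ := hpre.intermediate_value ha hb hcont this
    exact hne c hc hc0
end


/-- on an open interval `I ⊆ ℝ` carrying a `C^k` Lie group structure with
neutral element `y₀`, the derivative `∂₂f(y, y₀)` never vanishes, and
`g(y) := ∫_{y₀}^{y} (∂₂f(t, y₀))⁻¹ dt` is a `C^k`-diffeomorphism from `I` onto `ℝ`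
and a group isomorphism onto `(ℝ, +)`. -/
theorem stmt_1
    (k : ℕ) (hk : 1 ≤ k)
    (I : Set ℝ) (hIopen : IsOpen I) (hIne : I.Nonempty) (hIconn : I.OrdConnected)
    (f : ℝ → ℝ → ℝ) (y₀ : ℝ) (hy₀ : y₀ ∈ I)
    (hmul : ∀ a ∈ I, ∀ b ∈ I, f a b ∈ I)
    (hassoc : ∀ a ∈ I, ∀ b ∈ I, ∀ c ∈ I, f (f a b) c = f a (f b c))
    (hone_mul : ∀ a ∈ I, f y₀ a = a)
    (hmul_one : ∀ a ∈ I, f a y₀ = a)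
    (inv : ℝ → ℝ)
    (hinv_mem : ∀ a ∈ I, inv a ∈ I)
    (hmul_inv : ∀ a ∈ I, f a (inv a) = y₀)
    (hinv_mul : ∀ a ∈ I, f (inv a) a = y₀)
    (hf_smooth : ContDiffOn ℝ k (fun p : ℝ × ℝ => f p.1 p.2) (I ×ˢ I))
    (hinv_smooth : ContDiffOn ℝ k inv I) :
    (∀ y ∈ I, deriv (fun x => f y x) y₀ ≠ 0) ∧
    (let g : ℝ → ℝ := fun y => ∫ t in y₀..y, (deriv (fun x => f t x) y₀)⁻¹
     ContDiffOn ℝ k g I ∧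
     Set.BijOn g I Set.univ ∧
     (∃ ginv : ℝ → ℝ, ContDiff ℝ k ginv ∧ (∀ x : ℝ, ginv x ∈ I) ∧
        (∀ y ∈ I, ginv (g y) = y) ∧ (∀ x : ℝ, g (ginv x) = x)) ∧
     (∀ y ∈ I, ∀ z ∈ I, g (f y z) = g y + g z)) := by
  have hk' : (k : WithTop ℕ∞) ≠ 0 := by exact_mod_cast Nat.one_le_iff_ne_zero.mp hk
  set h : ℝ → ℝ := fun t => deriv (fun x => f t x) y₀ with hh
  have hne : ∀ y ∈ I, h y ≠ 0 := fun y hy =>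
    aux_ne_zero hk hIopen hy₀ hmul hassoc hone_mul hinv_mem hmul_inv hinv_mul hf_smooth hy
  refine ⟨hne, ?_⟩
  intro g
  have hgdef : g = fun y => ∫ t in y₀..y, (h t)⁻¹ := rfl
  have hhsm : ContDiffOn ℝ (k - 1 : ℕ) h I := aux_hsmooth hk hIopen hy₀ hf_smooth
  have hcont : ContinuousOn (fun t => (h t)⁻¹) I := (hhsm.inv hne).continuousOn
  have hgd : ∀ y ∈ I, HasDerivAt g ((h y)⁻¹) y := fun y hy =>
    aux_g_hasDerivAt hIopen hIconn hy₀ hcont hy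
  have hgsm : ContDiffOn ℝ k g I := aux_g_contDiffOn hk hIopen hIconn hy₀ hhsm hne
  have hghom : ∀ y ∈ I, ∀ z ∈ I, g (f y z) = g y + g z := fun y hy z hz =>
    aux_hom hk hIopen hIconn hy₀ hmul hassoc hmul_one hf_smooth hne hy hz
  have hgy0 : g y₀ = 0 := intervalIntegral.integral_same
  have hgcont : ContinuousOn g I := hgsm.continuousOn
  have hconv : Convex ℝ I := hIconn.convex
  -- injectivity
  have hinj : Set.InjOn g I := by
    rcases aux_sign hIconn hhsm.continuousOn hne with hpos | hneg
    · refine (strictMonoOn_of_deriv_pos hconv hgcont fun x hx => ?_).injOn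
      rw [hIopen.interior_eq] at hx
      rw [(hgd x hx).deriv]
      exact inv_pos.2 (hpos x hx)
    · refine (strictAntiOn_of_deriv_neg hconv hgcont fun x hx => ?_).injOn
      rw [hIopen.interior_eq] at hx
      rw [(hgd x hx).deriv]
      exact inv_lt_zero.2 (hneg x hx)
  -- strict derivatives and openness of the image
  have hstrict : ∀ y ∈ I, HasStrictDerivAt g ((h y)⁻¹) y := fun y hy =>
    (hgsm.contDiffAt (hIopen.mem_nhds hy)).hasStrictDerivAt' (hgd y hy) hk'
  have hJopen : IsOpen (g '' I) := by
    rw [isOpen_iff_mem_nhds]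
    rintro x ⟨y, hy, rfl⟩
    rw [← (hstrict y hy).map_nhds_eq (inv_ne_zero (hne y hy))]
    exact Filter.image_mem_map (hIopen.mem_nhds hy)
  -- the image is an additive subgroup, hence clopen, hence all of ℝ
  have hneg_mem : ∀ y ∈ I, g (inv y) = - g y := by
    intro y hy
    have := hghom y hy (inv y) (hinv_mem y hy)
    rw [hmul_inv y hy, hgy0] at this
    linarith
  let S : AddSubgroup ℝ :=
    { carrier := g '' I
      zero_mem' := ⟨y₀, hy₀, hgy0⟩
      add_mem' := by
        rintro a b ⟨y, hy, rfl⟩ ⟨z, hz, rfl⟩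
        exact ⟨f y z, hmul y hy z hz, hghom y hy z hz⟩
      neg_mem' := by
        rintro a ⟨y, hy, rfl⟩
        exact ⟨inv y, hinv_mem y hy, hneg_mem y hy⟩ }
  have hclosed : IsClosed (g '' I) := AddSubgroup.isClosed_of_isOpen S hJopen
  have hJuniv : g '' I = Set.univ :=
    (IsClopen.eq_univ ⟨hclosed, hJopen⟩ ⟨g y₀, y₀, hy₀, rfl⟩)
  have hsurj : ∀ x : ℝ, ∃ y ∈ I, g y = x := by
    intro x
    have : x ∈ g '' I := hJuniv ▸ Set.mem_univ x
    obtain ⟨y, hy, hxy⟩ := this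
    exact ⟨y, hy, hxy⟩
  -- the inverse function
  set ginv : ℝ → ℝ := Function.invFunOn g I with hgi
  have hginv_mem : ∀ x : ℝ, ginv x ∈ I := fun x => Function.invFunOn_mem (by
    obtain ⟨y, hy, hxy⟩ := hsurj x; exact ⟨y, hy, hxy⟩)
  have hright : ∀ x : ℝ, g (ginv x) = x := fun x => Function.invFunOn_eq (by
    obtain ⟨y, hy, hxy⟩ := hsurj x; exact ⟨y, hy, hxy⟩)
  have hleft : ∀ y ∈ I, ginv (g y) = y := fun y hy => hinj.leftInvOn_invFunOn hy
  have hginv_smooth : ContDiff ℝ k ginv := by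
    rw [contDiff_iff_contDiffAt]
    intro x
    obtain ⟨y, hy, rfl⟩ := hsurj x
    have hca : ContDiffAt ℝ k g y := hgsm.contDiffAt (hIopen.mem_nhds hy)
    have hfd := (hgd y hy).hasFDerivAt_equiv (inv_ne_zero (hne y hy))
    have hs : HasStrictFDerivAt g
        (ContinuousLinearEquiv.unitsEquivAut ℝ (Units.mk0 _ (inv_ne_zero (hne y hy)))
          : ℝ →L[ℝ] ℝ) y := hca.hasStrictFDerivAt' hfd hk'
    have hℓ : ContDiffAt ℝ k (hca.localInverse hfd hk') (g y) :=
      hca.to_localInverse hfd hk'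
    have hℓdef : hca.localInverse hfd hk'
        = hs.localInverse g _ y := rfl
    refine hℓ.congr_of_eventuallyEq ?_
    have h1 := hs.eventually_right_inverse
    have h2 : ∀ᶠ z in nhds (g y), hs.localInverse g _ y z ∈ I := by
      have hcy : ContinuousAt (hs.localInverse g _ y) (g y) := hs.localInverse_continuousAt
      have : hs.localInverse g _ y (g y) = y := hs.localInverse_apply_image
      apply hcy.eventually_mem
      rw [this]
      exact hIopen.mem_nhds hy
    rw [hℓdef]
    filter_upwards [h1, h2] with z hz1 hz2
    exact hinj (hginv_mem z) hz2 (by rw [hright z, hz1])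
  exact ⟨hgsm, ⟨fun y _ => trivial, hinj, fun x _ => by
      obtain ⟨y, hy, hxy⟩ := hsurj x; exact ⟨y, hy, hxy⟩⟩,
    ⟨ginv, hginv_smooth, hginv_mem, hleft, hright⟩, hghom⟩
end

section
/- If m : ℝ² → ℝ is a continuous map satisfying m(y T z) = m(y) + m(z) for all y, z ∈ ℝ² (i.e. m is a continuous group homomorphism from (ℝ², T) to (ℝ, +)), then there exists β ∈ ℝ such that m(z₁, z₂) = β z₁ for all (z₁, z₂) ∈ ℝ². -/
lemma additive_cont_linear (f : ℝ → ℝ) (hf : Continuous f)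
    (hadd : ∀ x y, f (x + y) = f x + f y) : ∀ x, f x = f 1 * x := by
  let F : ℝ →+ ℝ := AddMonoidHom.mk' f hadd
  have := (F.toRealLinearMap hf).map_smul
  intro x
  have h := this x 1
  simp [F, smul_eq_mul, mul_one] at h
  show f x = f 1 * x
  exact h.trans (mul_comm _ _)

/-- every continuous group homomorphism `m` from `(ℝ², T)` to `(ℝ, +)`, where
`(y₁,y₂) T (z₁,z₂) = (y₁ + z₁, y₂ + e^{y₁} z₂)`, is of the form `m(z₁,z₂) = β z₁`. -/
theorem stmt_4
    (m : ℝ × ℝ → ℝ) (hm : Continuous m)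
    (hhom : ∀ y z : ℝ × ℝ,
      m (y.1 + z.1, y.2 + Real.exp y.1 * z.2) = m y + m z) :
    ∃ β : ℝ, ∀ z : ℝ × ℝ, m z = β * z.1 := by
  -- f t = m (0, t) is additive
  have hf_add : ∀ s t : ℝ, m (0, s + t) = m (0, s) + m (0, t) := by
    intro s t
    have := hhom (0, s) (0, t)
    simpa using this
  have hf_cont : Continuous fun t => m (0, t) :=
    hm.comp (continuous_const.prodMk continuous_id)
  set c := m (0, 1) with hc
  have hf : ∀ t, m (0, t) = c * t := by
    have := additive_cont_linear (fun t => m (0, t)) hf_cont hf_add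
    simpa using this
  -- m (y₁, z₂) = c * z₂ + m (y₁, 0)
  have key1 : ∀ y₁ z₂ : ℝ, m (y₁, z₂) = c * z₂ + m (y₁, 0) := by
    intro y₁ z₂
    have := hhom (0, z₂) (y₁, 0)
    simp at this
    rw [this, hf]
  have key2 : ∀ y₁ z₂ : ℝ, m (y₁, Real.exp y₁ * z₂) = m (y₁, 0) + c * z₂ := by
    intro y₁ z₂
    have := hhom (y₁, 0) (0, z₂)
    simp at this
    rw [this, hf]
  have hc0 : c = 0 := by
    have h1 := key1 1 (Real.exp 1 * 1)
    have h2 := key2 1 1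
    rw [h1] at h2
    have he : (1:ℝ) < Real.exp 1 := by
      have := Real.exp_one_gt_d9; linarith
    have h3 : c * (Real.exp 1 - 1) = 0 := by linear_combination h2
    rcases mul_eq_zero.mp h3 with h | h
    · exact h
    · linarith
  -- g y₁ = m (y₁, 0) is additive
  have hg_add : ∀ x y : ℝ, m (x + y, 0) = m (x, 0) + m (y, 0) := by
    intro x y
    have := hhom (x, 0) (y, 0)
    simpa using this
  have hg_cont : Continuous fun t => m (t, 0) :=
    hm.comp (continuous_id.prodMk continuous_const)
  refine ⟨m (1, 0), fun z => ?_⟩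
  have hg := additive_cont_linear (fun t => m (t, 0)) hg_cont hg_add
  rw [show z = (z.1, z.2) from rfl, key1, hc0]
  simpa using hg z.1
end

section
/- For all u = (u₁, u₂) ∈ ℝ², v = (v₁, v₂) ∈ ℝ² and all y ∈ D, one has [V(u), V(v)](y) = (u₁v₂ − u₂v₁) · J₂f(y, y₀) · Y₀; in particular [V(u), V(v)](y₀) = det(u, v) · Y₀, where det(u, v) := u₁v₂ − u₂v₁. -/
open ContinuousLinearMap Filter Topology

private lemma bilin_aux (A : (ℝ × ℝ) →L[ℝ] (ℝ × ℝ) →L[ℝ] (ℝ × ℝ)) (u v : ℝ × ℝ) :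
    A u v - A v u
      = (u.1 * v.2 - u.2 * v.1) •
        (A ((1:ℝ), (0:ℝ)) ((0:ℝ), (1:ℝ)) - A ((0:ℝ), (1:ℝ)) ((1:ℝ), (0:ℝ))) := by
  obtain ⟨u₁, u₂⟩ := u
  obtain ⟨v₁, v₂⟩ := v
  have h : ∀ a b : ℝ, ((a, b) : ℝ × ℝ) = a • ((1:ℝ), (0:ℝ)) + b • ((0:ℝ), (1:ℝ)) := by
    intro a b; ext <;> simp
  show A (u₁, u₂) (v₁, v₂) - A (v₁, v₂) (u₁, u₂)
    = (u₁ * v₂ - u₂ * v₁) • (A ((1:ℝ), (0:ℝ)) ((0:ℝ), (1:ℝ)) - A ((0:ℝ), (1:ℝ)) ((1:ℝ), (0:ℝ)))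
  rw [h u₁ u₂, h v₁ v₂]
  simp only [map_add, map_smul, ContinuousLinearMap.add_apply, ContinuousLinearMap.smul_apply]
  module

private theorem main_aux
    (D : Set (ℝ × ℝ)) (hDopen : IsOpen D)
    (f : ℝ × ℝ → ℝ × ℝ → ℝ × ℝ) (y₀ : ℝ × ℝ) (hy₀ : y₀ ∈ D)
    (hmul : ∀ a ∈ D, ∀ b ∈ D, f a b ∈ D)
    (hassoc : ∀ a ∈ D, ∀ b ∈ D, ∀ c ∈ D, f (f a b) c = f a (f b c))
    (hone_mul : ∀ a ∈ D, f y₀ a = a)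
    (hmul_one : ∀ a ∈ D, f a y₀ = a)
    (hf2 : ContDiffOn ℝ 2 (fun p : (ℝ × ℝ) × (ℝ × ℝ) => f p.1 p.2) (D ×ˢ D)) :
    ∀ u v : ℝ × ℝ, ∀ y ∈ D,
      fderiv ℝ (fun z => fderiv ℝ (fun x => f z x) y₀ v) y (fderiv ℝ (fun x => f y x) y₀ u)
        - fderiv ℝ (fun z => fderiv ℝ (fun x => f z x) y₀ u) y (fderiv ℝ (fun x => f y x) y₀ v)
      = (u.1 * v.2 - u.2 * v.1) • fderiv ℝ (fun x => f y x) y₀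
          (fderiv ℝ (fun z => fderiv ℝ (fun x => f z x) y₀ ((0:ℝ), (1:ℝ))) y₀
              (fderiv ℝ (fun x => f y₀ x) y₀ ((1:ℝ), (0:ℝ)))
            - fderiv ℝ (fun z => fderiv ℝ (fun x => f z x) y₀ ((1:ℝ), (0:ℝ))) y₀
              (fderiv ℝ (fun x => f y₀ x) y₀ ((0:ℝ), (1:ℝ)))) := by
  have hDD : IsOpen (D ×ˢ D) := hDopen.prod hDopen
  set g : (ℝ × ℝ) × (ℝ × ℝ) → ℝ × ℝ := fun p => f p.1 p.2 with hgdef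
  have hgdiff : DifferentiableOn ℝ g (D ×ˢ D) := hf2.differentiableOn two_ne_zero
  have hGsm : ContDiffOn ℝ 1 (fderiv ℝ g) (D ×ˢ D) := hf2.fderiv_of_isOpen hDD (by norm_num)
  have hGdiff : DifferentiableOn ℝ (fderiv ℝ g) (D ×ˢ D) := hGsm.differentiableOn one_ne_zero
  set R : (ℝ × ℝ) →L[ℝ] (ℝ × ℝ) × (ℝ × ℝ) := inr ℝ _ _ with hRdef
  have hfd : ∀ y ∈ D, ∀ x ∈ D, HasFDerivAt (f y) ((fderiv ℝ g (y, x)).comp R) x := by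
    intro y hy x hx
    have hgx : HasFDerivAt g (fderiv ℝ g (y, x)) (y, x) :=
      (hgdiff.differentiableAt (hDD.mem_nhds ⟨hy, hx⟩)).hasFDerivAt
    exact hgx.comp x (hasFDerivAt_prodMk_right y x)
  set H : (ℝ × ℝ) → (ℝ × ℝ) →L[ℝ] (ℝ × ℝ) := fun y => (fderiv ℝ g (y, y₀)).comp R with hHdef
  have hWH : ∀ y ∈ D, fderiv ℝ (fun x => f y x) y₀ = H y := fun y hy => (hfd y hy y₀ hy₀).fderiv
  have hHdiff : ∀ y ∈ D, DifferentiableAt ℝ H y := by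
    intro y hy
    exact ((hGdiff.differentiableAt (hDD.mem_nhds ⟨hy, hy₀⟩)).comp y
      (differentiableAt_id.prodMk (differentiableAt_const _))).clm_comp (differentiableAt_const R)
  have hid : fderiv ℝ (fun x => f y₀ x) y₀ = ContinuousLinearMap.id ℝ (ℝ × ℝ) := by
    have h1 : (fun x => f y₀ x) =ᶠ[𝓝 y₀] id := by
      filter_upwards [hDopen.mem_nhds hy₀] with x hx using hone_mul x hx
    rw [h1.fderiv_eq, fderiv_id]
  have hHy₀ : H y₀ = ContinuousLinearMap.id ℝ (ℝ × ℝ) := by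
    rw [← hWH y₀ hy₀]; exact hid
  have hE : ∀ y ∈ D, ∀ u w : ℝ × ℝ,
      fderiv ℝ (fun z => fderiv ℝ (fun x => f z x) y₀ u) y w = fderiv ℝ H y w u := by
    intro y hy u w
    have h1 : HasFDerivAt (fun z => H z u)
        ((H y).comp (0 : (ℝ × ℝ) →L[ℝ] (ℝ × ℝ)) + (fderiv ℝ H y).flip u) y :=
      (hHdiff y hy).hasFDerivAt.clm_apply (hasFDerivAt_const u y)
    have h2 : (fun z => fderiv ℝ (fun x => f z x) y₀ u) =ᶠ[𝓝 y] fun z => H z u := by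
      filter_upwards [hDopen.mem_nhds hy] with z hz
      rw [hWH z hz]
    rw [h2.fderiv_eq, h1.fderiv]
    simp
  -- left invariance of the bracket
  have hinv : ∀ a ∈ D, ∀ u v : ℝ × ℝ,
      fderiv ℝ H a (H a u) v - fderiv ℝ H a (H a v) u
        = H a (fderiv ℝ H y₀ u v - fderiv ℝ H y₀ v u) := by
    intro a ha u v
    set c : (ℝ × ℝ) → (ℝ × ℝ) →L[ℝ] (ℝ × ℝ) := fun y => (fderiv ℝ g (a, y)).comp R with hcdef
    have hcd : DifferentiableAt ℝ c y₀ :=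
      ((hGdiff.differentiableAt (hDD.mem_nhds ⟨ha, hy₀⟩)).comp y₀
        ((differentiableAt_const a).prodMk differentiableAt_id)).clm_comp (differentiableAt_const R)
    have hcf : ∀ y ∈ D, HasFDerivAt (f a) (c y) y := fun y hy => hfd a ha y hy
    have hsym : ∀ w₁ w₂ : ℝ × ℝ, fderiv ℝ c y₀ w₁ w₂ = fderiv ℝ c y₀ w₂ w₁ := by
      intro w₁ w₂
      refine second_derivative_symmetric_of_eventually_of_real (f := f a) ?_ hcd.hasFDerivAt w₁ w₂
      filter_upwards [hDopen.mem_nhds hy₀] with z hz using hcf z hz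
    have hkey : (fun y => H (f a y)) =ᶠ[𝓝 y₀] fun y => (c y).comp (H y) := by
      filter_upwards [hDopen.mem_nhds hy₀] with y hy
      have h1 : HasFDerivAt (f (f a y)) (H (f a y)) y₀ := hfd (f a y) (hmul a ha y hy) y₀ hy₀
      have h2 : HasFDerivAt (f a) (c y) (f y y₀) := by rw [hmul_one y hy]; exact hcf y hy
      have h3 : HasFDerivAt (fun x => f a (f y x)) ((c y).comp (H y)) y₀ :=
        h2.comp y₀ (hfd y hy y₀ hy₀)
      have h5 : f (f a y) =ᶠ[𝓝 y₀] fun x => f a (f y x) := by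
        filter_upwards [hDopen.mem_nhds hy₀] with x hx using hassoc a ha y hy x hx
      exact ((h3.congr_of_eventuallyEq h5).unique h1).symm
    have hΦ : HasFDerivAt (fun y => H (f a y)) ((fderiv ℝ H a).comp (H a)) y₀ := by
      have hHa : HasFDerivAt H (fderiv ℝ H a) (f a y₀) := by
        rw [hmul_one a ha]; exact (hHdiff a ha).hasFDerivAt
      have hfa : HasFDerivAt (f a) (H a) y₀ := hfd a ha y₀ hy₀
      exact hHa.comp y₀ hfa
    have hΨ := hcd.hasFDerivAt.clm_comp (hHdiff y₀ hy₀).hasFDerivAt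
    have heq := (hΨ.congr_of_eventuallyEq hkey).unique hΦ
    have hca : c y₀ = H a := rfl
    have happ : ∀ w z : ℝ × ℝ,
        H a (fderiv ℝ H y₀ w z) + fderiv ℝ c y₀ w z = fderiv ℝ H a (H a w) z := by
      intro w z
      have h1 := DFunLike.congr_fun (DFunLike.congr_fun heq w) z
      simp only [ContinuousLinearMap.add_apply, ContinuousLinearMap.comp_apply,
        ContinuousLinearMap.compL_apply, ContinuousLinearMap.flip_apply, hca, hHy₀,
        ContinuousLinearMap.coe_id', id_eq] at h1
      exact h1
    rw [← happ u v, ← happ v u, hsym u v, map_sub]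
    abel
  intro u v y hy
  rw [hWH y hy, hid, hE y hy v, hE y hy u,
    hE y₀ hy₀ ((0:ℝ), (1:ℝ)), hE y₀ hy₀ ((1:ℝ), (0:ℝ)),
    ContinuousLinearMap.id_apply, ContinuousLinearMap.id_apply]
  rw [hinv y hy u v, bilin_aux (fderiv ℝ H y₀) u v, map_smul]

/-- for all `u, v ∈ ℝ²` and `y ∈ D`,
`[V(u), V(v)](y) = (u₁v₂ − u₂v₁) · J₂f(y, y₀) · Y₀`; in particular
`[V(u), V(v)](y₀) = det(u, v) · Y₀`. -/
theorem stmt_7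
    (k : ℕ) (hk : 2 ≤ k)
    (D : Set (ℝ × ℝ)) (hDopen : IsOpen D) (hDconn : IsConnected D)
    (hDsc : SimplyConnectedSpace D)
    (f : ℝ × ℝ → ℝ × ℝ → ℝ × ℝ) (y₀ : ℝ × ℝ) (hy₀ : y₀ ∈ D)
    (hmul : ∀ a ∈ D, ∀ b ∈ D, f a b ∈ D)
    (hassoc : ∀ a ∈ D, ∀ b ∈ D, ∀ c ∈ D, f (f a b) c = f a (f b c))
    (hone_mul : ∀ a ∈ D, f y₀ a = a)
    (hmul_one : ∀ a ∈ D, f a y₀ = a)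
    (inv : ℝ × ℝ → ℝ × ℝ)
    (hinv_mem : ∀ a ∈ D, inv a ∈ D)
    (hmul_inv : ∀ a ∈ D, f a (inv a) = y₀)
    (hinv_mul : ∀ a ∈ D, f (inv a) a = y₀)
    (hf_smooth : ContDiffOn ℝ k (fun p : (ℝ × ℝ) × (ℝ × ℝ) => f p.1 p.2) (D ×ˢ D))
    (hinv_smooth : ContDiffOn ℝ k inv D) :
    let V : ℝ × ℝ → ℝ × ℝ → ℝ × ℝ := fun u y => fderiv ℝ (fun x => f y x) y₀ u
    let Y₀ : ℝ × ℝ :=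
      fderiv ℝ (V ((0 : ℝ), (1 : ℝ))) y₀ (V ((1 : ℝ), (0 : ℝ)) y₀)
        - fderiv ℝ (V ((1 : ℝ), (0 : ℝ))) y₀ (V ((0 : ℝ), (1 : ℝ)) y₀)
    ∀ u v : ℝ × ℝ, ∀ y ∈ D,
      (fderiv ℝ (V v) y (V u y) - fderiv ℝ (V u) y (V v y) =
        (u.1 * v.2 - u.2 * v.1) • fderiv ℝ (fun x => f y x) y₀ Y₀) ∧
      (fderiv ℝ (V v) y₀ (V u y₀) - fderiv ℝ (V u) y₀ (V v y₀) =
        (u.1 * v.2 - u.2 * v.1) • Y₀) := by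
  intro V Y₀ u v y hy
  have hf2 : ContDiffOn ℝ 2 (fun p : (ℝ × ℝ) × (ℝ × ℝ) => f p.1 p.2) (D ×ˢ D) :=
    hf_smooth.of_le (by exact_mod_cast hk)
  have hmain := main_aux D hDopen f y₀ hy₀ hmul hassoc hone_mul hmul_one hf2
  have hid : fderiv ℝ (fun x => f y₀ x) y₀ = ContinuousLinearMap.id ℝ (ℝ × ℝ) := by
    have h1 : (fun x => f y₀ x) =ᶠ[𝓝 y₀] id := by
      filter_upwards [hDopen.mem_nhds hy₀] with x hx using hone_mul x hx
    rw [h1.fderiv_eq, fderiv_id]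
  refine ⟨hmain u v y hy, ?_⟩
  refine (hmain u v y₀ hy₀).trans ?_
  have hY : Y₀ =
      fderiv ℝ (fun z => fderiv ℝ (fun x => f z x) y₀ ((0:ℝ), (1:ℝ))) y₀
          (fderiv ℝ (fun x => f y₀ x) y₀ ((1:ℝ), (0:ℝ)))
        - fderiv ℝ (fun z => fderiv ℝ (fun x => f z x) y₀ ((1:ℝ), (0:ℝ))) y₀
          (fderiv ℝ (fun x => f y₀ x) y₀ ((0:ℝ), (1:ℝ))) := rfl
  rw [hY, hid]
  simp
end

section
/- The group (D, ⋆) is commutative if and only if Y₀ = (0, 0). -/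
open ContinuousLinearMap Set

noncomputable section

abbrev E2 : Type := ℝ × ℝ

/-- Bundle of a `C²` group structure on an open connected subset of `ℝ²`. -/
structure Grp2 where
  D : Set (ℝ × ℝ)
  hDopen : IsOpen D
  hDconn : IsPreconnected D
  f : ℝ × ℝ → ℝ × ℝ → ℝ × ℝ
  y₀ : ℝ × ℝ
  hy₀ : y₀ ∈ D
  inv : ℝ × ℝ → ℝ × ℝ
  hmul : ∀ a ∈ D, ∀ b ∈ D, f a b ∈ D
  hassoc : ∀ a ∈ D, ∀ b ∈ D, ∀ c ∈ D, f (f a b) c = f a (f b c)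
  hone_mul : ∀ a ∈ D, f y₀ a = a
  hmul_one : ∀ a ∈ D, f a y₀ = a
  hinv_mem : ∀ a ∈ D, inv a ∈ D
  hmul_inv : ∀ a ∈ D, f a (inv a) = y₀
  hinv_mul : ∀ a ∈ D, f (inv a) a = y₀
  hf2 : ContDiffOn ℝ 2 (fun p : (ℝ × ℝ) × (ℝ × ℝ) => f p.1 p.2) (D ×ˢ D)
  hinv1 : ContDiffOn ℝ 1 inv D

namespace Grp2

variable (G : Grp2)

/-- uncurried multiplication -/
def φ : (ℝ × ℝ) × (ℝ × ℝ) → ℝ × ℝ := fun p => G.f p.1 p.2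

lemma hDD : IsOpen (G.D ×ˢ G.D) := G.hDopen.prod G.hDopen

lemma inv_y₀ : G.inv G.y₀ = G.y₀ := by
  have h1 := G.hmul_one _ (G.hinv_mem _ G.hy₀)
  have h2 := G.hinv_mul _ G.hy₀
  rw [h1] at h2; exact h2

/-- if `u ⋆ w = y₀` then `u = inv w` -/
lemma eq_inv_of {u w : ℝ × ℝ} (hu : u ∈ G.D) (hw : w ∈ G.D) (h : G.f u w = G.y₀) :
    u = G.inv w := by
  have : G.f u (G.f w (G.inv w)) = G.f G.y₀ (G.inv w) := by
    rw [← G.hassoc _ hu _ hw _ (G.hinv_mem _ hw), h]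
  rw [G.hmul_inv _ hw, G.hmul_one _ hu, G.hone_mul _ (G.hinv_mem _ hw)] at this
  exact this

/-- if `u ⋆ (inv y) = y₀` then `u = y` -/
lemma eq_of_mul_inv {u y : ℝ × ℝ} (hu : u ∈ G.D) (hy : y ∈ G.D)
    (h : G.f u (G.inv y) = G.y₀) : u = y := by
  have : G.f u (G.f (G.inv y) y) = G.f G.y₀ y := by
    rw [← G.hassoc _ hu _ (G.hinv_mem _ hy) _ hy, h]
  rw [G.hinv_mul _ hy, G.hmul_one _ hu, G.hone_mul _ hy] at this
  exact this

lemma inv_rev {a b : ℝ × ℝ} (ha : a ∈ G.D) (hb : b ∈ G.D) :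
    G.inv (G.f a b) = G.f (G.inv b) (G.inv a) := by
  symm
  apply G.eq_inv_of (G.hmul _ (G.hinv_mem _ hb) _ (G.hinv_mem _ ha)) (G.hmul _ ha _ hb)
  rw [G.hassoc _ (G.hinv_mem _ hb) _ (G.hinv_mem _ ha) _ (G.hmul _ ha _ hb),
    ← G.hassoc _ (G.hinv_mem _ ha) _ ha _ hb, G.hinv_mul _ ha, G.hone_mul _ hb,
    G.hinv_mul _ hb]

/-- conjugation -/
def conj (a x : ℝ × ℝ) : ℝ × ℝ := G.f (G.f a x) (G.inv a)

lemma conj_mem {a x : ℝ × ℝ} (ha : a ∈ G.D) (hx : x ∈ G.D) : G.conj a x ∈ G.D :=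
  G.hmul _ (G.hmul _ ha _ hx) _ (G.hinv_mem _ ha)

lemma conj_y₀ {a : ℝ × ℝ} (ha : a ∈ G.D) : G.conj a G.y₀ = G.y₀ := by
  unfold conj; rw [G.hmul_one _ ha, G.hmul_inv _ ha]

lemma conj_hom {a x y : ℝ × ℝ} (ha : a ∈ G.D) (hx : x ∈ G.D) (hy : y ∈ G.D) :
    G.conj a (G.f x y) = G.f (G.conj a x) (G.conj a y) := by
  have ha' := G.hinv_mem _ ha
  unfold conj
  rw [G.hassoc _ (G.hmul _ ha _ hx) _ ha' _ (G.hmul _ (G.hmul _ ha _ hy) _ ha'),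
    ← G.hassoc _ ha' _ (G.hmul _ ha _ hy) _ ha',
    ← G.hassoc _ ha' _ ha _ hy, G.hinv_mul _ ha, G.hone_mul _ hy,
    ← G.hassoc _ (G.hmul _ ha _ hx) _ hy _ ha',
    G.hassoc _ ha _ hx _ hy]

lemma conj_mul {a b x : ℝ × ℝ} (ha : a ∈ G.D) (hb : b ∈ G.D) (hx : x ∈ G.D) :
    G.conj (G.f a b) x = G.conj a (G.conj b x) := by
  have hb' := G.hinv_mem _ hb
  have ha' := G.hinv_mem _ ha
  unfold conj
  rw [G.inv_rev ha hb,
    ← G.hassoc _ (G.hmul _ (G.hmul _ ha _ hb) _ hx) _ hb' _ ha']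
  congr 1
  rw [G.hassoc _ ha _ hb _ hx, G.hassoc _ ha _ (G.hmul _ hb _ hx) _ hb']

/-! ### Derivative infrastructure -/

/-- derivative of multiplication -/
def Dφ : E2 × E2 → (E2 × E2 →L[ℝ] E2) := fderiv ℝ G.φ

/-- second derivative of multiplication at the identity -/
def S : (E2 × E2) →L[ℝ] (E2 × E2) →L[ℝ] E2 := fderiv ℝ G.Dφ (G.y₀, G.y₀)

/-- partial derivative in the second variable -/
def jr (a b : E2) : E2 →L[ℝ] E2 := (G.Dφ (a, b)).comp (inr ℝ E2 E2)

/-- partial derivative in the first variable -/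
def jl (a b : E2) : E2 →L[ℝ] E2 := (G.Dφ (a, b)).comp (inl ℝ E2 E2)

lemma hφ_at {p : E2 × E2} (hp : p ∈ G.D ×ˢ G.D) : HasFDerivAt G.φ (G.Dφ p) p :=
  ((G.hf2.differentiableOn (by norm_num)).differentiableAt (G.hDD.mem_nhds hp)).hasFDerivAt

lemma hDφ_diff {p : E2 × E2} (hp : p ∈ G.D ×ˢ G.D) : DifferentiableAt ℝ G.Dφ p :=
  (((G.hf2.fderiv_of_isOpen G.hDD (m := 1) (by norm_num)).differentiableOn
    (by norm_num)).differentiableAt (G.hDD.mem_nhds hp))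

lemma hS : HasFDerivAt G.Dφ G.S (G.y₀, G.y₀) :=
  (G.hDφ_diff (Set.mk_mem_prod G.hy₀ G.hy₀)).hasFDerivAt

lemma Ssymm (v w : E2 × E2) : G.S v w = G.S w v := by
  exact second_derivative_symmetric_of_eventually
    (Filter.eventually_of_mem (G.hDD.mem_nhds (Set.mk_mem_prod G.hy₀ G.hy₀))
      (fun p hp => G.hφ_at hp)) G.hS v w

/-- main chain rule helper -/
lemma hasF {α β : E2 → E2} {p : E2} {A B : E2 →L[ℝ] E2}
    (hα : HasFDerivAt α A p) (hβ : HasFDerivAt β B p) (hmem : (α p, β p) ∈ G.D ×ˢ G.D) :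
    HasFDerivAt (fun x => G.f (α x) (β x)) ((G.Dφ (α p, β p)).comp (A.prod B)) p :=
  HasFDerivAt.comp (g := G.φ) (f := fun x => ((α x, β x) : E2 × E2)) p (G.hφ_at hmem)
    (HasFDerivAt.prodMk hα hβ)

end Grp2

section CLMlemmas

lemma zero_prod_id : ((0 : E2 →L[ℝ] E2).prod (ContinuousLinearMap.id ℝ E2)) = inr ℝ E2 E2 := by
  ext x <;> simp

lemma id_prod_zero : ((ContinuousLinearMap.id ℝ E2).prod (0 : E2 →L[ℝ] E2)) = inl ℝ E2 E2 := by
  ext x <;> simp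

lemma comp_prod_split (T : E2 × E2 →L[ℝ] E2) (A B : E2 →L[ℝ] E2) :
    T.comp (A.prod B) = (T.comp (inl ℝ E2 E2)).comp A + (T.comp (inr ℝ E2 E2)).comp B := by
  refine ContinuousLinearMap.ext fun x => ?_
  have h : (A x, B x) = ((A x, 0) : E2 × E2) + (0, B x) := by simp
  simp only [ContinuousLinearMap.comp_apply, ContinuousLinearMap.prod_apply,
    ContinuousLinearMap.add_apply, inl_apply, inr_apply, h, ← map_add]

lemma prod_compR (A B C : E2 →L[ℝ] E2) :
    (A.prod B).comp C = (A.comp C).prod (B.comp C) := by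
  ext x <;> simp

end CLMlemmas

namespace Grp2

variable (G : Grp2)

lemma hasFDerivAt_right {a b : E2} (ha : a ∈ G.D) (hb : b ∈ G.D) :
    HasFDerivAt (fun x => G.f a x) (G.jr a b) b := by
  have := G.hasF (hasFDerivAt_const a b) (hasFDerivAt_id b) (Set.mk_mem_prod ha hb)
  rwa [zero_prod_id] at this

lemma hasFDerivAt_left {a b : E2} (ha : a ∈ G.D) (hb : b ∈ G.D) :
    HasFDerivAt (fun s => G.f s b) (G.jl a b) a := by
  have := G.hasF (hasFDerivAt_id a) (hasFDerivAt_const b a) (Set.mk_mem_prod ha hb)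
  rwa [id_prod_zero] at this

lemma jr_y₀y₀ : G.jr G.y₀ G.y₀ = ContinuousLinearMap.id ℝ E2 := by
  have h1 : HasFDerivAt (fun x => G.f G.y₀ x) (G.jr G.y₀ G.y₀) G.y₀ :=
    G.hasFDerivAt_right G.hy₀ G.hy₀
  have h2 : HasFDerivAt (fun x => G.f G.y₀ x) (ContinuousLinearMap.id ℝ E2) G.y₀ :=
    (hasFDerivAt_id G.y₀).congr_of_eventuallyEq <|
      Filter.eventuallyEq_of_mem (G.hDopen.mem_nhds G.hy₀) (fun x hx => G.hone_mul x hx)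
  exact h1.unique h2

lemma jl_y₀ {a : E2} (ha : a ∈ G.D) : G.jl a G.y₀ = ContinuousLinearMap.id ℝ E2 := by
  have h1 : HasFDerivAt (fun s => G.f s G.y₀) (G.jl a G.y₀) a :=
    G.hasFDerivAt_left ha G.hy₀
  have h2 : HasFDerivAt (fun s => G.f s G.y₀) (ContinuousLinearMap.id ℝ E2) a :=
    (hasFDerivAt_id a).congr_of_eventuallyEq <|
      Filter.eventuallyEq_of_mem (G.hDopen.mem_nhds ha) (fun x hx => G.hmul_one x hx)
  exact h1.unique h2

end Grp2

/-- two functions agreeing on an open set have equal derivatives at its points -/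
lemma fder_eq {Y X : Type*} [NormedAddCommGroup Y] [NormedSpace ℝ Y]
    [NormedAddCommGroup X] [NormedSpace ℝ X]
    {F₁ F₂ : Y → X} {s : Set Y} (hs : IsOpen s) {p : Y} (hp : p ∈ s)
    (heq : Set.EqOn F₁ F₂ s) {T₁ T₂ : Y →L[ℝ] X}
    (h₁ : HasFDerivAt F₁ T₁ p) (h₂ : HasFDerivAt F₂ T₂ p) : T₁ = T₂ :=
  ((h₂.congr_of_eventuallyEq
    (Filter.eventuallyEq_of_mem (hs.mem_nhds hp) heq)).unique h₁).symm

namespace Grp2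

variable (G : Grp2)

lemma hasF_left {α : E2 → E2} {p : E2} {A : E2 →L[ℝ] E2} {z : E2}
    (hα : HasFDerivAt α A p) (hmem : α p ∈ G.D) (hz : z ∈ G.D) :
    HasFDerivAt (fun x => G.f (α x) z) ((G.jl (α p) z).comp A) p := by
  have h := G.hasF hα (hasFDerivAt_const z p) (Set.mk_mem_prod hmem hz)
  rw [comp_prod_split, ContinuousLinearMap.comp_zero, add_zero] at h
  exact h

lemma hasF_right {β : E2 → E2} {p : E2} {B : E2 →L[ℝ] E2} {a : E2}
    (hβ : HasFDerivAt β B p) (ha : a ∈ G.D) (hmem : β p ∈ G.D) :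
    HasFDerivAt (fun x => G.f a (β x)) ((G.jr a (β p)).comp B) p := by
  have h := G.hasF (hasFDerivAt_const a p) hβ (Set.mk_mem_prod ha hmem)
  rw [comp_prod_split, ContinuousLinearMap.comp_zero, zero_add] at h
  exact h

/-- the fundamental cancellation identity coming from associativity -/
lemma key_assoc {c z : E2} (hc : c ∈ G.D) (hz : z ∈ G.D) :
    (G.jl c z).comp (G.jr c G.y₀) = (G.jr c z).comp (G.jl G.y₀ z) := by
  have hL : HasFDerivAt (fun x => G.f (G.f c x) z) ((G.jl c z).comp (G.jr c G.y₀)) G.y₀ := by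
    have h := G.hasF_left (G.hasFDerivAt_right hc G.hy₀)
      (by rw [G.hmul_one _ hc]; exact hc) hz
    rwa [G.hmul_one _ hc] at h
  have hR : HasFDerivAt (fun x => G.f c (G.f x z)) ((G.jr c z).comp (G.jl G.y₀ z)) G.y₀ := by
    have h := G.hasF_right (G.hasFDerivAt_left G.hy₀ hz) hc
      (by rw [G.hone_mul _ hz]; exact hz)
    rwa [G.hone_mul _ hz] at h
  exact fder_eq G.hDopen G.hy₀ (fun x hx => G.hassoc _ hc _ hx _ hz) hL hR

lemma jr_inv_right {a : E2} (ha : a ∈ G.D) :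
    (G.jr a G.y₀).comp (G.jr (G.inv a) a) = ContinuousLinearMap.id ℝ E2 := by
  have ha' := G.hinv_mem _ ha
  have hL : HasFDerivAt (fun x => G.f a (G.f (G.inv a) x))
      ((G.jr a G.y₀).comp (G.jr (G.inv a) a)) a := by
    have h := G.hasF_right (G.hasFDerivAt_right ha' ha) ha
      (by rw [G.hinv_mul _ ha]; exact G.hy₀)
    rwa [G.hinv_mul _ ha] at h
  have hR : HasFDerivAt (fun x : E2 => x) (ContinuousLinearMap.id ℝ E2) a := hasFDerivAt_id a
  refine fder_eq G.hDopen ha (fun x hx => ?_) hL hR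
  rw [← G.hassoc _ ha _ ha' _ hx, G.hmul_inv _ ha, G.hone_mul _ hx]

lemma jr_inv_left {a : E2} (ha : a ∈ G.D) :
    (G.jr (G.inv a) a).comp (G.jr a G.y₀) = ContinuousLinearMap.id ℝ E2 := by
  have ha' := G.hinv_mem _ ha
  have hL : HasFDerivAt (fun x => G.f (G.inv a) (G.f a x))
      ((G.jr (G.inv a) a).comp (G.jr a G.y₀)) G.y₀ := by
    have h := G.hasF_right (G.hasFDerivAt_right ha G.hy₀) ha'
      (by rw [G.hmul_one _ ha]; exact ha)
    rwa [G.hmul_one _ ha] at h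
  have hR : HasFDerivAt (fun x : E2 => x) (ContinuousLinearMap.id ℝ E2) G.y₀ := hasFDerivAt_id _
  refine fder_eq G.hDopen G.hy₀ (fun x hx => ?_) hL hR
  rw [← G.hassoc _ ha' _ ha _ hx, G.hinv_mul _ ha, G.hone_mul _ hx]

lemma eq_zero_of_comp_jr {X : Type*} [NormedAddCommGroup X] [NormedSpace ℝ X]
    {a : E2} (ha : a ∈ G.D) {T : E2 →L[ℝ] X}
    (h : T.comp (G.jr a G.y₀) = 0) : T = 0 := by
  have h2 := congrArg (fun Q : E2 →L[ℝ] X => Q.comp (G.jr (G.inv a) a)) h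
  simpa only [ContinuousLinearMap.comp_assoc, G.jr_inv_right ha,
    ContinuousLinearMap.comp_id, ContinuousLinearMap.zero_comp] using h2

lemma hinv_at {y : E2} (hy : y ∈ G.D) : HasFDerivAt G.inv (fderiv ℝ G.inv y) y :=
  ((G.hinv1.differentiableOn (by norm_num)).differentiableAt (G.hDopen.mem_nhds hy)).hasFDerivAt

lemma dinv_y₀ : fderiv ℝ G.inv G.y₀ = -(ContinuousLinearMap.id ℝ E2) := by
  have hL : HasFDerivAt (fun y => G.f y (G.inv y))
      ((G.Dφ (G.y₀, G.inv G.y₀)).comp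
        ((ContinuousLinearMap.id ℝ E2).prod (fderiv ℝ G.inv G.y₀))) G.y₀ :=
    G.hasF (hasFDerivAt_id G.y₀) (G.hinv_at G.hy₀)
      (Set.mk_mem_prod G.hy₀ (G.hinv_mem _ G.hy₀))
  have hR : HasFDerivAt (fun _ : E2 => G.y₀) (0 : E2 →L[ℝ] E2) G.y₀ := hasFDerivAt_const _ _
  have h := fder_eq G.hDopen G.hy₀ (fun x hx => G.hmul_inv _ hx) hL hR
  rw [G.inv_y₀, comp_prod_split] at h
  have h2 : G.jl G.y₀ G.y₀ + (G.jr G.y₀ G.y₀).comp (fderiv ℝ G.inv G.y₀) = 0 := by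
    simp only [ContinuousLinearMap.comp_id] at h; exact h
  rw [G.jl_y₀ G.hy₀, G.jr_y₀y₀, ContinuousLinearMap.id_comp] at h2
  exact eq_neg_of_add_eq_zero_right h2

lemma dinv_comp {y : E2} (hy : y ∈ G.D) :
    (fderiv ℝ G.inv y).comp (G.jr y G.y₀) = -(G.jl G.y₀ (G.inv y)) := by
  have hy' := G.hinv_mem _ hy
  have hL : HasFDerivAt (fun x => G.inv (G.f y x))
      ((fderiv ℝ G.inv y).comp (G.jr y G.y₀)) G.y₀ := by
    have houter : HasFDerivAt G.inv (fderiv ℝ G.inv y) (G.f y G.y₀) := by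
      rw [G.hmul_one _ hy]; exact G.hinv_at hy
    exact houter.comp G.y₀ (G.hasFDerivAt_right hy G.hy₀)
  have hR : HasFDerivAt (fun x => G.f (G.inv x) (G.inv y))
      (-(G.jl G.y₀ (G.inv y))) G.y₀ := by
    have h := G.hasF_left (p := G.y₀) (G.hinv_at G.hy₀)
      (by rw [G.inv_y₀]; exact G.hy₀) hy'
    rw [G.inv_y₀, G.dinv_y₀, ContinuousLinearMap.comp_neg,
      ContinuousLinearMap.comp_id] at h
    exact h
  exact fder_eq G.hDopen G.hy₀ (fun x hx => G.inv_rev hy hx) hL hR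

/-- the adjoint map -/
def Ad : E2 → (E2 →L[ℝ] E2) := fun a => (G.jl a (G.inv a)).comp (G.jr a G.y₀)

lemma hconj_at {a : E2} (ha : a ∈ G.D) : HasFDerivAt (G.conj a) (G.Ad a) G.y₀ := by
  have h := G.hasF_left (G.hasFDerivAt_right ha G.hy₀)
    (by rw [G.hmul_one _ ha]; exact ha) (G.hinv_mem _ ha)
  rw [G.hmul_one _ ha] at h
  exact h

lemma Ad_mul {a b : E2} (ha : a ∈ G.D) (hb : b ∈ G.D) :
    G.Ad (G.f a b) = (G.Ad a).comp (G.Ad b) := by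
  have hL := G.hconj_at (G.hmul _ ha _ hb)
  have hR : HasFDerivAt (fun x => G.conj a (G.conj b x)) ((G.Ad a).comp (G.Ad b)) G.y₀ := by
    have houter : HasFDerivAt (G.conj a) (G.Ad a) (G.conj b G.y₀) := by
      rw [G.conj_y₀ hb]; exact G.hconj_at ha
    exact houter.comp G.y₀ (G.hconj_at hb)
  exact fder_eq G.hDopen G.hy₀ (fun x hx => G.conj_mul ha hb hx) hL hR

lemma Ad_y₀ : G.Ad G.y₀ = ContinuousLinearMap.id ℝ E2 := by
  unfold Ad
  rw [G.inv_y₀, G.jl_y₀ G.hy₀, G.jr_y₀y₀, ContinuousLinearMap.id_comp]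

end Grp2

/-- a differentiable function with vanishing derivative on an open preconnected set
is constant -/
lemma const_of_fderiv_zero {X : Type*} [NormedAddCommGroup X] [NormedSpace ℝ X]
    {s : Set E2} (hs : IsOpen s) (hconn : IsPreconnected s)
    {g : E2 → X} (hdiff : ∀ a ∈ s, DifferentiableAt ℝ g a)
    (hzero : ∀ a ∈ s, fderiv ℝ g a = 0) {p q : E2} (hp : p ∈ s) (hq : q ∈ s) :
    g p = g q := by
  have hloc : ∀ a ∈ s, ∃ r > 0, Metric.ball a r ⊆ s ∧
      ∀ x ∈ Metric.ball a r, g x = g a := by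
    intro a ha
    obtain ⟨r, hr, hball⟩ := Metric.isOpen_iff.1 hs a ha
    refine ⟨r, hr, hball, fun x hx => ?_⟩
    have hdiffOn : DifferentiableOn ℝ g (Metric.ball a r) := fun y hy =>
      (hdiff y (hball hy)).differentiableWithinAt
    have hb : ∀ y ∈ Metric.ball a r, ‖fderivWithin ℝ g (Metric.ball a r) y‖ ≤ 0 := by
      intro y hy
      rw [fderivWithin_of_isOpen Metric.isOpen_ball hy, hzero y (hball hy)]
      simp
    have hle := (convex_ball a r).norm_image_sub_le_of_norm_fderivWithin_le hdiffOn hb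
      (Metric.mem_ball_self hr) hx
    have h0 : ‖g x - g a‖ ≤ 0 := by simpa using hle
    have := norm_le_zero_iff.1 h0
    exact sub_eq_zero.1 this
  by_contra hne
  set T := {x | x ∈ s ∧ g x = g q} with hT
  set T₂ := {x | x ∈ s ∧ g x ≠ g q} with hT₂
  have hTopen : IsOpen T := by
    rw [Metric.isOpen_iff]
    rintro x ⟨hxs, hgx⟩
    obtain ⟨r, hr, hball, hconst⟩ := hloc x hxs
    exact ⟨r, hr, fun z hz => ⟨hball hz, (hconst z hz).trans hgx⟩⟩
  have hT₂open : IsOpen T₂ := by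
    rw [Metric.isOpen_iff]
    rintro x ⟨hxs, hgx⟩
    obtain ⟨r, hr, hball, hconst⟩ := hloc x hxs
    exact ⟨r, hr, fun z hz => ⟨hball hz, by rw [hconst z hz]; exact hgx⟩⟩
  have hsub : s ⊆ T ∪ T₂ := by
    intro x hx
    by_cases h : g x = g q
    · exact Or.inl ⟨hx, h⟩
    · exact Or.inr ⟨hx, h⟩
  have hne1 : (s ∩ T).Nonempty := ⟨q, hq, hq, rfl⟩
  have hne2 : (s ∩ T₂).Nonempty := ⟨p, hp, hp, hne⟩
  obtain ⟨z, _, ⟨_, hz1⟩, _, hz2⟩ := hconn T T₂ hTopen hT₂open hsub hne1 hne2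
  exact hz2 hz1

namespace Grp2

variable (G : Grp2)

/-- `a ↦ D₂f(a,y₀)` has derivative `S ∘ inl` at `y₀` -/
lemma hDφ_slice1 : HasFDerivAt (fun a : E2 => G.Dφ (a, G.y₀)) (G.S.comp (inl ℝ E2 E2)) G.y₀ := by
  have hinner : HasFDerivAt (fun a : E2 => ((a, G.y₀) : E2 × E2)) (inl ℝ E2 E2) G.y₀ := by
    rw [← id_prod_zero]
    exact HasFDerivAt.prodMk (hasFDerivAt_id _) (hasFDerivAt_const _ _)
  exact HasFDerivAt.comp (g := G.Dφ) (f := fun a : E2 => ((a, G.y₀) : E2 × E2)) G.y₀ G.hS hinner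

lemma hDφ_diag : HasFDerivAt (fun a : E2 => G.Dφ (a, G.inv a))
    (G.S.comp ((ContinuousLinearMap.id ℝ E2).prod (fderiv ℝ G.inv G.y₀))) G.y₀ := by
  have hinner : HasFDerivAt (fun a : E2 => ((a, G.inv a) : E2 × E2))
      ((ContinuousLinearMap.id ℝ E2).prod (fderiv ℝ G.inv G.y₀)) G.y₀ :=
    HasFDerivAt.prodMk (hasFDerivAt_id _) (G.hinv_at G.hy₀)
  have houter : HasFDerivAt G.Dφ G.S (G.y₀, G.inv G.y₀) := by
    rw [G.inv_y₀]; exact G.hS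
  exact HasFDerivAt.comp (g := G.Dφ) (f := fun a : E2 => ((a, G.inv a) : E2 × E2)) G.y₀
    houter hinner

/-- the mixed second partial derivative, as a bilinear map -/
def M : E2 →L[ℝ] E2 →L[ℝ] E2 :=
  ((compL ℝ E2 (E2 × E2) E2).flip (inr ℝ E2 E2)).comp (G.S.comp (inl ℝ E2 E2))

lemma M_apply (u v : E2) : G.M u v = G.S (u, 0) (0, v) := rfl

/-- pure second derivative in the first variable vanishes -/
lemma S11 (u v : E2) : G.S (u, 0) (v, 0) = 0 := by
  have hA : HasFDerivAt (fun a : E2 => (G.Dφ (a, G.y₀)).comp (inl ℝ E2 E2))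
      (((compL ℝ E2 (E2 × E2) E2).flip (inl ℝ E2 E2)).comp (G.S.comp (inl ℝ E2 E2))) G.y₀ :=
    (((compL ℝ E2 (E2 × E2) E2).flip (inl ℝ E2 E2)).hasFDerivAt).comp G.y₀ G.hDφ_slice1
  have hconstd : HasFDerivAt (fun _ : E2 => ContinuousLinearMap.id ℝ E2)
      (0 : E2 →L[ℝ] (E2 →L[ℝ] E2)) G.y₀ := hasFDerivAt_const _ _
  have h := fder_eq G.hDopen G.hy₀ (fun a ha => G.jl_y₀ ha) hA hconstd
  have h2 := congrFun (congrArg (fun (T : E2 →L[ℝ] (E2 →L[ℝ] E2)) => (T u : E2 → E2)) h) v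
  simpa using h2

lemma M_comm_of_antisymm_zero (h : G.M (1, 0) (0, 1) - G.M (0, 1) (1, 0) = 0)
    (u v : E2) : G.M u v = G.M v u := by
  have h' : G.M (1, 0) (0, 1) = G.M (0, 1) (1, 0) := by rwa [sub_eq_zero] at h
  obtain ⟨a, b⟩ := u; obtain ⟨c, d⟩ := v
  have e : ∀ x y : ℝ, ((x, y) : E2) = x • ((1 : ℝ), (0 : ℝ)) + y • ((0 : ℝ), (1 : ℝ)) := by
    intro x y; simp
  rw [e a b, e c d]
  simp only [map_add, map_smul, ContinuousLinearMap.add_apply,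
    ContinuousLinearMap.coe_smul', Pi.smul_apply, ContinuousLinearMap.smul_apply]
  rw [h']
  module

end Grp2

namespace Grp2

variable (G : Grp2)

lemma hAd_diff {a : E2} (ha : a ∈ G.D) : DifferentiableAt ℝ G.Ad a := by
  have h1 : DifferentiableAt ℝ (fun a : E2 => G.Dφ (a, G.inv a)) a :=
    DifferentiableAt.comp (g := G.Dφ) (f := fun a : E2 => ((a, G.inv a) : E2 × E2)) a
      (G.hDφ_diff (Set.mk_mem_prod ha (G.hinv_mem _ ha)))
      (differentiableAt_id.prodMk (G.hinv_at ha).differentiableAt)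
  have h2 : DifferentiableAt ℝ (fun a : E2 => G.Dφ (a, G.y₀)) a :=
    DifferentiableAt.comp (g := G.Dφ) (f := fun a : E2 => ((a, G.y₀) : E2 × E2)) a
      (G.hDφ_diff (Set.mk_mem_prod ha G.hy₀))
      (differentiableAt_id.prodMk (differentiableAt_const _))
  exact (h1.clm_comp (differentiableAt_const (inl ℝ E2 E2))).clm_comp
    (h2.clm_comp (differentiableAt_const (inr ℝ E2 E2)))

/-- derivative of `Ad` at the identity, evaluated -/
lemma dAd_y₀_apply (u v : E2) :
    fderiv ℝ G.Ad G.y₀ u v = G.M u v - G.M v u := by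
  -- the two factor maps
  have hc₁ : HasFDerivAt (fun a : E2 => (G.Dφ (a, G.inv a)).comp (inl ℝ E2 E2))
      (((compL ℝ E2 (E2 × E2) E2).flip (inl ℝ E2 E2)).comp
        (G.S.comp ((ContinuousLinearMap.id ℝ E2).prod (fderiv ℝ G.inv G.y₀)))) G.y₀ :=
    (((compL ℝ E2 (E2 × E2) E2).flip (inl ℝ E2 E2)).hasFDerivAt).comp G.y₀ G.hDφ_diag
  have hc₂ : HasFDerivAt (fun a : E2 => (G.Dφ (a, G.y₀)).comp (inr ℝ E2 E2))
      (((compL ℝ E2 (E2 × E2) E2).flip (inr ℝ E2 E2)).comp (G.S.comp (inl ℝ E2 E2))) G.y₀ :=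
    (((compL ℝ E2 (E2 × E2) E2).flip (inr ℝ E2 E2)).hasFDerivAt).comp G.y₀ G.hDφ_slice1
  have hAd := hc₁.clm_comp hc₂
  have hfd := hAd.fderiv
  rw [show (fun y : E2 =>
      ((G.Dφ (y, G.inv y)).comp (inl ℝ E2 E2)).comp ((G.Dφ (y, G.y₀)).comp (inr ℝ E2 E2)))
        = G.Ad from rfl] at hfd
  rw [hfd]
  -- now evaluate
  have e1 : (G.Dφ (G.y₀, G.inv G.y₀)).comp (inl ℝ E2 E2) = ContinuousLinearMap.id ℝ E2 := by
    rw [G.inv_y₀]; exact G.jl_y₀ G.hy₀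
  have e2 : (G.Dφ (G.y₀, G.y₀)).comp (inr ℝ E2 E2) = ContinuousLinearMap.id ℝ E2 :=
    G.jr_y₀y₀
  simp only [ContinuousLinearMap.add_apply, ContinuousLinearMap.comp_apply,
    ContinuousLinearMap.flip_apply, compL_apply, ContinuousLinearMap.coe_id', id_eq,
    ContinuousLinearMap.prod_apply, ContinuousLinearMap.id_apply, e1, e2]
  rw [G.dinv_y₀]
  have hsplit : ((u, -u) : E2 × E2) = ((u, 0) : E2 × E2) + (0, -u) := by simp
  have hneg : ((0, -u) : E2 × E2) = -((0, u) : E2 × E2) := by simp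
  simp only [ContinuousLinearMap.neg_apply, ContinuousLinearMap.id_apply, hsplit, hneg,
    map_add, map_neg, ContinuousLinearMap.add_apply, ContinuousLinearMap.neg_apply]
  simp only [inl_apply, inr_apply, ContinuousLinearMap.neg_apply]
  rw [G.S11 u v, G.Ssymm (0, u) (v, 0), ← G.M_apply u v, ← G.M_apply v u]
  abel

lemma Ad_const (hY : G.M (1, 0) (0, 1) - G.M (0, 1) (1, 0) = 0) {a : E2} (ha : a ∈ G.D) :
    G.Ad a = ContinuousLinearMap.id ℝ E2 := by
  have hzero_y₀ : fderiv ℝ G.Ad G.y₀ = 0 := by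
    refine ContinuousLinearMap.ext fun u => ContinuousLinearMap.ext fun v => ?_
    rw [G.dAd_y₀_apply u v]
    have := G.M_comm_of_antisymm_zero hY u v
    simp [this]
  have hzero : ∀ b ∈ G.D, fderiv ℝ G.Ad b = 0 := by
    intro b hb
    have hL : HasFDerivAt (fun x => G.Ad (G.f b x)) ((fderiv ℝ G.Ad b).comp (G.jr b G.y₀))
        G.y₀ := by
      have houter : HasFDerivAt G.Ad (fderiv ℝ G.Ad b) (G.f b G.y₀) := by
        rw [G.hmul_one _ hb]; exact (G.hAd_diff hb).hasFDerivAt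
      exact houter.comp G.y₀ (G.hasFDerivAt_right hb G.hy₀)
    have hR : HasFDerivAt (fun x => (compL ℝ E2 E2 E2 (G.Ad b)) (G.Ad x))
        ((compL ℝ E2 E2 E2 (G.Ad b)).comp (fderiv ℝ G.Ad G.y₀)) G.y₀ :=
      ((compL ℝ E2 E2 E2 (G.Ad b)).hasFDerivAt).comp G.y₀ (G.hAd_diff G.hy₀).hasFDerivAt
    have heq : Set.EqOn (fun x => G.Ad (G.f b x))
        (fun x => (compL ℝ E2 E2 E2 (G.Ad b)) (G.Ad x)) G.D := by
      intro x hx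
      simp only [compL_apply]
      exact G.Ad_mul hb hx
    have h := fder_eq G.hDopen G.hy₀ heq hL hR
    rw [hzero_y₀, ContinuousLinearMap.comp_zero] at h
    exact G.eq_zero_of_comp_jr hb h
  have := const_of_fderiv_zero G.hDopen G.hDconn (fun b hb => G.hAd_diff hb) hzero ha G.hy₀
  rw [this, G.Ad_y₀]

end Grp2

namespace Grp2

variable (G : Grp2)

/-- Main reverse direction: vanishing of the antisymmetrized mixed second derivative
implies commutativity. -/
lemma comm_of_M (hY : G.M (1, 0) (0, 1) - G.M (0, 1) (1, 0) = 0) :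
    ∀ a ∈ G.D, ∀ b ∈ G.D, G.f a b = G.f b a := by
  have hAdid : ∀ b ∈ G.D, G.Ad b = ContinuousLinearMap.id ℝ E2 :=
    fun b hb => G.Ad_const hY hb
  intro a ha b hb
  -- first: conjugation by `a` is the identity on `D`
  have hconj_id : ∀ y ∈ G.D, G.conj a y = y := by
    have Dg : E2 → (E2 →L[ℝ] E2) := fun y => (G.jl (G.f a y) (G.inv a)).comp (G.jr a y)
    have hg_at : ∀ y ∈ G.D,
        HasFDerivAt (G.conj a) ((G.jl (G.f a y) (G.inv a)).comp (G.jr a y)) y := by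
      intro y hy
      exact G.hasF_left (G.hasFDerivAt_right ha hy) (G.hmul _ ha _ hy) (G.hinv_mem _ ha)
    have hDg_jr : ∀ y ∈ G.D,
        ((G.jl (G.f a y) (G.inv a)).comp (G.jr a y)).comp (G.jr y G.y₀)
          = G.jr (G.conj a y) G.y₀ := by
      intro y hy
      have hL : HasFDerivAt (fun x => G.conj a (G.f y x))
          (((G.jl (G.f a y) (G.inv a)).comp (G.jr a y)).comp (G.jr y G.y₀)) G.y₀ := by
        have houter : HasFDerivAt (G.conj a)
            ((G.jl (G.f a y) (G.inv a)).comp (G.jr a y)) (G.f y G.y₀) := by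
          rw [G.hmul_one _ hy]; exact hg_at y hy
        exact houter.comp G.y₀ (G.hasFDerivAt_right hy G.hy₀)
      have hR : HasFDerivAt (fun x => G.f (G.conj a y) (G.conj a x))
          ((G.jr (G.conj a y) G.y₀).comp (G.Ad a)) G.y₀ := by
        have h := G.hasF_right (G.hconj_at ha) (G.conj_mem ha hy)
          (by rw [G.conj_y₀ ha]; exact G.hy₀)
        rwa [G.conj_y₀ ha] at h
      have h := fder_eq G.hDopen G.hy₀ (fun x hx => G.conj_hom ha hy hx) hL hR
      rw [h, hAdid a ha, ContinuousLinearMap.comp_id]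
    -- the function h(y) = (a y a⁻¹) ⋆ y⁻¹ has vanishing derivative
    have hh_at : ∀ y ∈ G.D, HasFDerivAt (fun y => G.f (G.conj a y) (G.inv y))
        ((G.Dφ (G.conj a y, G.inv y)).comp
          (((G.jl (G.f a y) (G.inv a)).comp (G.jr a y)).prod (fderiv ℝ G.inv y))) y := by
      intro y hy
      exact G.hasF (hg_at y hy) (G.hinv_at hy)
        (Set.mk_mem_prod (G.conj_mem ha hy) (G.hinv_mem _ hy))
    have hDh0 : ∀ y ∈ G.D, ((G.Dφ (G.conj a y, G.inv y)).comp
        (((G.jl (G.f a y) (G.inv a)).comp (G.jr a y)).prod (fderiv ℝ G.inv y)))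
          = 0 := by
      intro y hy
      apply G.eq_zero_of_comp_jr hy
      rw [ContinuousLinearMap.comp_assoc, prod_compR, hDg_jr y hy, G.dinv_comp hy,
        comp_prod_split]
      show (G.jl (G.conj a y) (G.inv y)).comp (G.jr (G.conj a y) G.y₀) +
        (G.jr (G.conj a y) (G.inv y)).comp (-(G.jl G.y₀ (G.inv y))) = 0
      rw [G.key_assoc (G.conj_mem ha hy) (G.hinv_mem _ hy), ContinuousLinearMap.comp_neg]
      abel
    have hconst : ∀ y ∈ G.D, G.f (G.conj a y) (G.inv y) = G.f (G.conj a G.y₀) (G.inv G.y₀) :=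
      fun y hy => const_of_fderiv_zero G.hDopen G.hDconn
        (fun b' hb' => (hh_at b' hb').differentiableAt)
        (fun b' hb' => by rw [(hh_at b' hb').fderiv, hDh0 b' hb']) hy G.hy₀
    intro y hy
    apply G.eq_of_mul_inv (G.conj_mem ha hy) hy
    rw [hconst y hy, G.conj_y₀ ha, G.inv_y₀, G.hmul_one _ G.hy₀]
  -- conclude commutativity
  have h := hconj_id b hb
  have h2 : G.f (G.conj a b) a = G.f b a := by rw [h]
  rw [← h2]
  show G.f a b = G.f (G.f (G.f a b) (G.inv a)) a
  rw [G.hassoc _ (G.hmul _ ha _ hb) _ (G.hinv_mem _ ha) _ ha, G.hinv_mul _ ha,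
    G.hmul_one _ (G.hmul _ ha _ hb)]

/-- Forward direction: commutativity implies the second derivative is swap-invariant. -/
lemma S_swap (hcomm : ∀ a ∈ G.D, ∀ b ∈ G.D, G.f a b = G.f b a) (q p : E2 × E2) :
    G.S q p = G.S (q.2, q.1) (p.2, p.1) := by
  have σh : ((ContinuousLinearMap.snd ℝ E2 E2).prod (ContinuousLinearMap.fst ℝ E2 E2) :
      (E2 × E2) →L[ℝ] (E2 × E2)) = (ContinuousLinearMap.snd ℝ E2 E2).prod
      (ContinuousLinearMap.fst ℝ E2 E2) := rfl
  set σ : (E2 × E2) →L[ℝ] (E2 × E2) :=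
    (ContinuousLinearMap.snd ℝ E2 E2).prod (ContinuousLinearMap.fst ℝ E2 E2) with hσ
  have step1 : ∀ r ∈ G.D ×ˢ G.D, G.Dφ r = (G.Dφ (r.2, r.1)).comp σ := by
    intro r hr
    have hswap : (((r.2 : E2), (r.1 : E2)) : E2 × E2) ∈ G.D ×ˢ G.D :=
      Set.mk_mem_prod hr.2 hr.1
    have hL := G.hφ_at hr
    have hR : HasFDerivAt (fun q : E2 × E2 => G.φ (q.2, q.1)) ((G.Dφ (r.2, r.1)).comp σ) r :=
      HasFDerivAt.comp (g := G.φ) (f := fun q : E2 × E2 => ((q.2, q.1) : E2 × E2)) r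
        (G.hφ_at hswap) σ.hasFDerivAt
    exact fder_eq G.hDD hr (fun x hx => hcomm _ hx.1 _ hx.2) hL hR
  have step2 : G.S = ((compL ℝ (E2 × E2) (E2 × E2) E2).flip σ).comp (G.S.comp σ) := by
    have hL := G.hS
    have hin : HasFDerivAt (fun r : E2 × E2 => G.Dφ (r.2, r.1)) (G.S.comp σ) (G.y₀, G.y₀) :=
      HasFDerivAt.comp (g := G.Dφ) (f := fun r : E2 × E2 => ((r.2, r.1) : E2 × E2)) _
        G.hS σ.hasFDerivAt
    have hR : HasFDerivAt
        (fun r : E2 × E2 => ((compL ℝ (E2 × E2) (E2 × E2) E2).flip σ) (G.Dφ (r.2, r.1)))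
        (((compL ℝ (E2 × E2) (E2 × E2) E2).flip σ).comp (G.S.comp σ)) (G.y₀, G.y₀) :=
      (((compL ℝ (E2 × E2) (E2 × E2) E2).flip σ).hasFDerivAt).comp _ hin
    exact fder_eq G.hDD (Set.mk_mem_prod G.hy₀ G.hy₀) (fun r hr => step1 r hr) hL hR
  conv_lhs => rw [step2]
  rfl

lemma M_comm_of_comm (hcomm : ∀ a ∈ G.D, ∀ b ∈ G.D, G.f a b = G.f b a) (u v : E2) :
    G.M u v = G.M v u := by
  rw [G.M_apply, G.M_apply]
  rw [G.S_swap hcomm (u, 0) (0, v)]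
  show G.S (0, u) (v, 0) = _
  rw [G.Ssymm (0, u) (v, 0)]

/-- value of `V u` at the identity -/
lemma V_val (u : E2) : fderiv ℝ (fun x => G.f G.y₀ x) G.y₀ u = u := by
  rw [(G.hasFDerivAt_right G.hy₀ G.hy₀).fderiv, G.jr_y₀y₀]
  rfl

/-- derivative of the vector field `V u` at the identity -/
lemma fderiv_V_apply (u w : E2) :
    fderiv ℝ (fun y => fderiv ℝ (fun x => G.f y x) G.y₀ u) G.y₀ w = G.M w u := by
  have happ : HasFDerivAt (fun y : E2 => G.Dφ (y, G.y₀) ((0, u) : E2 × E2))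
      ((G.Dφ (G.y₀, G.y₀)).comp (0 : E2 →L[ℝ] (E2 × E2))
        + (G.S.comp (inl ℝ E2 E2)).flip ((0, u) : E2 × E2)) G.y₀ :=
    G.hDφ_slice1.clm_apply (hasFDerivAt_const _ _)
  have heq : Set.EqOn (fun y => fderiv ℝ (fun x => G.f y x) G.y₀ u)
      (fun y : E2 => G.Dφ (y, G.y₀) ((0, u) : E2 × E2)) G.D := by
    intro y hy
    show fderiv ℝ (fun x => G.f y x) G.y₀ u = _
    rw [(G.hasFDerivAt_right hy G.hy₀).fderiv]
    rfl
  have hL : HasFDerivAt (fun y => fderiv ℝ (fun x => G.f y x) G.y₀ u)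
      ((G.Dφ (G.y₀, G.y₀)).comp (0 : E2 →L[ℝ] (E2 × E2))
        + (G.S.comp (inl ℝ E2 E2)).flip ((0, u) : E2 × E2)) G.y₀ :=
    happ.congr_of_eventuallyEq
      (Filter.eventuallyEq_of_mem (G.hDopen.mem_nhds G.hy₀) heq)
  rw [hL.fderiv]
  simp only [ContinuousLinearMap.add_apply, ContinuousLinearMap.comp_apply,
    ContinuousLinearMap.zero_apply, map_zero, zero_add, ContinuousLinearMap.flip_apply,
    inl_apply]
  rw [← G.M_apply w u]

end Grp2

end

/-- the group `(D, ⋆)` is commutative if and only if `Y₀ = (0, 0)`. -/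
theorem stmt_8
    (k : ℕ) (hk : 2 ≤ k)
    (D : Set (ℝ × ℝ)) (hDopen : IsOpen D) (hDconn : IsConnected D)
    (hDsc : SimplyConnectedSpace D)
    (f : ℝ × ℝ → ℝ × ℝ → ℝ × ℝ) (y₀ : ℝ × ℝ) (hy₀ : y₀ ∈ D)
    (hmul : ∀ a ∈ D, ∀ b ∈ D, f a b ∈ D)
    (hassoc : ∀ a ∈ D, ∀ b ∈ D, ∀ c ∈ D, f (f a b) c = f a (f b c))
    (hone_mul : ∀ a ∈ D, f y₀ a = a)
    (hmul_one : ∀ a ∈ D, f a y₀ = a)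
    (inv : ℝ × ℝ → ℝ × ℝ)
    (hinv_mem : ∀ a ∈ D, inv a ∈ D)
    (hmul_inv : ∀ a ∈ D, f a (inv a) = y₀)
    (hinv_mul : ∀ a ∈ D, f (inv a) a = y₀)
    (hf_smooth : ContDiffOn ℝ k (fun p : (ℝ × ℝ) × (ℝ × ℝ) => f p.1 p.2) (D ×ˢ D))
    (hinv_smooth : ContDiffOn ℝ k inv D) :
    let V : ℝ × ℝ → ℝ × ℝ → ℝ × ℝ := fun u y => fderiv ℝ (fun x => f y x) y₀ u
    let Y₀ : ℝ × ℝ :=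
      fderiv ℝ (V ((0 : ℝ), (1 : ℝ))) y₀ (V ((1 : ℝ), (0 : ℝ)) y₀)
        - fderiv ℝ (V ((1 : ℝ), (0 : ℝ))) y₀ (V ((0 : ℝ), (1 : ℝ)) y₀)
    (∀ a ∈ D, ∀ b ∈ D, f a b = f b a) ↔ Y₀ = (0 : ℝ × ℝ) := by
  intro V Y₀
  let G : Grp2 :=
    { D := D, hDopen := hDopen, hDconn := hDconn.isPreconnected, f := f, y₀ := y₀,
      hy₀ := hy₀, inv := inv, hmul := hmul, hassoc := hassoc, hone_mul := hone_mul,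
      hmul_one := hmul_one, hinv_mem := hinv_mem, hmul_inv := hmul_inv,
      hinv_mul := hinv_mul,
      hf2 := hf_smooth.of_le (by exact_mod_cast hk),
      hinv1 := hinv_smooth.of_le (by exact_mod_cast (one_le_two.trans hk)) }
  have hY₀eq : Y₀ = G.M ((1 : ℝ), (0 : ℝ)) ((0 : ℝ), (1 : ℝ))
      - G.M ((0 : ℝ), (1 : ℝ)) ((1 : ℝ), (0 : ℝ)) := by
    show fderiv ℝ (V ((0 : ℝ), (1 : ℝ))) y₀ (V ((1 : ℝ), (0 : ℝ)) y₀)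
        - fderiv ℝ (V ((1 : ℝ), (0 : ℝ))) y₀ (V ((0 : ℝ), (1 : ℝ)) y₀) = _
    have h1 : V ((1 : ℝ), (0 : ℝ)) y₀ = ((1 : ℝ), (0 : ℝ)) := G.V_val _
    have h2 : V ((0 : ℝ), (1 : ℝ)) y₀ = ((0 : ℝ), (1 : ℝ)) := G.V_val _
    rw [h1, h2]
    have h3 : ∀ u w : ℝ × ℝ, fderiv ℝ (V u) y₀ w = G.M w u :=
      fun u w => G.fderiv_V_apply u w
    rw [h3, h3]
  rw [hY₀eq]
  constructor
  · intro hcomm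
    have h := G.M_comm_of_comm hcomm ((1 : ℝ), (0 : ℝ)) ((0 : ℝ), (1 : ℝ))
    rw [h, sub_self]
  · intro hY
    exact G.comm_of_M hY
end

section
/- Let M : ℝ² → ℝ² be any linear map and i ∈ {1, 2}. For j ∈ {1, 2} define ω_j : D → ℝ by ω_j(y) := π_i(M · (J₂f(y, y₀))⁻¹ · e_j). Then for every y ∈ D, the antisymmetrized derivative satisfies ∂_{e₂}ω₁(y) − ∂_{e₁}ω₂(y) = det((J₂f(y, y₀))⁻¹) · π_i(M · Y₀), where ∂_{e_j} denotes the directional derivative in the direction e_j and π₁, π₂ are the coordinate projections of ℝ². In particular, if the group (D, ⋆) is commutative (so Y₀ = 0) or if π_i(M · Y₀) = 0, the ℝ-valued 1-form y ↦ π_i(M · (J₂f(y, y₀))⁻¹ · ) is closed on D. -/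
open ContinuousLinearMap Filter

set_option maxHeartbeats 2000000


/-- for any linear map `M : ℝ² → ℝ²` and `i ∈ {1,2}` (encoded by `π` being one of
the two coordinate projections), the forms `ω_j(y) = π_i(M (J₂f(y,y₀))⁻¹ e_j)` satisfy
`∂_{e₂}ω₁(y) − ∂_{e₁}ω₂(y) = det((J₂f(y,y₀))⁻¹) · π_i(M Y₀)` on `D`; in particular if
`π_i(M Y₀) = 0` the 1-form is closed. -/
theorem stmt_9
    (k : ℕ) (hk : 2 ≤ k)
    (D : Set (ℝ × ℝ)) (hDopen : IsOpen D) (hDconn : IsConnected D)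
    (hDsc : SimplyConnectedSpace D)
    (f : ℝ × ℝ → ℝ × ℝ → ℝ × ℝ) (y₀ : ℝ × ℝ) (hy₀ : y₀ ∈ D)
    (hmul : ∀ a ∈ D, ∀ b ∈ D, f a b ∈ D)
    (hassoc : ∀ a ∈ D, ∀ b ∈ D, ∀ c ∈ D, f (f a b) c = f a (f b c))
    (hone_mul : ∀ a ∈ D, f y₀ a = a)
    (hmul_one : ∀ a ∈ D, f a y₀ = a)
    (inv : ℝ × ℝ → ℝ × ℝ)
    (hinv_mem : ∀ a ∈ D, inv a ∈ D)
    (hmul_inv : ∀ a ∈ D, f a (inv a) = y₀)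
    (hinv_mul : ∀ a ∈ D, f (inv a) a = y₀)
    (hf_smooth : ContDiffOn ℝ k (fun p : (ℝ × ℝ) × (ℝ × ℝ) => f p.1 p.2) (D ×ˢ D))
    (hinv_smooth : ContDiffOn ℝ k inv D)
    (M : (ℝ × ℝ) →L[ℝ] (ℝ × ℝ))
    (π : ℝ × ℝ → ℝ) (hπ : π = Prod.fst ∨ π = Prod.snd) :
    let V : ℝ × ℝ → ℝ × ℝ → ℝ × ℝ := fun u y => fderiv ℝ (fun x => f y x) y₀ u
    let Y₀ : ℝ × ℝ :=
      fderiv ℝ (V ((0 : ℝ), (1 : ℝ))) y₀ (V ((1 : ℝ), (0 : ℝ)) y₀)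
        - fderiv ℝ (V ((1 : ℝ), (0 : ℝ))) y₀ (V ((0 : ℝ), (1 : ℝ)) y₀)
    let ω : ℝ × ℝ → ℝ × ℝ → ℝ :=
      fun e y => π (M ((fderiv ℝ (fun x => f y x) y₀).inverse e))
    (∀ y ∈ D,
      fderiv ℝ (ω ((1 : ℝ), (0 : ℝ))) y ((0 : ℝ), (1 : ℝ))
          - fderiv ℝ (ω ((0 : ℝ), (1 : ℝ))) y ((1 : ℝ), (0 : ℝ)) =
        LinearMap.det ((fderiv ℝ (fun x => f y x) y₀).inverse).toLinearMap * π (M Y₀)) ∧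
    (π (M Y₀) = 0 → ∀ y ∈ D,
      fderiv ℝ (ω ((1 : ℝ), (0 : ℝ))) y ((0 : ℝ), (1 : ℝ))
          - fderiv ℝ (ω ((0 : ℝ), (1 : ℝ))) y ((1 : ℝ), (0 : ℝ)) = 0) := by
  intro V Y₀ ω
  obtain ⟨πL, hπL⟩ : ∃ πL : (ℝ × ℝ) →L[ℝ] ℝ, π = ⇑πL := by
    rcases hπ with h | h
    · exact ⟨ContinuousLinearMap.fst ℝ ℝ ℝ, h⟩
    · exact ⟨ContinuousLinearMap.snd ℝ ℝ ℝ, h⟩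
  set F : (ℝ × ℝ) × (ℝ × ℝ) → ℝ × ℝ := fun p => f p.1 p.2 with hFdef
  have hDD : IsOpen (D ×ˢ D) := hDopen.prod hDopen
  have hk1 : (1 : WithTop ℕ∞) ≤ (k : ℕ∞) := by exact_mod_cast Nat.one_le_of_lt hk
  have hpart : ∀ a ∈ D, ∀ b ∈ D, HasFDerivAt (fun x => f a x)
      ((fderiv ℝ F (a, b)).comp (ContinuousLinearMap.inr ℝ (ℝ × ℝ) (ℝ × ℝ))) b := by
    intro a ha b hb
    have hF : DifferentiableAt ℝ F (a, b) :=
      ((hf_smooth.contDiffAt (hDD.mem_nhds (Set.mk_mem_prod ha hb))).differentiableAt (by exact_mod_cast (by omega : k ≠ 0)))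
    have hincl : HasFDerivAt (fun x : ℝ × ℝ => ((a, x) : (ℝ × ℝ) × (ℝ × ℝ)))
        (ContinuousLinearMap.inr ℝ (ℝ × ℝ) (ℝ × ℝ)) b :=
      HasFDerivAt.prodMk (hasFDerivAt_const a b) (hasFDerivAt_id b)
    exact (hF.hasFDerivAt.comp b hincl)
  set Af : ℝ × ℝ → ℝ × ℝ → ((ℝ × ℝ) →L[ℝ] (ℝ × ℝ)) :=
    fun a b => (fderiv ℝ F (a, b)).comp (ContinuousLinearMap.inr ℝ (ℝ × ℝ) (ℝ × ℝ)) with hAfdef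
  have hAfun : ∀ a ∈ D, ∀ b ∈ D, fderiv ℝ (fun x => f a x) b = Af a b :=
    fun a ha b hb => (hpart a ha b hb).fderiv
  set A : ℝ × ℝ → ((ℝ × ℝ) →L[ℝ] (ℝ × ℝ)) := fun y => Af y y₀ with hAdef
  have hA_eq : ∀ y ∈ D, fderiv ℝ (fun x => f y x) y₀ = A y := fun y hy => hAfun y hy y₀ hy₀
  have hA_cd : ContDiffOn ℝ (k - 1 : ℕ) A D := by
    have h1 : ContDiffOn ℝ (k - 1 : ℕ) (fderiv ℝ F) (D ×ˢ D) := by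
      apply hf_smooth.fderiv_of_isOpen hDD
      exact_mod_cast (by exact_mod_cast Nat.le_of_eq (by omega) :
        (((k - 1 : ℕ) : ℕ∞) : WithTop ℕ∞) + 1 ≤ (((k : ℕ∞)) : WithTop ℕ∞))
    have h2 : ContDiffOn ℝ (k - 1 : ℕ) (fun y : ℝ × ℝ => fderiv ℝ F (y, y₀)) D := by
      apply h1.comp (contDiff_id.prodMk contDiff_const).contDiffOn
      intro y hy; exact Set.mk_mem_prod hy hy₀
    exact ((ContinuousLinearMap.compL ℝ (ℝ × ℝ) ((ℝ × ℝ) × (ℝ × ℝ)) (ℝ × ℝ)).flip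
      (ContinuousLinearMap.inr ℝ (ℝ × ℝ) (ℝ × ℝ))).contDiff.comp_contDiffOn h2
  have hk11 : (1 : WithTop ℕ∞) ≤ ((k - 1 : ℕ) : ℕ∞) := by
    exact_mod_cast Nat.one_le_iff_ne_zero.mpr (by omega)
  have hA_diff : ∀ y ∈ D, DifferentiableAt ℝ A y := fun y hy =>
    ((hA_cd.contDiffAt (hDopen.mem_nhds hy)).differentiableAt (by exact_mod_cast (by omega : k - 1 ≠ 0)))
  have hA0 : A y₀ = ContinuousLinearMap.id ℝ (ℝ × ℝ) := by
    have he : (fun x => f y₀ x) =ᶠ[nhds y₀] id := by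
      filter_upwards [hDopen.mem_nhds hy₀] with x hx using hone_mul x hx
    rw [← hA_eq y₀ hy₀, he.fderiv_eq, fderiv_id]
  have hK2 : ∀ a ∈ D, ∀ b ∈ D, A (f a b) = (Af a b).comp (A b) := by
    intro a ha b hb
    have hab : f a b ∈ D := hmul a ha b hb
    have he : (fun x => f (f a b) x) =ᶠ[nhds y₀] fun x => f a (f b x) := by
      filter_upwards [hDopen.mem_nhds hy₀] with x hx using hassoc a ha b hb x hx
    have hcomp : HasFDerivAt (fun x => f a (f b x)) ((Af a b).comp (A b)) y₀ := by
      have houter : HasFDerivAt (fun x => f a x) (Af a b) (f b y₀) := by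
        rw [hmul_one b hb]; exact hpart a ha b hb
      exact houter.comp y₀ (hpart b hb y₀ hy₀)
    rw [← hA_eq _ hab, he.fderiv_eq, hcomp.fderiv]
  have hLinv : ∀ y ∈ D, (Af (inv y) y).comp (A y) = ContinuousLinearMap.id ℝ (ℝ × ℝ) := by
    intro y hy
    have := hK2 (inv y) (hinv_mem y hy) y hy
    rw [hinv_mul y hy, hA0] at this
    exact this.symm
  have hLinv' : ∀ y ∈ D, ∀ w, Af (inv y) y (A y w) = w := by
    intro y hy w
    have := congrFun (congrArg (fun T : (ℝ × ℝ) →L[ℝ] (ℝ × ℝ) => (T : ℝ × ℝ → ℝ × ℝ))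
      (hLinv y hy)) w
    simpa using this
  have hunit : ∀ y ∈ D, IsUnit (A y) := by
    intro y hy
    have hinj : Function.Injective (A y) := by
      intro u v huv
      have h1 : Af (inv y) y (A y u) = Af (inv y) y (A y v) := by rw [huv]
      rwa [hLinv' y hy u, hLinv' y hy v] at h1
    have hsurj : Function.Surjective (A y) :=
      (LinearMap.injective_iff_surjective (f := (A y : (ℝ × ℝ) →ₗ[ℝ] (ℝ × ℝ)))).mp hinj
    refine ⟨⟨A y, Af (inv y) y, ?_, ?_⟩, rfl⟩
    · refine ContinuousLinearMap.ext fun z => ?_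
      obtain ⟨w, rfl⟩ := hsurj z
      simp [ContinuousLinearMap.mul_apply, hLinv' y hy w]
    · refine ContinuousLinearMap.ext fun w => ?_
      simp [ContinuousLinearMap.mul_apply, hLinv' y hy w]
  set B : ℝ × ℝ → ((ℝ × ℝ) →L[ℝ] (ℝ × ℝ)) := fun y => Ring.inverse (A y) with hBdef
  have hBA : ∀ y ∈ D, ∀ v, B y (A y v) = v := by
    intro y hy v
    have h := Ring.inverse_mul_cancel _ (hunit y hy)
    calc B y (A y v) = (B y * A y) v := rfl
    _ = v := by rw [h]; simp
  have hAB : ∀ y ∈ D, ∀ v, A y (B y v) = v := by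
    intro y hy v
    have h := Ring.mul_inverse_cancel _ (hunit y hy)
    calc A y (B y v) = (A y * B y) v := rfl
    _ = v := by rw [h]; simp
  have hB_deriv : ∀ y ∈ D, HasFDerivAt B
      ((-(ContinuousLinearMap.mulLeftRight ℝ _ (B y) (B y))).comp (fderiv ℝ A y)) y := by
    intro y hy
    set u := (hunit y hy).unit with hu
    have h2 : (↑u⁻¹ : (ℝ × ℝ) →L[ℝ] (ℝ × ℝ)) = B y := by
      rw [hBdef, ← Ring.inverse_unit u, IsUnit.unit_spec]
    have h1 : HasFDerivAt Ring.inverse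
        (-(ContinuousLinearMap.mulLeftRight ℝ _ (B y) (B y))) (A y) := by
      have := hasFDerivAt_ringInverse (𝕜 := ℝ) u
      rw [h2] at this
      rw [hu, IsUnit.unit_spec] at this
      exact this
    exact h1.comp y (hA_diff y hy).hasFDerivAt
  -- global second-order data at y₀
  set C₀ : (ℝ × ℝ) →L[ℝ] ((ℝ × ℝ) →L[ℝ] (ℝ × ℝ)) := fderiv ℝ A y₀ with hC0def
  have hC0 : HasFDerivAt A C₀ y₀ := (hA_diff y₀ hy₀).hasFDerivAt
  -- Y₀ in terms of C₀
  have hY : Y₀ = C₀ ((1 : ℝ), (0 : ℝ)) ((0 : ℝ), (1 : ℝ)) - C₀ ((0 : ℝ), (1 : ℝ)) ((1 : ℝ), (0 : ℝ)) := by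
    have hV_eq : ∀ u : ℝ × ℝ, fderiv ℝ (V u) y₀ = (ContinuousLinearMap.apply ℝ (ℝ × ℝ) u).comp C₀ := by
      intro u
      have he : V u =ᶠ[nhds y₀] fun y' => A y' u := by
        filter_upwards [hDopen.mem_nhds hy₀] with y' hy' using by
          show fderiv ℝ (fun x => f y' x) y₀ u = A y' u
          rw [hA_eq y' hy']
      have : HasFDerivAt (fun y' => A y' u)
          ((ContinuousLinearMap.apply ℝ (ℝ × ℝ) u).comp C₀) y₀ :=
        (ContinuousLinearMap.apply ℝ (ℝ × ℝ) u).hasFDerivAt.comp y₀ hC0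
      rw [he.fderiv_eq, this.fderiv]
    have hV0 : ∀ u : ℝ × ℝ, V u y₀ = u := by
      intro u
      show fderiv ℝ (fun x => f y₀ x) y₀ u = u
      rw [hA_eq y₀ hy₀, hA0]; rfl
    show fderiv ℝ (V ((0:ℝ),(1:ℝ))) y₀ (V ((1:ℝ),(0:ℝ)) y₀)
        - fderiv ℝ (V ((1:ℝ),(0:ℝ))) y₀ (V ((0:ℝ),(1:ℝ)) y₀) = _
    rw [hV_eq, hV_eq, hV0, hV0]
    rfl
  -- antisymmetric bilinear identity
  have hanti : ∀ v w : ℝ × ℝ, C₀ v w - C₀ w v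
      = (v.1 * w.2 - v.2 * w.1) • (C₀ ((1:ℝ),(0:ℝ)) ((0:ℝ),(1:ℝ)) - C₀ ((0:ℝ),(1:ℝ)) ((1:ℝ),(0:ℝ))) := by
    intro v w
    have hv : v = v.1 • ((1:ℝ),(0:ℝ)) + v.2 • ((0:ℝ),(1:ℝ)) := by
      ext <;> simp
    have hw : w = w.1 • ((1:ℝ),(0:ℝ)) + w.2 • ((0:ℝ),(1:ℝ)) := by
      ext <;> simp
    conv_lhs => rw [hv, hw]
    simp only [map_add, map_smul, ContinuousLinearMap.add_apply, ContinuousLinearMap.smul_apply,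
      smul_add, smul_smul, smul_sub]
    module
  -- main computation at y ∈ D
  have main : ∀ y ∈ D,
      fderiv ℝ (ω ((1 : ℝ), (0 : ℝ))) y ((0 : ℝ), (1 : ℝ))
          - fderiv ℝ (ω ((0 : ℝ), (1 : ℝ))) y ((1 : ℝ), (0 : ℝ)) =
        LinearMap.det ((fderiv ℝ (fun x => f y x) y₀).inverse).toLinearMap * π (M Y₀) := by
    intro y hy
    -- derivative of ω
    have hω_fderiv : ∀ e : ℝ × ℝ, fderiv ℝ (ω e) y =
        ((πL.comp (M.comp (ContinuousLinearMap.apply ℝ (ℝ × ℝ) e))).comp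
          ((-(ContinuousLinearMap.mulLeftRight ℝ _ (B y) (B y))).comp (fderiv ℝ A y))) := by
      intro e
      set L : ((ℝ × ℝ) →L[ℝ] (ℝ × ℝ)) →L[ℝ] ℝ :=
        πL.comp (M.comp (ContinuousLinearMap.apply ℝ (ℝ × ℝ) e)) with hLdef
      have he : ω e =ᶠ[nhds y] fun y' => L (B y') := by
        filter_upwards [hDopen.mem_nhds hy] with y' hy' using by
          show π (M ((fderiv ℝ (fun x => f y' x) y₀).inverse e)) = L (B y')
          rw [hπL, hA_eq y' hy', hBdef]
          simp only [ContinuousLinearMap.ringInverse_eq_inverse]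
          rfl
      have hd : HasFDerivAt (fun y' => L (B y'))
          (L.comp ((-(ContinuousLinearMap.mulLeftRight ℝ _ (B y) (B y))).comp (fderiv ℝ A y))) y :=
        L.hasFDerivAt.comp y (hB_deriv y hy)
      rw [he.fderiv_eq, hd.fderiv]
    -- second derivative of g := f y ·  at y₀, and K4
    have hg_cd : ContDiffOn ℝ k (fun x => f y x) D := by
      have h : (fun x => f y x) = F ∘ (fun x : ℝ × ℝ => ((y, x) : (ℝ × ℝ) × (ℝ × ℝ))) := rfl
      rw [h]
      exact hf_smooth.comp (contDiff_const.prodMk contDiff_id).contDiffOn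
        (fun x hx => Set.mk_mem_prod hy hx)
    have hg1 : ContDiffOn ℝ (k - 1 : ℕ) (fderiv ℝ (fun x => f y x)) D := by
      apply hg_cd.fderiv_of_isOpen hDopen
      exact_mod_cast (by exact_mod_cast Nat.le_of_eq (by omega) :
        (((k - 1 : ℕ) : ℕ∞) : WithTop ℕ∞) + 1 ≤ (((k : ℕ∞)) : WithTop ℕ∞))
    have hgd_diff : DifferentiableAt ℝ (fderiv ℝ (fun x => f y x)) y₀ :=
      (hg1.contDiffAt (hDopen.mem_nhds hy₀)).differentiableAt (by exact_mod_cast (by omega : k - 1 ≠ 0))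
    set H : (ℝ × ℝ) →L[ℝ] ((ℝ × ℝ) →L[ℝ] (ℝ × ℝ)) :=
      fderiv ℝ (fderiv ℝ (fun x => f y x)) y₀ with hHdef
    have hHsymm : ∀ v w, H v w = H w v := by
      apply second_derivative_symmetric_of_eventually (f := fun x => f y x)
        (f' := fderiv ℝ (fun x => f y x)) (x := y₀)
      · filter_upwards [hDopen.mem_nhds hy₀] with b hb using
          ((hpart y hy b hb).differentiableAt).hasFDerivAt
      · exact hgd_diff.hasFDerivAt
    -- K4 via differentiating K2 in b at y₀
    have hK4 : ∀ v w, fderiv ℝ A y (A y v) w = A y (C₀ v w) + H v w := by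
      have hΦ : HasFDerivAt (fun b => A (f y b)) ((fderiv ℝ A y).comp (A y)) y₀ := by
        have h1 : HasFDerivAt A (fderiv ℝ A y) (f y y₀) := by
          rw [hmul_one y hy]; exact (hA_diff y hy).hasFDerivAt
        exact h1.comp y₀ (hpart y hy y₀ hy₀)
      have hΨ : HasFDerivAt (fun b => (fderiv ℝ (fun x => f y x) b).comp (A b))
          ((compL ℝ (ℝ×ℝ) (ℝ×ℝ) (ℝ×ℝ) (fderiv ℝ (fun x => f y x) y₀)).comp C₀
            + ((compL ℝ (ℝ×ℝ) (ℝ×ℝ) (ℝ×ℝ)).flip (A y₀)).comp H) y₀ :=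
        HasFDerivAt.clm_comp hgd_diff.hasFDerivAt hC0
      have heq : (fun b => A (f y b)) =ᶠ[nhds y₀]
          (fun b => (fderiv ℝ (fun x => f y x) b).comp (A b)) := by
        filter_upwards [hDopen.mem_nhds hy₀] with b hb using by
          rw [hK2 y hy b hb, hAfun y hy b hb]
      have huniq := (hΨ.congr_of_eventuallyEq heq).unique hΦ
      intro v w
      have h := congrArg
        (fun T : (ℝ×ℝ) →L[ℝ] ((ℝ×ℝ) →L[ℝ] (ℝ×ℝ)) => T v w) huniq.symm
      simpa [hA0, hA_eq y hy, ContinuousLinearMap.add_apply, add_comm] using h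
    -- assemble
    have hBae : ∀ e : ℝ × ℝ, A y (B y e) = e := hAB y hy
    set v₁ : ℝ × ℝ := B y ((1:ℝ),(0:ℝ)) with hv1
    set v₂ : ℝ × ℝ := B y ((0:ℝ),(1:ℝ)) with hv2
    have hX : fderiv ℝ (ω ((1:ℝ),(0:ℝ))) y ((0:ℝ),(1:ℝ))
        - fderiv ℝ (ω ((0:ℝ),(1:ℝ))) y ((1:ℝ),(0:ℝ))
        = πL (M (C₀ v₁ v₂ - C₀ v₂ v₁)) := by
      rw [hω_fderiv, hω_fderiv]
      have h1 : fderiv ℝ A y ((0:ℝ),(1:ℝ)) v₁ = A y (C₀ v₂ v₁) + H v₂ v₁ := by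
        have := hK4 v₂ v₁; rwa [hBae] at this
      have h2 : fderiv ℝ A y ((1:ℝ),(0:ℝ)) v₂ = A y (C₀ v₁ v₂) + H v₁ v₂ := by
        have := hK4 v₁ v₂; rwa [hBae] at this
      simp only [ContinuousLinearMap.comp_apply, ContinuousLinearMap.apply_apply,
        ContinuousLinearMap.neg_apply, ContinuousLinearMap.mulLeftRight_apply,
        ContinuousLinearMap.mul_apply]
      rw [show (B y) ((fderiv ℝ A y) ((0:ℝ),(1:ℝ)) v₁) = B y (A y (C₀ v₂ v₁) + H v₂ v₁) by rw [← h1]]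
      rw [show (B y) ((fderiv ℝ A y) ((1:ℝ),(0:ℝ)) v₂) = B y (A y (C₀ v₁ v₂) + H v₁ v₂) by rw [← h2]]
      rw [map_add, map_add, hBA y hy, hBA y hy, hHsymm v₂ v₁]
      rw [← map_sub πL, ← map_sub M]
      congr 1
      congr 1
      abel
    -- determinant
    have hdet : LinearMap.det ((fderiv ℝ (fun x => f y x) y₀).inverse).toLinearMap
        = v₁.1 * v₂.2 - v₁.2 * v₂.1 := by
      have hBinv : (fderiv ℝ (fun x => f y x) y₀).inverse = B y := by
        rw [hA_eq y hy, hBdef, ContinuousLinearMap.ringInverse_eq_inverse]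
      rw [hBinv, ← LinearMap.det_toMatrix (Module.Basis.finTwoProd ℝ), Matrix.det_fin_two]
      simp [LinearMap.toMatrix_apply, Module.Basis.coe_finTwoProd_repr, Module.Basis.finTwoProd_zero,
        Module.Basis.finTwoProd_one, hv1, hv2]
      ring
    rw [hX, hanti v₁ v₂, ← hY, hdet, map_smul, hπL, map_smul, smul_eq_mul]
  exact ⟨main, fun h0 y hy => by rw [main y hy, h0, mul_zero]⟩
end

section
/- Let M be the linear map of ℝ² whose matrix in the canonical basis is ((π₂(Y₀), −π₁(Y₀)), (π₁(Y₀), π₂(Y₀))), and suppose g₁ : D → ℝ is a differentiable function whose differential at every y ∈ D is the linear form a ↦ π₁(M · (J₂f(y, y₀))⁻¹ · a). Then the ℝ-valued 1-form ω on D defined by ω(y)(a) := e^{g₁(y)} π₂(M · (J₂f(y, y₀))⁻¹ · a) is closed, i.e. for every y ∈ D, ∂_{e₂}[y ↦ ω(y)(e₁)](y) − ∂_{e₁}[y ↦ ω(y)(e₂)](y) = 0, where ∂_{e_j} denotes the directional derivative in the direction e_j. -/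
set_option maxHeartbeats 2000000
set_option synthInstance.maxHeartbeats 400000

open ContinuousLinearMap

/-- with `M` built from `Y₀` as in Lemma 4.4, if `g₁ : D → ℝ` has differential
`a ↦ π₁(M (J₂f(y,y₀))⁻¹ a)` at every `y ∈ D`, then the 1-form
`ω(y)(a) = e^{g₁(y)} π₂(M (J₂f(y,y₀))⁻¹ a)` is closed on `D`. -/
theorem stmt_10
    (k : ℕ) (hk : 2 ≤ k)
    (D : Set (ℝ × ℝ)) (hDopen : IsOpen D) (hDconn : IsConnected D)
    (hDsc : SimplyConnectedSpace D)
    (f : ℝ × ℝ → ℝ × ℝ → ℝ × ℝ) (y₀ : ℝ × ℝ) (hy₀ : y₀ ∈ D)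
    (hmul : ∀ a ∈ D, ∀ b ∈ D, f a b ∈ D)
    (hassoc : ∀ a ∈ D, ∀ b ∈ D, ∀ c ∈ D, f (f a b) c = f a (f b c))
    (hone_mul : ∀ a ∈ D, f y₀ a = a)
    (hmul_one : ∀ a ∈ D, f a y₀ = a)
    (inv : ℝ × ℝ → ℝ × ℝ)
    (hinv_mem : ∀ a ∈ D, inv a ∈ D)
    (hmul_inv : ∀ a ∈ D, f a (inv a) = y₀)
    (hinv_mul : ∀ a ∈ D, f (inv a) a = y₀)
    (hf_smooth : ContDiffOn ℝ k (fun p : (ℝ × ℝ) × (ℝ × ℝ) => f p.1 p.2) (D ×ˢ D))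
    (hinv_smooth : ContDiffOn ℝ k inv D)
    (g₁ : ℝ × ℝ → ℝ)
    (hg₁ : ∀ y ∈ D, DifferentiableAt ℝ g₁ y ∧
      ∀ a : ℝ × ℝ, fderiv ℝ g₁ y a =
        (let V : ℝ × ℝ → ℝ × ℝ → ℝ × ℝ := fun u y => fderiv ℝ (fun x => f y x) y₀ u
         let Y₀ : ℝ × ℝ :=
           fderiv ℝ (V ((0 : ℝ), (1 : ℝ))) y₀ (V ((1 : ℝ), (0 : ℝ)) y₀)
             - fderiv ℝ (V ((1 : ℝ), (0 : ℝ))) y₀ (V ((0 : ℝ), (1 : ℝ)) y₀)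
         let M : ℝ × ℝ → ℝ × ℝ :=
           fun b => (Y₀.2 * b.1 - Y₀.1 * b.2, Y₀.1 * b.1 + Y₀.2 * b.2)
         (M ((fderiv ℝ (fun x => f y x) y₀).inverse a)).1)) :
    let V : ℝ × ℝ → ℝ × ℝ → ℝ × ℝ := fun u y => fderiv ℝ (fun x => f y x) y₀ u
    let Y₀ : ℝ × ℝ :=
      fderiv ℝ (V ((0 : ℝ), (1 : ℝ))) y₀ (V ((1 : ℝ), (0 : ℝ)) y₀)
        - fderiv ℝ (V ((1 : ℝ), (0 : ℝ))) y₀ (V ((0 : ℝ), (1 : ℝ)) y₀)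
    let M : ℝ × ℝ → ℝ × ℝ := fun b => (Y₀.2 * b.1 - Y₀.1 * b.2, Y₀.1 * b.1 + Y₀.2 * b.2)
    let ω : ℝ × ℝ → ℝ × ℝ → ℝ :=
      fun e y => Real.exp (g₁ y) * (M ((fderiv ℝ (fun x => f y x) y₀).inverse e)).2
    ∀ y ∈ D,
      fderiv ℝ (ω ((1 : ℝ), (0 : ℝ))) y ((0 : ℝ), (1 : ℝ))
          - fderiv ℝ (ω ((0 : ℝ), (1 : ℝ))) y ((1 : ℝ), (0 : ℝ)) = 0 := by
  intro V Y₀ M ω y hy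
  have hko : (2 : WithTop ℕ∞) ≤ (k : WithTop ℕ∞) := by exact_mod_cast hk
  have hk1 : (1 : WithTop ℕ∞) + 1 ≤ (k : WithTop ℕ∞) := by
    rw [one_add_one_eq_two]; exact hko
  have hk1' : (1 : WithTop ℕ∞) ≤ (k : WithTop ℕ∞) := le_trans one_le_two hko
  set E1 : ℝ × ℝ := ((1 : ℝ), (0 : ℝ)) with hE1
  set E2 : ℝ × ℝ := ((0 : ℝ), (1 : ℝ)) with hE2
  set L : (ℝ × ℝ) → ((ℝ × ℝ) →L[ℝ] (ℝ × ℝ)) := fun z => fderiv ℝ (f z) y₀ with hLdef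
  have hDD : IsOpen (D ×ˢ D) := hDopen.prod hDopen
  have hfC : ∀ z ∈ D, ∀ x ∈ D, ContDiffAt ℝ k (f z) x := by
    intro z hz x hx
    have h1 : ContDiffAt ℝ k (fun p : (ℝ × ℝ) × (ℝ × ℝ) => f p.1 p.2) (z, x) :=
      hf_smooth.contDiffAt (hDD.mem_nhds ⟨hz, hx⟩)
    exact h1.comp x (contDiffAt_const.prodMk contDiffAt_id)
  have hfd : ∀ z ∈ D, ∀ x ∈ D, HasFDerivAt (f z) (fderiv ℝ (f z) x) x := fun z hz x hx =>
    ((hfC z hz x hx).differentiableAt (ne_of_gt (lt_of_lt_of_le zero_lt_one hk1'))).hasFDerivAt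
  have hfy₀ : ∀ z ∈ D, HasFDerivAt (f z) (L z) y₀ := fun z hz => hfd z hz y₀ hy₀
  have hLC : ∀ z ∈ D, ContDiffAt ℝ 1 L z := by
    intro z hz
    exact ContDiffAt.fderiv
      (hf_smooth.contDiffAt (hDD.mem_nhds ⟨hz, hy₀⟩)) contDiffAt_const hk1
  have hLdiff : ∀ z ∈ D, DifferentiableAt ℝ L z := fun z hz =>
    (hLC z hz).differentiableAt one_ne_zero
  have hLid : L y₀ = ContinuousLinearMap.id ℝ (ℝ × ℝ) := by
    have heq : f y₀ =ᶠ[nhds y₀] _root_.id := by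
      filter_upwards [hDopen.mem_nhds hy₀] with t ht using hone_mul t ht
    show fderiv ℝ (f y₀) y₀ = _
    rw [heq.fderiv_eq, fderiv_id]
  have hI : ∀ z ∈ D, ∀ x ∈ D, L (f z x) = (fderiv ℝ (f z) x).comp (L x) := by
    intro z hz x hx
    have heq : (fun t => f (f z x) t) =ᶠ[nhds y₀] fun t => f z (f x t) := by
      filter_upwards [hDopen.mem_nhds hy₀] with t ht using hassoc z hz x hx t ht
    have h1 : HasFDerivAt (f z) (fderiv ℝ (f z) x) (f x y₀) := by
      rw [hmul_one x hx]; exact hfd z hz x hx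
    have h2 : HasFDerivAt (fun t => f z (f x t)) ((fderiv ℝ (f z) x).comp (L x)) y₀ :=
      h1.comp y₀ (hfy₀ x hx)
    exact heq.fderiv_eq.trans h2.fderiv
  -- the derivative of L at y₀ and identification of Y₀
  set T₀ : (ℝ × ℝ) →L[ℝ] ((ℝ × ℝ) →L[ℝ] (ℝ × ℝ)) := fderiv ℝ L y₀ with hT₀def
  have hVfder : ∀ u : ℝ × ℝ, fderiv ℝ (V u) y₀ = T₀.flip u := by
    intro u
    have h1 : fderiv ℝ (fun w => L w u) y₀ =
        (L y₀).comp (fderiv ℝ (fun _ : ℝ × ℝ => u) y₀) + (fderiv ℝ L y₀).flip u :=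
      fderiv_clm_apply (hLdiff y₀ hy₀) (differentiableAt_const u)
    rw [fderiv_const_apply] at h1
    simpa using h1
  have hVy₀ : ∀ u : ℝ × ℝ, V u y₀ = u := fun u => by
    show L y₀ u = u
    rw [hLid]; rfl
  have hY₀' : Y₀ = T₀ E1 E2 - T₀ E2 E1 := by
    show fderiv ℝ (V E2) y₀ (V E1 y₀) - fderiv ℝ (V E1) y₀ (V E2 y₀) = _
    rw [hVfder, hVfder, hVy₀, hVy₀]
    rfl
  -- second derivative identity at y
  set A : (ℝ × ℝ) →L[ℝ] (ℝ × ℝ) := L y with hAdef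
  set T : (ℝ × ℝ) →L[ℝ] ((ℝ × ℝ) →L[ℝ] (ℝ × ℝ)) := fderiv ℝ L y with hTdef
  set S : (ℝ × ℝ) →L[ℝ] ((ℝ × ℝ) →L[ℝ] (ℝ × ℝ)) :=
    fderiv ℝ (fun x => fderiv ℝ (f y) x) y₀ with hSdef
  have hKC : ContDiffAt ℝ 1 (fun x => fderiv ℝ (f y) x) y₀ :=
    (hfC y hy y₀ hy₀).fderiv_right hk1
  have hchain : HasFDerivAt (fun x => L (f y x)) (T.comp A) y₀ := by
    have h1 : HasFDerivAt L T (f y y₀) := by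
      rw [hmul_one y hy]; exact (hLdiff y hy).hasFDerivAt
    exact h1.comp y₀ (hfy₀ y hy)
  have hprod : HasFDerivAt (fun x => (fderiv ℝ (f y) x).comp (L x))
      ((compL ℝ (ℝ × ℝ) (ℝ × ℝ) (ℝ × ℝ) (fderiv ℝ (f y) y₀)).comp T₀
        + ((compL ℝ (ℝ × ℝ) (ℝ × ℝ) (ℝ × ℝ)).flip (L y₀)).comp S) y₀ :=
    HasFDerivAt.clm_comp (hKC.differentiableAt one_ne_zero).hasFDerivAt
      (hLdiff y₀ hy₀).hasFDerivAt
  have hcongr : (fun x => (fderiv ℝ (f y) x).comp (L x)) =ᶠ[nhds y₀]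
      (fun x => L (f y x)) := by
    filter_upwards [hDopen.mem_nhds hy₀] with x hx using (hI y hy x hx).symm
  have hII : T.comp A = (compL ℝ (ℝ × ℝ) (ℝ × ℝ) (ℝ × ℝ) (fderiv ℝ (f y) y₀)).comp T₀
      + ((compL ℝ (ℝ × ℝ) (ℝ × ℝ) (ℝ × ℝ)).flip (L y₀)).comp S :=
    hchain.unique (hprod.congr_of_eventuallyEq hcongr.symm)
  have happ : ∀ v w : ℝ × ℝ, T (A v) w = A (T₀ v w) + S v w := by
    intro v w
    have h1 := DFunLike.congr_fun (DFunLike.congr_fun hII v) w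
    simpa [hLid] using h1
  have hsymm : ∀ v w : ℝ × ℝ, S v w = S w v :=
    ((hfC y hy y₀ hy₀).isSymmSndFDerivAt (by simpa [minSmoothness_of_isRCLikeNormedField] using hko)).eq
  have hstarY : T (A E1) E2 - T (A E2) E1 = A Y₀ := by
    rw [happ, happ, hY₀', map_sub, hsymm E1 E2]
    abel
  -- invertibility of A = L y
  have hinvy : inv y ∈ D := hinv_mem y hy
  set C : (ℝ × ℝ) →L[ℝ] (ℝ × ℝ) := fderiv ℝ (f (inv y)) y with hCdef
  have hCA : C.comp A = ContinuousLinearMap.id ℝ (ℝ × ℝ) := by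
    have h := hI (inv y) hinvy y hy
    rw [hinv_mul y hy] at h
    rw [← h, hLid]
  have hCA' : (C : (ℝ × ℝ) →ₗ[ℝ] (ℝ × ℝ)) * (A : (ℝ × ℝ) →ₗ[ℝ] (ℝ × ℝ)) = 1 :=
    LinearMap.ext fun x => DFunLike.congr_fun hCA x
  have hAC' : (A : (ℝ × ℝ) →ₗ[ℝ] (ℝ × ℝ)) * (C : (ℝ × ℝ) →ₗ[ℝ] (ℝ × ℝ)) = 1 :=
    mul_eq_one_comm.mpr hCA'
  have hAC : A.comp C = ContinuousLinearMap.id ℝ (ℝ × ℝ) :=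
    ContinuousLinearMap.ext fun x => LinearMap.congr_fun hAC' x
  have hAunit : IsUnit A := by
    refine ⟨⟨A, C, ?_, ?_⟩, rfl⟩
    · rw [ContinuousLinearMap.mul_def, hAC]; rfl
    · rw [ContinuousLinearMap.mul_def, hCA]; rfl
  obtain ⟨u, hu⟩ := hAunit
  set B : (ℝ × ℝ) →L[ℝ] (ℝ × ℝ) := A.inverse with hBdef
  have hBu : B = (↑u⁻¹ : (ℝ × ℝ) →L[ℝ] (ℝ × ℝ)) := by
    rw [hBdef, ← hu, ← ContinuousLinearMap.ringInverse_eq_inverse, Ring.inverse_unit]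
  have hBA : ∀ x : ℝ × ℝ, B (A x) = x := by
    intro x
    have : (B * A) x = (1 : (ℝ × ℝ) →L[ℝ] (ℝ × ℝ)) x := by
      rw [hBu, ← hu, u.inv_mul]
    simpa [ContinuousLinearMap.mul_apply] using this
  have hAB : ∀ x : ℝ × ℝ, A (B x) = x := by
    intro x
    have : (A * B) x = (1 : (ℝ × ℝ) →L[ℝ] (ℝ × ℝ)) x := by
      rw [hBu, ← hu, u.mul_inv]
    simpa [ContinuousLinearMap.mul_apply] using this
  -- derivative of w ↦ (L w).inverse at y
  have hBder : HasFDerivAt (fun w => (L w).inverse)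
      ((-(mulLeftRight ℝ ((ℝ × ℝ) →L[ℝ] (ℝ × ℝ)) B B)).comp T) y := by
    rw [hBu]
    have h1 : HasFDerivAt Ring.inverse
        (-(mulLeftRight ℝ ((ℝ × ℝ) →L[ℝ] (ℝ × ℝ)) ↑u⁻¹ ↑u⁻¹)) (L y) := by
      rw [← hAdef, ← hu]; exact hasFDerivAt_ringInverse u
    have h2 := h1.comp y (hLdiff y hy).hasFDerivAt
    simp only [Function.comp_def, ContinuousLinearMap.ringInverse_eq_inverse] at h2
    exact h2
  -- bilinear expansion of the bracket identity
  have key0 : ∀ v w : ℝ × ℝ, T (A v) w - T (A w) v = (v.1 * w.2 - v.2 * w.1) • (A Y₀) := by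
    rintro ⟨a, b⟩ ⟨c, d⟩
    have hv : ((a, b) : ℝ × ℝ) = a • E1 + b • E2 := by
      simp [hE1, hE2, Prod.ext_iff]
    have hw : ((c, d) : ℝ × ℝ) = c • E1 + d • E2 := by
      simp [hE1, hE2, Prod.ext_iff]
    show T (A (a, b)) (c, d) - T (A (c, d)) (a, b) = (a * d - b * c) • (A Y₀)
    rw [hv, hw]
    simp only [map_add, map_smul, ContinuousLinearMap.add_apply,
      ContinuousLinearMap.coe_smul', Pi.smul_apply]
    rw [← hstarY]
    module
  have hb1 : A (B E1) = E1 := hAB E1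
  have hb2 : A (B E2) = E2 := hAB E2
  have key : T E1 (B E2) - T E2 (B E1) =
      ((B E1).1 * (B E2).2 - (B E1).2 * (B E2).1) • (A Y₀) := by
    have h := key0 (B E1) (B E2)
    rwa [hb1, hb2] at h
  -- derivative of ω
  have hgd : DifferentiableAt ℝ g₁ y := (hg₁ y hy).1
  have hg₁' : ∀ a : ℝ × ℝ, fderiv ℝ g₁ y a = Y₀.2 * (B a).1 - Y₀.1 * (B a).2 := by
    intro a
    exact (hg₁ y hy).2 a
  set DB : (ℝ × ℝ) →L[ℝ] ((ℝ × ℝ) →L[ℝ] (ℝ × ℝ)) :=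
    (-(mulLeftRight ℝ ((ℝ × ℝ) →L[ℝ] (ℝ × ℝ)) B B)).comp T with hDBdef
  have hDBapp : ∀ a e : ℝ × ℝ, DB a e = -(B (T a (B e))) := by
    intro a e
    simp [hDBdef, ContinuousLinearMap.mul_apply]
  have hωd : ∀ e a : ℝ × ℝ, fderiv ℝ (ω e) y a =
      Real.exp (g₁ y) * ((Y₀.2 * (B a).1 - Y₀.1 * (B a).2) *
          (Y₀.1 * (B e).1 + Y₀.2 * (B e).2)
        - (Y₀.1 * (B (T a (B e))).1 + Y₀.2 * (B (T a (B e))).2)) := by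
    intro e a
    have hψ : HasFDerivAt (fun w => (L w).inverse e)
        (B.comp (0 : (ℝ × ℝ) →L[ℝ] (ℝ × ℝ)) + DB.flip e) y :=
      hBder.clm_apply (hasFDerivAt_const e y)
    have hφ : HasFDerivAt
        (fun w => Y₀.1 * ((L w).inverse e).1 + Y₀.2 * ((L w).inverse e).2)
        (Y₀.1 • ((fst ℝ ℝ ℝ).comp (B.comp (0 : (ℝ × ℝ) →L[ℝ] (ℝ × ℝ)) + DB.flip e))
          + Y₀.2 • ((snd ℝ ℝ ℝ).comp (B.comp (0 : (ℝ × ℝ) →L[ℝ] (ℝ × ℝ)) + DB.flip e))) y :=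
      (hψ.fst.const_mul Y₀.1).add (hψ.snd.const_mul Y₀.2)
    have hexp : HasFDerivAt (fun w => Real.exp (g₁ w))
        (Real.exp (g₁ y) • fderiv ℝ g₁ y) y := hgd.hasFDerivAt.exp
    have hmulr := hexp.mul hφ
    have hfda : fderiv ℝ (ω e) y =
        Real.exp (g₁ y) •
          (Y₀.1 • ((fst ℝ ℝ ℝ).comp (B.comp (0 : (ℝ × ℝ) →L[ℝ] (ℝ × ℝ)) + DB.flip e))
            + Y₀.2 • ((snd ℝ ℝ ℝ).comp (B.comp (0 : (ℝ × ℝ) →L[ℝ] (ℝ × ℝ)) + DB.flip e)))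
        + (Y₀.1 * (B e).1 + Y₀.2 * (B e).2) • (Real.exp (g₁ y) • fderiv ℝ g₁ y) :=
      hmulr.fderiv
    rw [hfda]
    simp only [ContinuousLinearMap.add_apply, ContinuousLinearMap.coe_smul', Pi.smul_apply,
      ContinuousLinearMap.coe_comp', Function.comp_apply, ContinuousLinearMap.zero_apply,
      ContinuousLinearMap.flip_apply, ContinuousLinearMap.coe_fst', ContinuousLinearMap.coe_snd',
      map_zero, smul_eq_mul, hDBapp, hg₁']
    simp only [Prod.fst_zero, Prod.snd_zero, Prod.fst_neg, Prod.snd_neg, zero_add]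
    ring
  -- final computation
  have hBAY : B (A Y₀) = Y₀ := hBA Y₀
  have hsub : B (T E1 (B E2)) - B (T E2 (B E1)) =
      ((B E1).1 * (B E2).2 - (B E1).2 * (B E2).1) • Y₀ := by
    rw [← map_sub, key, map_smul, hBAY]
  have h1 : (B (T E1 (B E2))).1 - (B (T E2 (B E1))).1 =
      ((B E1).1 * (B E2).2 - (B E1).2 * (B E2).1) * Y₀.1 := by
    have := congrArg Prod.fst hsub; simpa using this
  have h2 : (B (T E1 (B E2))).2 - (B (T E2 (B E1))).2 =
      ((B E1).1 * (B E2).2 - (B E1).2 * (B E2).1) * Y₀.2 := by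
    have := congrArg Prod.snd hsub; simpa using this
  rw [hωd E1 E2, hωd E2 E1]
  linear_combination (Real.exp (g₁ y) * Y₀.1) * h1 + (Real.exp (g₁ y) * Y₀.2) * h2
end

section
/- For every y ∈ ℝ² and every neighborhood V of (0, 0) in ℝ², there exist an integer n ≥ 1 and an element z ∈ V such that y equals the n-fold T-product z T z T ⋯ T z (n factors). In particular, every neighborhood of the identity generates the group (ℝ², T). -/

private lemma stmt_11_key (z1 z2 : ℝ) : ∀ m : ℕ,
    (fun w : ℝ × ℝ => (z1 + w.1, z2 + Real.exp z1 * w.2))^[m] ((0:ℝ), (0:ℝ))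
      = ((m:ℝ) * z1, z2 * ∑ k ∈ Finset.range m, Real.exp ((k:ℝ) * z1)) := by
  intro m
  induction m with
  | zero => simp
  | succ m ih =>
    rw [Function.iterate_succ_apply', ih]
    refine Prod.ext ?_ ?_
    · show z1 + (m:ℝ) * z1 = ((m+1 : ℕ):ℝ) * z1
      push_cast; ring
    · show z2 + Real.exp z1 * (z2 * ∑ k ∈ Finset.range m, Real.exp ((k:ℝ) * z1))
        = z2 * ∑ k ∈ Finset.range (m+1), Real.exp ((k:ℝ) * z1)
      rw [Finset.sum_range_succ', Nat.cast_zero, zero_mul, Real.exp_zero]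
      have h : ∀ k ∈ Finset.range m, Real.exp (((k+1 : ℕ):ℝ) * z1)
          = Real.exp z1 * Real.exp ((k:ℝ) * z1) := by
        intro k _
        rw [← Real.exp_add]
        congr 1
        push_cast; ring
      rw [Finset.sum_congr rfl h, ← Finset.mul_sum]
      ring

/-- for every `y ∈ ℝ²` and every neighborhood `V` of `(0,0)`, there are `n ≥ 1`
and `z ∈ V` such that `y` is the `n`-fold `T`-product `z T z T ⋯ T z`; hence every neighborhood
of the identity generates the group `(ℝ², T)`. -/
theorem stmt_11
    (y : ℝ × ℝ) (V : Set (ℝ × ℝ)) (hV : V ∈ nhds ((0 : ℝ), (0 : ℝ))) :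
    ∃ n : ℕ, 1 ≤ n ∧ ∃ z ∈ V,
      (fun w : ℝ × ℝ => (z.1 + w.1, z.2 + Real.exp z.1 * w.2))^[n] ((0 : ℝ), (0 : ℝ)) = y := by
  obtain ⟨ε, hε, hball⟩ := Metric.mem_nhds_iff.1 hV
  set c : ℝ := min 1 (Real.exp y.1) with hc
  have hc0 : 0 < c := lt_min one_pos (Real.exp_pos _)
  obtain ⟨n, hn⟩ := exists_nat_gt (max (max (|y.1| / ε) (|y.2| / (c * ε))) 1)
  have hn1' : (1:ℝ) < n := lt_of_le_of_lt (le_max_right _ _) hn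
  have hn1 : 1 ≤ n := by exact_mod_cast hn1'.le
  have hnpos : (0:ℝ) < n := lt_trans one_pos hn1'
  set z1 : ℝ := y.1 / n with hz1
  have hnz1 : (n:ℝ) * z1 = y.1 := by rw [hz1]; field_simp [hnpos.ne']
  have hterm : ∀ k ∈ Finset.range n, c ≤ Real.exp ((k:ℝ) * z1) := by
    intro k hk
    have hkn : (k:ℝ) ≤ n := by exact_mod_cast (Finset.mem_range.1 hk).le
    rcases le_or_gt 0 y.1 with h | h
    · refine le_trans (min_le_left _ _) (Real.one_le_exp ?_)
      have : 0 ≤ z1 := by positivity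
      positivity
    · refine le_trans (min_le_right _ _) (Real.exp_le_exp.2 ?_)
      have hz1neg : z1 ≤ 0 := le_of_lt (div_neg_of_neg_of_pos h hnpos)
      calc y.1 = (n:ℝ) * z1 := hnz1.symm
        _ ≤ (k:ℝ) * z1 := mul_le_mul_of_nonpos_right hkn hz1neg
  set S : ℝ := ∑ k ∈ Finset.range n, Real.exp ((k:ℝ) * z1) with hSdef
  have hS : (n:ℝ) * c ≤ S := by
    calc (n:ℝ) * c = ∑ _k ∈ Finset.range n, c := by
          rw [Finset.sum_const, Finset.card_range, nsmul_eq_mul]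
      _ ≤ S := Finset.sum_le_sum hterm
  have hSpos : 0 < S := lt_of_lt_of_le (by positivity) hS
  set z2 : ℝ := y.2 / S with hz2
  have hz2S : z2 * S = y.2 := by rw [hz2]; field_simp [hSpos.ne']
  refine ⟨n, hn1, ⟨(z1, z2), ?_, ?_⟩⟩
  · apply hball
    rw [Metric.mem_ball, Prod.dist_eq]
    have h1 : dist z1 0 < ε := by
      rw [Real.dist_eq, sub_zero, hz1, abs_div, abs_of_pos hnpos, div_lt_iff₀ hnpos]
      have : |y.1| / ε < n := lt_of_le_of_lt (le_trans (le_max_left _ _) (le_max_left _ _)) hn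
      calc |y.1| = |y.1| / ε * ε := by field_simp
        _ < n * ε := by exact mul_lt_mul_of_pos_right this hε
        _ = ε * n := mul_comm _ _
    have h2 : dist z2 0 < ε := by
      rw [Real.dist_eq, sub_zero, hz2, abs_div, abs_of_pos hSpos]
      have hnc : |y.2| / (c * ε) < n := lt_of_le_of_lt (le_trans (le_max_right _ _) (le_max_left _ _)) hn
      have : |y.2| < S * ε := by
        calc |y.2| = |y.2| / (c * ε) * (c * ε) := by field_simp
          _ < n * (c * ε) := mul_lt_mul_of_pos_right hnc (by positivity)
          _ = (n * c) * ε := by ring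
          _ ≤ S * ε := mul_le_mul_of_nonneg_right hS hε.le
      rwa [div_lt_iff₀ hSpos, mul_comm]
    exact max_lt h1 h2
  · rw [stmt_11_key z1 z2 n, hnz1, ← hSdef, hz2S]
end

section
/- The set of homeomorphisms h : I → I such that for every t ≥ 0 the pushforward of μ_t under h equals μ_t contains at most two elements: the identity map and at most one decreasing homeomorphism. In particular this set is finite (hence discrete). -/
open MeasureTheory

/-- Dichotomy: a continuous injective map on an order-connected set of reals is
strictly monotone or strictly antitone. -/
lemma stmt13_dich (I : Set ℝ) (hIconn : I.OrdConnected) (f : ℝ → ℝ)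
    (hc : ContinuousOn f I) (hi : Set.InjOn f I) :
    StrictMonoOn f I ∨ StrictAntiOn f I := by
  by_contra hcon
  push_neg at hcon
  obtain ⟨hm, ha⟩ := hcon
  simp only [StrictMonoOn, StrictAntiOn] at hm ha
  push_neg at hm ha
  obtain ⟨a, haI, b, hbI, hab, hfab⟩ := hm
  obtain ⟨c, hcI, d, hdI, hcd, hfcd⟩ := ha
  set m := min a c with hm'
  set M := max b d with hM'
  have hmI : m ∈ I := by rcases min_choice a c with h | h <;> rw [hm', h] <;> assumption
  have hMI : M ∈ I := by rcases max_choice b d with h | h <;> rw [hM', h] <;> assumption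
  have hsub : Set.Icc m M ⊆ I := hIconn.out hmI hMI
  have hmM : m ≤ M := le_trans (min_le_left a c) (hab.le.trans (le_max_left b d))
  have haIcc : a ∈ Set.Icc m M := ⟨min_le_left a c, hab.le.trans (le_max_left b d)⟩
  have hbIcc : b ∈ Set.Icc m M := ⟨(min_le_left a c).trans hab.le, le_max_left b d⟩
  have hcIcc : c ∈ Set.Icc m M := ⟨min_le_right a c, hcd.le.trans (le_max_right b d)⟩
  have hdIcc : d ∈ Set.Icc m M := ⟨(min_le_right a c).trans hcd.le, le_max_right b d⟩
  rcases ContinuousOn.strictMonoOn_of_injOn_Icc' hmM (hc.mono hsub) (hi.mono hsub) with H | H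
  · exact absurd (H haIcc hbIcc hab) (not_lt.mpr hfab)
  · exact absurd (H hcIcc hdIcc hcd) (not_lt.mpr hfcd)

/-- Full support: no nonempty open subinterval of `I` is null for all `μ t`. -/
lemma stmt13_gap (I : Set ℝ) (hIconn : I.OrdConnected) (μ : ℝ → Measure ℝ)
    (hfull : ∀ z ∈ I, ∀ ε > (0 : ℝ), ∃ t : ℝ, 0 ≤ t ∧
      0 < μ t (Set.Ioo (z - ε) (z + ε) ∩ I))
    {a b : ℝ} (ha : a ∈ I) (hb : b ∈ I) (hab : a < b)
    (h0 : ∀ t : ℝ, 0 ≤ t → μ t (Set.Ioo a b ∩ I) = 0) : False := by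
  have hzI : (a + b) / 2 ∈ I := hIconn.out ha hb ⟨by linarith, by linarith⟩
  obtain ⟨t, ht, hpos⟩ := hfull ((a + b) / 2) hzI ((b - a) / 2) (by linarith)
  have heq : Set.Ioo ((a + b) / 2 - (b - a) / 2) ((a + b) / 2 + (b - a) / 2) = Set.Ioo a b := by
    have h1 : (a + b) / 2 - (b - a) / 2 = a := by ring
    have h2 : (a + b) / 2 + (b - a) / 2 = b := by ring
    rw [h1, h2]
  rw [heq, h0 t ht] at hpos
  exact lt_irrefl _ hpos

/-- A measure-preserving map is a.e.-measurable, and crop to `I`. -/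
lemma stmt13_preimage (I : Set ℝ) (hIopen : IsOpen I) (ν : Measure ℝ)
    [IsProbabilityMeasure ν] (hsupp : ν Iᶜ = 0) (h : ℝ → ℝ)
    (hmap : Measure.map h ν = ν) (c : ℝ) :
    ν (h ⁻¹' Set.Iic c ∩ I) = ν (Set.Iic c ∩ I) := by
  have hae : AEMeasurable h ν := by
    by_contra hc
    rw [Measure.map_of_not_aemeasurable hc] at hmap
    have : (0 : Measure ℝ) Set.univ = ν Set.univ := by rw [hmap]
    simp [measure_univ] at this
  have crop : ∀ A : Set ℝ, ν A = ν (A ∩ I) := by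
    intro A
    have h1 : ν (A ∩ I) + ν (A \ I) = ν A := measure_inter_add_diff A hIopen.measurableSet
    have h2 : ν (A \ I) = 0 :=
      le_antisymm (le_trans (measure_mono (Set.diff_subset_compl A I)) hsupp.le) zero_le
    rw [h2, add_zero] at h1
    exact h1.symm
  calc ν (h ⁻¹' Set.Iic c ∩ I) = ν (h ⁻¹' Set.Iic c) := (crop _).symm
    _ = (Measure.map h ν) (Set.Iic c) := (Measure.map_apply_of_aemeasurable hae measurableSet_Iic).symm
    _ = ν (Set.Iic c) := by rw [hmap]
    _ = ν (Set.Iic c ∩ I) := crop _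

/-- If the `Iic`-masses inside `I` at two points of `I` agree for all times, the points
carry no mass in between, contradicting full support. -/
lemma stmt13_cancelIic (I : Set ℝ) (hIopen : IsOpen I) (hIconn : I.OrdConnected)
    (μ : ℝ → Measure ℝ)
    (hprob : ∀ t : ℝ, 0 ≤ t → IsProbabilityMeasure (μ t))
    (hfull : ∀ z ∈ I, ∀ ε > (0 : ℝ), ∃ t : ℝ, 0 ≤ t ∧
      0 < μ t (Set.Ioo (z - ε) (z + ε) ∩ I))
    {a b : ℝ} (ha : a ∈ I) (hb : b ∈ I) (hab : a < b)
    (heq : ∀ t : ℝ, 0 ≤ t → μ t (Set.Iic a ∩ I) = μ t (Set.Iic b ∩ I)) : False := by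
  apply stmt13_gap I hIconn μ hfull ha hb hab
  intro t ht
  haveI := hprob t ht
  have hsplit : Set.Iic b ∩ I = (Set.Iic a ∩ I) ∪ (Set.Ioc a b ∩ I) := by
    rw [← Set.union_inter_distrib_right, Set.Iic_union_Ioc_eq_Iic hab.le]
  have hdisj : Disjoint (Set.Iic a ∩ I) (Set.Ioc a b ∩ I) := by
    rw [Set.disjoint_left]
    rintro y ⟨hy1, -⟩ ⟨hy2, -⟩
    exact absurd hy2.1 (not_lt.mpr hy1)
  have hmeas : MeasurableSet (Set.Ioc a b ∩ I) :=
    measurableSet_Ioc.inter hIopen.measurableSet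
  have h1 : μ t (Set.Iic b ∩ I) = μ t (Set.Iic a ∩ I) + μ t (Set.Ioc a b ∩ I) := by
    rw [hsplit, measure_union hdisj hmeas]
  rw [← heq t ht] at h1
  have h2 : μ t (Set.Iic a ∩ I) + 0 = μ t (Set.Iic a ∩ I) + μ t (Set.Ioc a b ∩ I) := by
    rw [add_zero]; exact h1
  have h3 : μ t (Set.Ioc a b ∩ I) = 0 :=
    ((ENNReal.add_right_inj (measure_ne_top _ _)).mp h2).symm
  refine le_antisymm (le_trans (measure_mono ?_) h3.le) zero_le
  exact Set.inter_subset_inter_left I Set.Ioo_subset_Ioc_self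

/-- Same with `Ici` in place of `Iic`. -/
lemma stmt13_cancelIci (I : Set ℝ) (hIopen : IsOpen I) (hIconn : I.OrdConnected)
    (μ : ℝ → Measure ℝ)
    (hprob : ∀ t : ℝ, 0 ≤ t → IsProbabilityMeasure (μ t))
    (hfull : ∀ z ∈ I, ∀ ε > (0 : ℝ), ∃ t : ℝ, 0 ≤ t ∧
      0 < μ t (Set.Ioo (z - ε) (z + ε) ∩ I))
    {a b : ℝ} (ha : a ∈ I) (hb : b ∈ I) (hab : a < b)
    (heq : ∀ t : ℝ, 0 ≤ t → μ t (Set.Ici a ∩ I) = μ t (Set.Ici b ∩ I)) : False := by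
  apply stmt13_gap I hIconn μ hfull ha hb hab
  intro t ht
  haveI := hprob t ht
  have hsplit : Set.Ici a ∩ I = (Set.Ico a b ∩ I) ∪ (Set.Ici b ∩ I) := by
    rw [← Set.union_inter_distrib_right, Set.Ico_union_Ici_eq_Ici hab.le]
  have hdisj : Disjoint (Set.Ico a b ∩ I) (Set.Ici b ∩ I) := by
    rw [Set.disjoint_left]
    rintro y ⟨hy1, -⟩ ⟨hy2, -⟩
    exact absurd hy1.2 (not_lt.mpr hy2)
  have hmeas : MeasurableSet (Set.Ici b ∩ I) :=
    measurableSet_Ici.inter hIopen.measurableSet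
  have h1 : μ t (Set.Ici a ∩ I) = μ t (Set.Ico a b ∩ I) + μ t (Set.Ici b ∩ I) := by
    rw [hsplit, measure_union hdisj hmeas]
  rw [heq t ht] at h1
  have h2 : 0 + μ t (Set.Ici b ∩ I) = μ t (Set.Ico a b ∩ I) + μ t (Set.Ici b ∩ I) := by
    rw [zero_add]; exact h1
  have h3 : μ t (Set.Ico a b ∩ I) = 0 := by
    rw [add_comm 0, add_comm _ (μ t (Set.Ici b ∩ I))] at h2
    exact ((ENNReal.add_right_inj (measure_ne_top _ _)).mp h2).symm
  refine le_antisymm (le_trans (measure_mono ?_) h3.le) zero_le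
  exact Set.inter_subset_inter_left I Set.Ioo_subset_Ico_self

/-- The key mass identity for a strictly monotone invariant map. -/
lemma stmt13_monoEq (I : Set ℝ) (hIopen : IsOpen I) (hIconn : I.OrdConnected)
    (μ : ℝ → Measure ℝ)
    (hprob : ∀ t : ℝ, 0 ≤ t → IsProbabilityMeasure (μ t))
    (hsupp : ∀ t : ℝ, 0 ≤ t → μ t Iᶜ = 0)
    (hfull : ∀ z ∈ I, ∀ ε > (0 : ℝ), ∃ t : ℝ, 0 ≤ t ∧
      0 < μ t (Set.Ioo (z - ε) (z + ε) ∩ I))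
    (h : ℝ → ℝ) (hbij : Set.BijOn h I I) (hmono : StrictMonoOn h I)
    (hmap : ∀ t : ℝ, 0 ≤ t → Measure.map h (μ t) = μ t) :
    Set.EqOn h id I := by
  intro x hx
  by_contra hne
  obtain ⟨x', hx', hhx'⟩ := hbij.surjOn hx
  have hxx' : x' ≠ x := by
    rintro rfl; exact hne hhx'
  have key : ∀ t : ℝ, 0 ≤ t → μ t (Set.Iic x' ∩ I) = μ t (Set.Iic x ∩ I) := by
    intro t ht
    haveI := hprob t ht
    have hset : h ⁻¹' Set.Iic x ∩ I = Set.Iic x' ∩ I := by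
      ext y
      simp only [Set.mem_inter_iff, Set.mem_preimage, Set.mem_Iic, and_congr_left_iff]
      intro hy
      rw [← hhx', hmono.le_iff_le hy hx']
    rw [← hset]
    exact stmt13_preimage I hIopen (μ t) (hsupp t ht) h (hmap t ht) x
  rcases lt_or_gt_of_ne hxx' with hlt | hlt
  · exact stmt13_cancelIic I hIopen hIconn μ hprob hfull hx' hx hlt key
  · exact stmt13_cancelIic I hIopen hIconn μ hprob hfull hx hx' hlt (fun t ht => (key t ht).symm)

/-- For a strictly antitone invariant map: mass identity. -/
lemma stmt13_antiKey (I : Set ℝ) (hIopen : IsOpen I)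
    (μ : ℝ → Measure ℝ)
    (hprob : ∀ t : ℝ, 0 ≤ t → IsProbabilityMeasure (μ t))
    (hsupp : ∀ t : ℝ, 0 ≤ t → μ t Iᶜ = 0)
    (h : ℝ → ℝ) (hanti : StrictAntiOn h I)
    (hmap : ∀ t : ℝ, 0 ≤ t → Measure.map h (μ t) = μ t)
    {y : ℝ} (hy : y ∈ I) :
    ∀ t : ℝ, 0 ≤ t → μ t (Set.Ici y ∩ I) = μ t (Set.Iic (h y) ∩ I) := by
  intro t ht
  haveI := hprob t ht
  have hset : h ⁻¹' Set.Iic (h y) ∩ I = Set.Ici y ∩ I := by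
    ext z
    simp only [Set.mem_inter_iff, Set.mem_preimage, Set.mem_Iic, Set.mem_Ici,
      and_congr_left_iff]
    intro hz
    rw [hanti.le_iff_ge hz hy]
  rw [← hset]
  exact stmt13_preimage I hIopen (μ t) (hsupp t ht) h (hmap t ht) (h y)

/-- the set of homeomorphisms `h` of the open interval `I` leaving every `μ_t`
invariant contains at most two elements: every such `h` coincides on `I` either with the
identity or with a single decreasing homeomorphism `h₀`; in particular this set is finite. -/
theorem stmt_13
    (I : Set ℝ) (hIopen : IsOpen I) (hIne : I.Nonempty) (hIconn : I.OrdConnected)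
    (μ : ℝ → Measure ℝ)
    (hprob : ∀ t : ℝ, 0 ≤ t → IsProbabilityMeasure (μ t))
    (hsupp : ∀ t : ℝ, 0 ≤ t → μ t Iᶜ = 0)
    (hfull : ∀ z ∈ I, ∀ ε > (0 : ℝ), ∃ t : ℝ, 0 ≤ t ∧
      0 < μ t (Set.Ioo (z - ε) (z + ε) ∩ I)) :
    ∃ h₀ : ℝ → ℝ,
      ∀ h : ℝ → ℝ,
        Set.BijOn h I I → ContinuousOn h I →
        (∀ t : ℝ, 0 ≤ t → Measure.map h (μ t) = μ t) →
        Set.EqOn h id I ∨ (StrictAntiOn h I ∧ Set.EqOn h h₀ I) := by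
  classical
  by_cases hP : ∃ g : ℝ → ℝ,
      Set.BijOn g I I ∧ StrictAntiOn g I ∧ ∀ t : ℝ, 0 ≤ t → Measure.map g (μ t) = μ t
  · obtain ⟨hgbij, hganti, hgmap⟩ := hP.choose_spec
    refine ⟨hP.choose, ?_⟩
    intro h hbij hcont hmap
    rcases stmt13_dich I hIconn h hcont hbij.injOn with hmono | hanti
    · exact Or.inl (stmt13_monoEq I hIopen hIconn μ hprob hsupp hfull h hbij hmono hmap)
    · refine Or.inr ⟨hanti, ?_⟩
      -- uniqueness of the antitone map
      intro y hy
      have hxI : h y ∈ I := hbij.mapsTo hy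
      obtain ⟨x₂, hx₂, hhx₂⟩ := hgbij.surjOn hxI
      have key1 := stmt13_antiKey I hIopen μ hprob hsupp h hanti hmap hy
      have key2 := stmt13_antiKey I hIopen μ hprob hsupp hP.choose hganti hgmap hx₂
      rw [hhx₂] at key2
      have hyx₂ : y = x₂ := by
        by_contra hne
        rcases lt_or_gt_of_ne hne with hlt | hlt
        · exact stmt13_cancelIci I hIopen hIconn μ hprob hfull hy hx₂ hlt
            (fun t ht => (key1 t ht).trans (key2 t ht).symm)
        · exact stmt13_cancelIci I hIopen hIconn μ hprob hfull hx₂ hy hlt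
            (fun t ht => (key2 t ht).trans (key1 t ht).symm)
      exact hhx₂.symm.trans (congrArg _ hyx₂.symm)
  · refine ⟨id, ?_⟩
    intro h hbij hcont hmap
    rcases stmt13_dich I hIconn h hcont hbij.injOn with hmono | hanti
    · exact Or.inl (stmt13_monoEq I hIopen hIconn μ hprob hsupp hfull h hbij hmono hmap)
    · exact absurd ⟨h, hbij, hanti, hmap⟩ hP
end

section
/- Assume E is connected. If there exists y ∈ E such that y lies in the topological interior of S(y), then S(y₀) = E. -/
open MeasureTheory Metric

/-- Auxiliary: positivity of the measure of a ball persists for nearby times, via weak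
continuity of `t ↦ κ t y₀`. -/
lemma aux_persist
    {E : Type*} [MetricSpace E] [MeasurableSpace E] [BorelSpace E]
    (κ : ℝ → ProbabilityTheory.Kernel E E)
    (hMarkov : ∀ t : ℝ, ProbabilityTheory.IsMarkovKernel (κ t))
    (y₀ u : E)
    (hweak : ∀ g : BoundedContinuousFunction E ℝ,
      ContinuousOn (fun t : ℝ => ∫ x, g x ∂(κ t y₀)) (Set.Ici (0 : ℝ)))
    (t₀ : ℝ) (ht₀ : 0 ≤ t₀) (ε : ℝ) (hε : 0 < ε)
    (hpos : 0 < κ t₀ y₀ (ball u (ε / 2))) :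
    ∃ δ > 0, ∀ t, 0 ≤ t → |t - t₀| < δ → 0 < κ t y₀ (ball u ε) := by
  have hgc : Continuous fun x : E => max 0 (2 - (2 / ε) * dist x u) :=
    continuous_const.max (continuous_const.sub (continuous_const.mul
      (continuous_id.dist continuous_const)))
  set g : BoundedContinuousFunction E ℝ :=
    BoundedContinuousFunction.ofNormedAddCommGroup
      (fun x => max 0 (2 - (2 / ε) * dist x u)) hgc 2 (by
        intro x
        rw [Real.norm_eq_abs, abs_of_nonneg (le_max_left _ _)]
        refine max_le (by norm_num) ?_
        have : 0 ≤ (2 / ε) * dist x u := by positivity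
        linarith) with hg
  have hg_apply : ∀ x, g x = max 0 (2 - (2 / ε) * dist x u) := fun x => rfl
  have hone : ∀ x ∈ ball u (ε / 2), (1 : ℝ) ≤ g x := by
    intro x hx
    rw [hg_apply]
    refine le_max_of_le_right ?_
    have hd : dist x u < ε / 2 := mem_ball.mp hx
    have : (2 / ε) * dist x u ≤ 1 := by
      rw [div_mul_eq_mul_div, div_le_one hε]
      nlinarith [dist_nonneg (x := x) (y := u)]
    linarith
  have hzero : ∀ x, x ∉ ball u ε → g x = 0 := by
    intro x hx
    rw [hg_apply, max_eq_left]
    have hd : ε ≤ dist x u := by simpa [mem_ball, not_lt] using hx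
    have : (2 : ℝ) ≤ (2 / ε) * dist x u := by
      rw [div_mul_eq_mul_div, le_div_iff₀ hε]; nlinarith
    linarith
  have hg_nonneg : ∀ x, 0 ≤ g x := fun x => le_max_left _ _
  have hg_le : ∀ x, g x ≤ 2 := by
    intro x
    rw [hg_apply]
    refine max_le (by norm_num) ?_
    have : 0 ≤ (2 / ε) * dist x u := by positivity
    linarith
  haveI : ∀ t : ℝ, IsProbabilityMeasure (κ t y₀) := fun t => (hMarkov t).isProbabilityMeasure y₀
  have hint : ∀ t : ℝ, Integrable (fun x => g x) (κ t y₀) := fun t => g.integrable _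
  have hI₀ : 0 < ∫ x, g x ∂(κ t₀ y₀) := by
    have hind : Integrable ((ball u (ε / 2)).indicator fun _ => (1 : ℝ)) (κ t₀ y₀) :=
      (integrable_const (1 : ℝ)).indicator measurableSet_ball
    have hmono : ∫ x, (ball u (ε / 2)).indicator (fun _ => (1 : ℝ)) x ∂(κ t₀ y₀)
        ≤ ∫ x, g x ∂(κ t₀ y₀) := by
      refine integral_mono hind (hint t₀) ?_
      intro x
      by_cases hx : x ∈ ball u (ε / 2)
      · simpa [Set.indicator_of_mem hx] using hone x hx
      · simpa [Set.indicator_of_notMem hx] using hg_nonneg x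
    have heq : ∫ x, (ball u (ε / 2)).indicator (fun _ => (1 : ℝ)) x ∂(κ t₀ y₀)
        = (κ t₀ y₀ (ball u (ε / 2))).toReal := by
      rw [integral_indicator_const (1 : ℝ) measurableSet_ball]; simp; rfl
    rw [heq] at hmono
    exact lt_of_lt_of_le (ENNReal.toReal_pos hpos.ne' (measure_ne_top _ _)) hmono
  have hkey : ∀ t : ℝ, 0 < ∫ x, g x ∂(κ t y₀) → 0 < κ t y₀ (ball u ε) := by
    intro t hI
    by_contra h
    have hz : κ t y₀ (ball u ε) = 0 := by simpa [pos_iff_ne_zero] using h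
    have hub : ∫ x, g x ∂(κ t y₀)
        ≤ ∫ x, (ball u ε).indicator (fun _ => (2 : ℝ)) x ∂(κ t y₀) := by
      refine integral_mono (hint t) ((integrable_const (2 : ℝ)).indicator measurableSet_ball) ?_
      intro x
      by_cases hx : x ∈ ball u ε
      · simpa [Set.indicator_of_mem hx] using hg_le x
      · simp [Set.indicator_of_notMem hx, hzero x hx]
    rw [integral_indicator_const (2 : ℝ) measurableSet_ball, Measure.real, hz] at hub
    simp at hub
    linarith
  have hmem : {t : ℝ | 0 < ∫ x, g x ∂(κ t y₀)} ∈ nhdsWithin t₀ (Set.Ici 0) :=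
    (hweak g) t₀ ht₀ (isOpen_Ioi.mem_nhds hI₀)
  rcases Metric.mem_nhdsWithin_iff.mp hmem with ⟨δ, hδ, hsub⟩
  refine ⟨δ, hδ, fun t ht hdist => ?_⟩
  exact hkey t (hsub ⟨by rwa [mem_ball, Real.dist_eq], ht⟩)

/-- for a self-similar Markov marginal family `(κ_t)` on a connected metric space
`E`, if some point `y` lies in the interior of its support set `S(y)`, then `S(y₀) = E`. -/
theorem stmt_14
    {E : Type*} [MetricSpace E] [ConnectedSpace E] [MeasurableSpace E] [BorelSpace E]
    (κ : ℝ → ProbabilityTheory.Kernel E E)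
    (hMarkov : ∀ t : ℝ, ProbabilityTheory.IsMarkovKernel (κ t))
    (hCK : ∀ t : ℝ, 0 ≤ t → ∀ s : ℝ, 0 ≤ s → ∀ y : E, ∀ A : Set E, MeasurableSet A →
      κ (t + s) y A = ∫⁻ w, κ s w A ∂(κ t y))
    (y₀ : E) (f : E → E → E) (finv : E → E → E)
    (hf_cont : Continuous fun p : E × E => f p.1 p.2)
    (hfinv_cont : Continuous fun p : E × E => finv p.1 p.2)
    (hleft : ∀ y x : E, finv y (f y x) = x)
    (hright : ∀ y x : E, f y (finv y x) = x)
    (hf_y₀ : ∀ y : E, f y y₀ = y)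
    (c : E → ℝ) (hc_cont : Continuous c) (hc_pos : ∀ y : E, 0 < c y)
    (hss : ∀ y : E, ∀ t : ℝ, 0 ≤ t →
      κ t y = Measure.map (f y) (κ (c y * t) y₀))
    (hweak : ∀ g : BoundedContinuousFunction E ℝ,
      ContinuousOn (fun t : ℝ => ∫ x, g x ∂(κ t y₀)) (Set.Ici (0 : ℝ)))
    (hy : ∃ y : E, y ∈ interior
      {z : E | ∀ ε > (0 : ℝ), ∃ t : ℝ, 0 ≤ t ∧ 0 < κ t y (Metric.ball z ε)}) :
    {z : E | ∀ ε > (0 : ℝ), ∃ t : ℝ, 0 ≤ t ∧ 0 < κ t y₀ (Metric.ball z ε)} = Set.univ := by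
  set S₀ : Set E := {z : E | ∀ ε > (0 : ℝ), ∃ t : ℝ, 0 ≤ t ∧ 0 < κ t y₀ (Metric.ball z ε)}
    with hS₀def
  have hfw_cont : ∀ w : E, Continuous (f w) := fun w => hf_cont.comp (Continuous.prodMk_right w)
  have hfinvw_cont : ∀ w : E, Continuous (finv w) := fun w => hfinv_cont.comp (Continuous.prodMk_right w)
  have hfw_meas : ∀ w : E, Measurable (f w) := fun w => (hfw_cont w).measurable
  have hmap : ∀ w : E, ∀ t : ℝ, 0 ≤ t → ∀ A : Set E, MeasurableSet A →
      κ t w A = κ (c w * t) y₀ ((f w) ⁻¹' A) := by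
    intro w t ht A hA
    rw [hss w t ht, Measure.map_apply (hfw_meas w) hA]
  -- Step B : y₀ lies in the interior of S₀
  obtain ⟨y, hy⟩ := hy
  have hSy_sub : ∀ z, z ∈ {z : E | ∀ ε > (0 : ℝ), ∃ t : ℝ, 0 ≤ t ∧ 0 < κ t y (Metric.ball z ε)} →
      finv y z ∈ S₀ := by
    intro z hz ε hε
    obtain ⟨ε', hε', hball⟩ := Metric.continuous_iff.mp (hfinvw_cont y) z ε hε
    obtain ⟨t, ht, hpos⟩ := hz ε' hε'
    refine ⟨c y * t, mul_nonneg (hc_pos y).le ht, ?_⟩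
    rw [hmap y t ht _ measurableSet_ball] at hpos
    refine lt_of_lt_of_le hpos (measure_mono ?_)
    intro x hx
    have hx' : dist (finv y (f y x)) (finv y z) < ε := hball (f y x) hx
    rw [hleft] at hx'
    exact mem_ball.mpr hx'
  have hy₀int : y₀ ∈ interior S₀ := by
    refine mem_interior.mpr ⟨(f y) ⁻¹' (interior {z : E | ∀ ε > (0 : ℝ),
        ∃ t : ℝ, 0 ≤ t ∧ 0 < κ t y (Metric.ball z ε)}), ?_, ?_, ?_⟩
    · intro x hx
      have h1 := hSy_sub _ (interior_subset hx)
      rwa [hleft] at h1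
    · exact (hfw_cont y).isOpen_preimage _ isOpen_interior
    · rw [Set.mem_preimage, hf_y₀ y]
      exact hy
  -- Step C : key stability lemma
  have hkey : ∀ z ∈ S₀, ∀ u ∈ S₀, f z u ∈ S₀ := by
    intro z hz u hu ε hε
    have hop : IsOpen {p : E × E | f p.1 p.2 ∈ Metric.ball (f z u) ε} :=
      Metric.isOpen_ball.preimage hf_cont
    obtain ⟨δ₁, hδ₁, hδ₁sub⟩ := Metric.isOpen_iff.mp hop (z, u)
      (by simpa using hε)
    have hprod : ∀ w ∈ Metric.ball z δ₁, ∀ x ∈ Metric.ball u δ₁,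
        f w x ∈ Metric.ball (f z u) ε := by
      intro w hw x hx
      exact hδ₁sub ((ball_prod_same z u δ₁) ▸ Set.mk_mem_prod hw hx)
    obtain ⟨t₀, ht₀, hpos₀⟩ := hu (δ₁ / 2) (by linarith)
    obtain ⟨δ, hδ, hper⟩ := aux_persist κ hMarkov y₀ u hweak t₀ ht₀ δ₁ hδ₁ hpos₀
    set s := t₀ / c z with hs
    have hs0 : 0 ≤ s := div_nonneg ht₀ (hc_pos z).le
    have hczs : c z * s = t₀ := by
      rw [hs, mul_comm]
      exact div_mul_cancel₀ t₀ (hc_pos z).ne'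
    set W : Set E := {w : E | dist (c w * s) t₀ < δ} ∩ Metric.ball z δ₁ with hW
    have hWopen : IsOpen W := by
      refine IsOpen.inter ?_ Metric.isOpen_ball
      exact isOpen_lt (((hc_cont.mul continuous_const).dist continuous_const)) continuous_const
    have hzW : z ∈ W := by
      constructor
      · show dist (c z * s) t₀ < δ
        rw [hczs]; simpa using hδ
      · exact Metric.mem_ball_self hδ₁
    obtain ⟨r, hr, hrsub⟩ := Metric.isOpen_iff.mp hWopen z hzW
    have hw_pos : ∀ w ∈ Metric.ball z r, 0 < κ s w (Metric.ball (f z u) ε) := by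
      intro w hw
      have hwW := hrsub hw
      have h1 : 0 < κ (c w * s) y₀ (Metric.ball u δ₁) :=
        hper _ (mul_nonneg (hc_pos w).le hs0) (by simpa [Real.dist_eq] using hwW.1)
      rw [hmap w s hs0 _ measurableSet_ball]
      refine lt_of_lt_of_le h1 (measure_mono ?_)
      intro x hx
      exact Set.mem_preimage.mpr (hprod w hwW.2 x hx)
    obtain ⟨t₁, ht₁, hpos₁⟩ := hz r hr
    refine ⟨t₁ + s, add_nonneg ht₁ hs0, ?_⟩
    rw [hCK t₁ ht₁ s hs0 y₀ _ measurableSet_ball]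
    rw [lintegral_pos_iff_support (ProbabilityTheory.Kernel.measurable_coe _ measurableSet_ball)]
    refine lt_of_lt_of_le hpos₁ (measure_mono ?_)
    intro w hw
    exact Function.mem_support.mpr (hw_pos w hw).ne'
  -- Step D : S₀ is clopen and nonempty
  have hy₀S : y₀ ∈ S₀ := interior_subset hy₀int
  have hopenS : IsOpen S₀ := by
    rw [isOpen_iff_forall_mem_open]
    intro z hzS
    refine ⟨(finv z) ⁻¹' (interior S₀), ?_, (hfinvw_cont z).isOpen_preimage _ isOpen_interior, ?_⟩
    · intro x hx
      have h1 := hkey z hzS _ (interior_subset hx)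
      rwa [hright] at h1
    · show finv z z ∈ interior S₀
      have h2 := hleft z y₀
      rw [hf_y₀ z] at h2
      rw [h2]
      exact hy₀int
  have hclosedS : IsClosed S₀ := by
    rw [← isOpen_compl_iff, isOpen_iff_forall_mem_open]
    intro z hz
    have hz' : ∃ ε > (0 : ℝ), ∀ t : ℝ, 0 ≤ t → κ t y₀ (Metric.ball z ε) = 0 := by
      by_contra h
      push_neg at h
      refine hz ?_
      intro ε hε
      obtain ⟨t, ht, hne⟩ := h ε hε
      exact ⟨t, ht, pos_iff_ne_zero.mpr hne⟩
    obtain ⟨ε, hε, hzero⟩ := hz'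
    refine ⟨Metric.ball z (ε / 2), ?_, Metric.isOpen_ball, Metric.mem_ball_self (by linarith)⟩
    intro z' hz'ball hz'S
    obtain ⟨t, ht, hpos⟩ := hz'S (ε / 2) (by linarith)
    have hsub : Metric.ball z' (ε / 2) ⊆ Metric.ball z ε := by
      refine ball_subset_ball' ?_
      have := mem_ball.mp hz'ball
      linarith
    have := lt_of_lt_of_le hpos (measure_mono hsub)
    rw [hzero t ht] at this
    exact lt_irrefl _ this
  exact (IsClopen.eq_univ ⟨hclosedS, hopenS⟩ ⟨y₀, hy₀S⟩ : S₀ = Set.univ)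
end

section
/- Let M > 0, n ≥ 1, and let a₁, …, aₙ ∈ ℝ² satisfy |π₁(aᵢ)| ≤ 2M and |π₂(aᵢ)| ≤ 2M e^M for every 1 ≤ i ≤ n. Then the T-product Pₙ := a₁ T a₂ T ⋯ T aₙ satisfies |π₁(Pₙ)| ≤ 2nM and |π₂(Pₙ)| ≤ 2nM e^{2nM}. -/
lemma aux16 (M : ℝ) (hM : 0 < M) (l : List (ℝ × ℝ))
    (hl : ∀ z ∈ l, |z.1| ≤ 2 * M ∧ |z.2| ≤ 2 * M * Real.exp M) :
    let P : ℝ × ℝ := l.foldl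
      (fun y z : ℝ × ℝ => (y.1 + z.1, y.2 + Real.exp y.1 * z.2)) ((0 : ℝ), (0 : ℝ))
    |P.1| ≤ 2 * l.length * M ∧ |P.2| ≤ 2 * l.length * M * Real.exp (2 * l.length * M) := by
  induction l using List.reverseRecOn with
  | nil => simp
  | append_singleton l x ih =>
    intro P
    have hmem : ∀ z ∈ l, |z.1| ≤ 2 * M ∧ |z.2| ≤ 2 * M * Real.exp M := by
      intro z hz; exact hl z (List.mem_append_left _ hz)
    have hx := hl x (by simp)
    obtain ⟨ih1, ih2⟩ := ih hmem
    set Q : ℝ × ℝ := l.foldl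
      (fun y z : ℝ × ℝ => (y.1 + z.1, y.2 + Real.exp y.1 * z.2)) ((0 : ℝ), (0 : ℝ)) with hQ
    have hP : P = (Q.1 + x.1, Q.2 + Real.exp Q.1 * x.2) := by
      simp [P, List.foldl_concat, hQ]
    have hL : (0:ℝ) ≤ 2 * l.length * M := by positivity
    have hlen : ((l ++ [x]).length : ℝ) = l.length + 1 := by simp
    rw [hP]
    constructor
    · calc |Q.1 + x.1| ≤ |Q.1| + |x.1| := abs_add_le _ _
        _ ≤ 2 * l.length * M + 2 * M := add_le_add ih1 hx.1
        _ = 2 * ((l ++ [x]).length : ℝ) * M := by rw [hlen]; ring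
    · have hE : Real.exp Q.1 ≤ Real.exp (2 * l.length * M) :=
        Real.exp_le_exp.2 (le_trans (le_abs_self _) ih1)
      have hEpos : (0:ℝ) < Real.exp (2 * l.length * M) := Real.exp_pos _
      have h2 : |Q.2 + Real.exp Q.1 * x.2| ≤ |Q.2| + Real.exp Q.1 * |x.2| := by
        calc |Q.2 + Real.exp Q.1 * x.2| ≤ |Q.2| + |Real.exp Q.1 * x.2| := abs_add_le _ _
          _ = |Q.2| + Real.exp Q.1 * |x.2| := by
              rw [abs_mul, abs_of_pos (Real.exp_pos _)]
      have key : |Q.2| + Real.exp Q.1 * |x.2|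
          ≤ 2 * (l.length + 1) * M * Real.exp (2 * (l.length + 1) * M) := by
        have h3 : Real.exp Q.1 * |x.2| ≤ Real.exp (2 * l.length * M) * (2 * M * Real.exp M) :=
          mul_le_mul hE hx.2 (abs_nonneg _) hEpos.le
        have h4 : Real.exp (2 * l.length * M) * (2 * M * Real.exp M)
            = 2 * M * Real.exp (2 * l.length * M + M) := by
          rw [Real.exp_add]; ring
        have hmono1 : Real.exp (2 * l.length * M) ≤ Real.exp (2 * (l.length + 1) * M) := by
          apply Real.exp_le_exp.2; nlinarith
        have hmono2 : Real.exp (2 * l.length * M + M) ≤ Real.exp (2 * (l.length + 1) * M) := by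
          apply Real.exp_le_exp.2; nlinarith
        calc |Q.2| + Real.exp Q.1 * |x.2|
            ≤ 2 * l.length * M * Real.exp (2 * l.length * M)
              + 2 * M * Real.exp (2 * l.length * M + M) := by
              rw [← h4]; exact add_le_add ih2 h3
          _ ≤ 2 * l.length * M * Real.exp (2 * (l.length + 1) * M)
              + 2 * M * Real.exp (2 * (l.length + 1) * M) := by
              gcongr
          _ = 2 * (l.length + 1) * M * Real.exp (2 * (l.length + 1) * M) := by ring
      rw [hlen]
      exact le_trans h2 key

/-- if `a₁, …, aₙ ∈ ℝ²` satisfy `|π₁(aᵢ)| ≤ 2M` and `|π₂(aᵢ)| ≤ 2M e^M`, then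
their `T`-product `Pₙ = a₁ T a₂ T ⋯ T aₙ` satisfies `|π₁(Pₙ)| ≤ 2nM` and
`|π₂(Pₙ)| ≤ 2nM e^{2nM}`. -/
theorem stmt_16
    (M : ℝ) (hM : 0 < M) (n : ℕ) (hn : 1 ≤ n) (a : Fin n → ℝ × ℝ)
    (ha : ∀ i : Fin n, |(a i).1| ≤ 2 * M ∧ |(a i).2| ≤ 2 * M * Real.exp M) :
    let P : ℝ × ℝ := (List.ofFn a).foldl
      (fun y z : ℝ × ℝ => (y.1 + z.1, y.2 + Real.exp y.1 * z.2)) ((0 : ℝ), (0 : ℝ))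
    |P.1| ≤ 2 * n * M ∧ |P.2| ≤ 2 * n * M * Real.exp (2 * n * M) := by
  have := aux16 M hM (List.ofFn a) (by
    intro z hz
    obtain ⟨i, rfl⟩ := List.mem_ofFn.1 hz
    exact ha i)
  simpa using this
end

section
/- The function ϕ is a continuous, strictly increasing bijection from [0, ζ) onto [0, T), where T := sup_{t < ζ} ϕ(t) ∈ (0, ∞], and its inverse ϕ⁻¹ : [0, T) → [0, ζ) satisfies, for every t ∈ [0, T), the identity ϕ⁻¹(t) = ∫₀ᵗ (c(X(ϕ⁻¹(v))))⁻¹ dv. -/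
open MeasureTheory intervalIntegral Set Filter Topology
open scoped ENNReal

private lemma meas_of_rightCont (g : ℝ → ℝ)
    (hg : ∀ t : ℝ, ContinuousWithinAt g (Set.Ici t) t) : Measurable g := by
  have hmeas : ∀ n : ℕ, Measurable (fun u : ℝ => g ((⌊u * (n + 1)⌋ + 1) / (n + 1))) := by
    intro n
    exact (measurable_of_countable (fun k : ℤ => g ((k + 1) / (n + 1)))).comp
      (Int.measurable_floor.comp (measurable_id.mul_const _))
  refine measurable_of_tendsto_metrizable hmeas (tendsto_pi_nhds.2 fun u => ?_)
  have hpos : ∀ n : ℕ, (0 : ℝ) < n + 1 := fun n => by positivity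
  have h1 : ∀ n : ℕ, u < (⌊u * (n + 1)⌋ + 1) / (n + 1) := by
    intro n
    rw [lt_div_iff₀ (hpos n)]
    exact Int.lt_floor_add_one _
  have h2 : ∀ n : ℕ, (⌊u * (n + 1)⌋ + 1) / (n + 1) ≤ u + 1 / (n + 1) := by
    intro n
    rw [div_le_iff₀ (hpos n)]
    have h := Int.floor_le (u * (n + 1))
    have he : (u + 1 / (n + 1)) * (n + 1) = u * (n + 1) + 1 := by
      field_simp
    linarith
  have hlim : Tendsto (fun n : ℕ => (⌊u * (n + 1)⌋ + 1) / (n + 1) : ℕ → ℝ) atTop (𝓝 u) := by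
    have hupper : Tendsto (fun n : ℕ => u + 1 / (n + 1) : ℕ → ℝ) atTop (𝓝 (u + 0)) :=
      tendsto_const_nhds.add tendsto_one_div_add_atTop_nhds_zero_nat
    rw [add_zero] at hupper
    exact tendsto_of_tendsto_of_tendsto_of_le_of_le tendsto_const_nhds hupper
      (fun n => (h1 n).le) h2
  exact (hg u).tendsto.comp
    (tendsto_nhdsWithin_of_tendsto_nhds_of_eventually_within _ hlim
      (Eventually.of_forall fun n => (h1 n).le))

private lemma bdd_of_cadlag (g : ℝ → ℝ)
    (hr : ∀ t : ℝ, ContinuousWithinAt g (Set.Ici t) t)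
    (hl : ∀ t : ℝ, ∃ L, Filter.Tendsto g (nhdsWithin t (Set.Iio t)) (nhds L))
    (a b : ℝ) : ∃ M, ∀ u ∈ Set.Icc a b, |g u| ≤ M := by
  refine (isCompact_Icc (a := a) (b := b)).induction_on
    (p := fun s => ∃ M, ∀ u ∈ s, |g u| ≤ M) ⟨0, by simp⟩
    (fun s t hst ⟨M, hM⟩ => ⟨M, fun u hu => hM u (hst hu)⟩)
    (fun s t ⟨M, hM⟩ ⟨N, hN⟩ => ⟨max M N, fun u hu => hu.elim
      (fun h => (hM u h).trans (le_max_left _ _))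
      (fun h => (hN u h).trans (le_max_right _ _))⟩)
    (fun x _ => ?_)
  obtain ⟨L, hL⟩ := hl x
  set M : ℝ := max (|g x| + 1) (|L| + 1) with hM
  refine ⟨{u | |g u| ≤ M}, ?_, M, fun u hu => hu⟩
  apply mem_nhdsWithin_of_mem_nhds
  rw [← nhdsLT_sup_nhdsGE x, Filter.mem_sup]
  constructor
  · have : ∀ᶠ u in 𝓝[<] x, |g u - L| < 1 := by
      have := hL.eventually (Metric.ball_mem_nhds L one_pos)
      simpa [Real.dist_eq] using this
    exact this.mono fun u hu => le_max_of_le_right (by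
      have := abs_sub_abs_le_abs_sub (g u) L
      linarith)
  · have : ∀ᶠ u in 𝓝[≥] x, |g u - g x| < 1 := by
      have := (hr x).tendsto.eventually (Metric.ball_mem_nhds (g x) one_pos)
      simpa [Real.dist_eq] using this
    exact this.mono fun u hu => le_max_of_le_left (by
      have := abs_sub_abs_le_abs_sub (g u) (g x)
      linarith)

private lemma lb_of_cadlag (g : ℝ → ℝ)
    (hr : ∀ t : ℝ, ContinuousWithinAt g (Set.Ici t) t)
    (hl : ∀ t : ℝ, ∃ L, 0 < L ∧ Filter.Tendsto g (nhdsWithin t (Set.Iio t)) (nhds L))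
    (hpos : ∀ t, 0 < g t)
    (a b : ℝ) : ∃ ε > 0, ∀ u ∈ Set.Icc a b, ε ≤ g u := by
  refine (isCompact_Icc (a := a) (b := b)).induction_on
    (p := fun s => ∃ ε > 0, ∀ u ∈ s, ε ≤ g u) ⟨1, one_pos, by simp⟩
    (fun s t hst ⟨ε, hε, hM⟩ => ⟨ε, hε, fun u hu => hM u (hst hu)⟩)
    (fun s t ⟨ε, hε, hM⟩ ⟨δ, hδ, hN⟩ => ⟨min ε δ, lt_min hε hδ, fun u hu => hu.elim
      (fun h => (min_le_left _ _).trans (hM u h))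
      (fun h => (min_le_right _ _).trans (hN u h))⟩)
    (fun x _ => ?_)
  obtain ⟨L, hL0, hL⟩ := hl x
  refine ⟨{u | min (g x / 2) (L / 2) ≤ g u}, ?_, ⟨min (g x / 2) (L / 2),
    lt_min (half_pos (hpos x)) (half_pos hL0), fun u hu => hu⟩⟩
  apply mem_nhdsWithin_of_mem_nhds
  rw [← nhdsLT_sup_nhdsGE x, Filter.mem_sup]
  constructor
  · have : ∀ᶠ u in 𝓝[<] x, L / 2 < g u := hL.eventually (eventually_gt_nhds (half_lt_self hL0))
    exact this.mono fun u hu => (min_le_right _ _).trans hu.le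
  · have : ∀ᶠ u in 𝓝[≥] x, g x / 2 < g u :=
      (hr x).tendsto.eventually (eventually_gt_nhds (half_lt_self (hpos x)))
    exact this.mono fun u hu => (min_le_left _ _).trans hu.le

private lemma intInt_of_cadlag (g : ℝ → ℝ)
    (hr : ∀ t : ℝ, ContinuousWithinAt g (Set.Ici t) t)
    (hl : ∀ t : ℝ, ∃ L, Filter.Tendsto g (nhdsWithin t (Set.Iio t)) (nhds L))
    (a b : ℝ) : IntervalIntegrable g MeasureTheory.volume a b := by
  obtain ⟨M, hM⟩ := bdd_of_cadlag g hr hl (min a b) (max a b)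
  have hmeas := meas_of_rightCont g hr
  have key : ∀ p q : ℝ, Set.Ioc p q ⊆ Set.Icc (min a b) (max a b) →
      IntegrableOn g (Set.Ioc p q) MeasureTheory.volume := by
    intro p q hsub
    refine ⟨hmeas.aestronglyMeasurable.restrict, ?_⟩
    refine HasFiniteIntegral.restrict_of_bounded (C := M) measure_Ioc_lt_top ?_
    refine (ae_restrict_iff' measurableSet_Ioc).2 (Filter.Eventually.of_forall fun x hx => ?_)
    simpa [Real.norm_eq_abs] using hM x (hsub hx)
  constructor
  · exact key a b (fun x hx => ⟨(min_le_left a b).trans hx.1.le, hx.2.trans (le_max_right a b)⟩)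
  · exact key b a (fun x hx => ⟨(min_le_right a b).trans hx.1.le, hx.2.trans (le_max_left a b)⟩)

private lemma clampF_rc {E : Type*} [TopologicalSpace E]
    (c : E → ℝ) (hc_cont : Continuous c)
    (ζ : ℝ≥0∞) (X : ℝ → E)
    (hX_rc : ∀ t : ℝ, 0 ≤ t → ENNReal.ofReal t < ζ → ContinuousWithinAt X (Set.Ici t) t)
    (b : ℝ) (hb0 : 0 ≤ b) (hbζ : ENNReal.ofReal b < ζ) :
    ∀ u : ℝ, ContinuousWithinAt (fun u => c (X (min (max u 0) b))) (Set.Ici u) u := by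
  intro u
  set m := min (max u 0) b with hm
  have hmem : m ∈ Set.Icc 0 b := ⟨le_min (le_max_right u 0) hb0, min_le_right _ _⟩
  have hmζ : ENNReal.ofReal m < ζ :=
    lt_of_le_of_lt (ENNReal.ofReal_le_ofReal hmem.2) hbζ
  have hclamp_cont : Continuous (fun u : ℝ => min (max u 0) b) :=
    (continuous_id.max continuous_const).min continuous_const
  have hclamp_mono : Monotone (fun u : ℝ => min (max u 0) b) :=
    fun x y hxy => min_le_min (max_le_max hxy le_rfl) le_rfl
  have h1 : Filter.Tendsto (fun u : ℝ => min (max u 0) b) (nhdsWithin u (Set.Ici u))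
      (nhdsWithin m (Set.Ici m)) := by
    refine tendsto_nhdsWithin_of_tendsto_nhds_of_eventually_within _
      ((hclamp_cont.tendsto u).mono_left nhdsWithin_le_nhds) ?_
    exact Filter.eventually_of_mem self_mem_nhdsWithin (fun w hw => hclamp_mono hw)
  exact (hc_cont.continuousAt.tendsto.comp ((hX_rc m hmem.1 hmζ).tendsto.comp h1))

private lemma clampF_ll {E : Type*} [TopologicalSpace E]
    (c : E → ℝ) (hc_cont : Continuous c) (hc_pos : ∀ x : E, 0 < c x)
    (ζ : ℝ≥0∞) (X : ℝ → E)
    (hX_ll : ∀ t : ℝ, 0 < t → ENNReal.ofReal t < ζ →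
      ∃ l : E, Filter.Tendsto X (nhdsWithin t (Set.Iio t)) (nhds l))
    (b : ℝ) (hb0 : 0 ≤ b) (hbζ : ENNReal.ofReal b < ζ) :
    ∀ u : ℝ, ∃ L, 0 < L ∧
      Filter.Tendsto (fun u => c (X (min (max u 0) b))) (nhdsWithin u (Set.Iio u)) (nhds L) := by
  intro u
  rcases le_or_gt u 0 with hu | hu
  · refine ⟨c (X 0), hc_pos _, ?_⟩
    have heq : ∀ w ∈ Set.Iio u, c (X (min (max w 0) b)) = c (X 0) := by
      intro w hw
      rw [max_eq_right (le_of_lt (lt_of_lt_of_le hw hu)), min_eq_left hb0]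
    exact Filter.Tendsto.congr' (Filter.eventually_of_mem self_mem_nhdsWithin
      (fun w hw => (heq w hw).symm)) tendsto_const_nhds
  · rcases le_or_gt u b with hub | hub
    · have huζ : ENNReal.ofReal u < ζ := lt_of_le_of_lt (ENNReal.ofReal_le_ofReal hub) hbζ
      obtain ⟨l, hl⟩ := hX_ll u hu huζ
      refine ⟨c l, hc_pos _, ?_⟩
      have hIoo : Set.Ioo 0 u ∈ nhdsWithin u (Set.Iio u) :=
        Ioo_mem_nhdsLT_of_mem ⟨hu, le_rfl⟩
      have heq : ∀ w ∈ Set.Ioo 0 u, c (X (min (max w 0) b)) = c (X w) := by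
        intro w hw
        rw [max_eq_left hw.1.le, min_eq_left (hw.2.le.trans hub)]
      refine Filter.Tendsto.congr' (Filter.eventually_of_mem hIoo
        (fun w hw => (heq w hw).symm)) ?_
      exact (hc_cont.continuousAt.tendsto).comp hl
    · refine ⟨c (X b), hc_pos _, ?_⟩
      have hIoo : Set.Ioo b u ∈ nhdsWithin u (Set.Iio u) :=
        Ioo_mem_nhdsLT_of_mem ⟨hub, le_rfl⟩
      have heq : ∀ w ∈ Set.Ioo b u, c (X (min (max w 0) b)) = c (X b) := by
        intro w hw
        rw [max_eq_left (hb0.trans hw.1.le), min_eq_right hw.1.le]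
      exact Filter.Tendsto.congr' (Filter.eventually_of_mem hIoo
        (fun w hw => (heq w hw).symm)) tendsto_const_nhds

/-- for a càdlàg path `X : [0, ζ) → E` and a continuous positive function `c`,
the additive functional `ϕ(t) = ∫₀ᵗ c(X(u)) du` is a continuous strictly increasing bijection
from `[0, ζ)` onto `[0, T)` with `T = sup_{t < ζ} ϕ(t) ∈ (0, ∞]`, and its inverse `ψ = ϕ⁻¹`
satisfies `ψ(t) = ∫₀ᵗ (c(X(ψ(v))))⁻¹ dv` on `[0, T)`. -/
theorem stmt_17
    {E : Type*} [TopologicalSpace E]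
    (c : E → ℝ) (hc_cont : Continuous c) (hc_pos : ∀ x : E, 0 < c x)
    (ζ : ℝ≥0∞) (hζ : 0 < ζ)
    (X : ℝ → E)
    (hX_rc : ∀ t : ℝ, 0 ≤ t → ENNReal.ofReal t < ζ →
      ContinuousWithinAt X (Set.Ici t) t)
    (hX_ll : ∀ t : ℝ, 0 < t → ENNReal.ofReal t < ζ →
      ∃ l : E, Filter.Tendsto X (nhdsWithin t (Set.Iio t)) (nhds l)) :
    let J : Set ℝ := {t : ℝ | 0 ≤ t ∧ ENNReal.ofReal t < ζ}
    let ϕ : ℝ → ℝ := fun t => ∫ u in (0 : ℝ)..t, c (X u)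
    let T : ℝ≥0∞ := ⨆ t ∈ J, ENNReal.ofReal (ϕ t)
    let J' : Set ℝ := {s : ℝ | 0 ≤ s ∧ ENNReal.ofReal s < T}
    0 < T ∧
    ContinuousOn ϕ J ∧
    StrictMonoOn ϕ J ∧
    Set.BijOn ϕ J J' ∧
    ∃ ψ : ℝ → ℝ, Set.MapsTo ψ J' J ∧ Set.InvOn ψ ϕ J J' ∧
      ∀ s ∈ J', ψ s = ∫ v in (0 : ℝ)..s, (c (X (ψ v)))⁻¹ := by
  intro J ϕ T J'
  have hJmem : ∀ {t : ℝ}, t ∈ J ↔ 0 ≤ t ∧ ENNReal.ofReal t < ζ := Iff.rfl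
  have hJ0 : (0:ℝ) ∈ J := ⟨le_rfl, by simpa using hζ⟩
  have hJdown : ∀ {x y : ℝ}, y ∈ J → 0 ≤ x → x ≤ y → x ∈ J := fun hy hx0 hxy =>
    ⟨hx0, lt_of_le_of_lt (ENNReal.ofReal_le_ofReal hxy) hy.2⟩
  have hJb : ∀ t ∈ J, ∃ b ∈ J, t < b := by
    intro t ht
    rcases eq_or_ne ζ ⊤ with hζt | hζt
    · exact ⟨t + 1, ⟨by linarith [ht.1], by simp [hζt]⟩, by linarith⟩
    · have htζ : t < ζ.toReal := (ENNReal.ofReal_lt_iff_lt_toReal ht.1 hζt).1 ht.2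
      refine ⟨(t + ζ.toReal) / 2, ⟨by linarith [ht.1], ?_⟩, by linarith⟩
      rw [ENNReal.ofReal_lt_iff_lt_toReal (by linarith [ht.1]) hζt]
      linarith
  -- interval integrability of the integrand on subintervals of J
  have key_int : ∀ b ∈ J, ∀ p q : ℝ, p ∈ Set.Icc 0 b → q ∈ Set.Icc 0 b →
      IntervalIntegrable (fun u => c (X u)) MeasureTheory.volume p q := by
    intro b hb p q hp hq
    have hF := intInt_of_cadlag (fun u => c (X (min (max u 0) b)))
      (clampF_rc c hc_cont ζ X hX_rc b hb.1 hb.2)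
      (fun u => (clampF_ll c hc_cont hc_pos ζ X hX_ll b hb.1 hb.2 u).imp
        (fun L hL => hL.2)) p q
    have heq : Set.EqOn (fun u => c (X (min (max u 0) b))) (fun u => c (X u))
        (Set.uIoc p q) := by
      intro x hx
      have hx' : x ∈ Set.Icc 0 b := by
        rcases hx with ⟨h1, h2⟩
        constructor
        · exact le_trans (le_min hp.1 hq.1) h1.le
        · exact le_trans h2 (max_le hp.2 hq.2)
      simp only [max_eq_left hx'.1, min_eq_left hx'.2]
    constructor
    · exact hF.1.congr_fun (fun x hx => heq (Set.Ioc_subset_uIoc hx)) measurableSet_Ioc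
    · exact hF.2.congr_fun (fun x hx => heq (Set.Ioc_subset_uIoc' hx)) measurableSet_Ioc
  have hϕ0 : ϕ 0 = 0 := intervalIntegral.integral_same
  have hcontIcc : ∀ b ∈ J, ContinuousOn ϕ (Set.Icc 0 b) := by
    intro b hb
    have := intervalIntegral.continuousOn_primitive_interval
      (f := fun u => c (X u)) (μ := MeasureTheory.volume) (a := 0) (b := b) ?_
    · rwa [Set.uIcc_of_le hb.1] at this
    · rw [Set.uIcc_of_le hb.1]
      exact (intervalIntegrable_iff_integrableOn_Icc_of_le hb.1).1
        (key_int b hb 0 b ⟨le_rfl, hb.1⟩ ⟨hb.1, le_rfl⟩)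
  have hmono : StrictMonoOn ϕ J := by
    intro x hx y hy hxy
    have h1 : IntervalIntegrable (fun u => c (X u)) MeasureTheory.volume 0 x :=
      key_int y hy 0 x ⟨le_rfl, hy.1⟩ ⟨hx.1, hxy.le⟩
    have h2 : IntervalIntegrable (fun u => c (X u)) MeasureTheory.volume x y :=
      key_int y hy x y ⟨hx.1, hxy.le⟩ ⟨hy.1, le_rfl⟩
    have hadd := intervalIntegral.integral_add_adjacent_intervals h1 h2
    have hpos := intervalIntegral.intervalIntegral_pos_of_pos_on h2
      (fun u _ => hc_pos (X u)) hxy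
    show ϕ x < ϕ y
    calc ϕ x < ϕ x + ∫ u in x..y, c (X u) := by linarith
    _ = ϕ y := hadd
  have hcont : ContinuousOn ϕ J := by
    intro t ht
    obtain ⟨b, hb, htb⟩ := hJb t ht
    have CWA : ContinuousWithinAt ϕ (Set.Icc 0 b) t := hcontIcc b hb t ⟨ht.1, htb.le⟩
    have hsub : J ∩ Set.Iio b ⊆ Set.Icc 0 b := fun w hw => ⟨hw.1.1, hw.2.le⟩
    have : ContinuousWithinAt ϕ (J ∩ Set.Iio b) t := CWA.mono hsub
    rwa [ContinuousWithinAt, nhdsWithin_restrict' _ (Iio_mem_nhds htb)]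
  have hT0 : 0 < T := by
    obtain ⟨b, hb, h0b⟩ := hJb 0 hJ0
    have hϕb : 0 < ϕ b := by
      have := hmono hJ0 hb h0b
      rwa [hϕ0] at this
    calc (0:ℝ≥0∞) < ENNReal.ofReal (ϕ b) := ENNReal.ofReal_pos.2 hϕb
    _ ≤ T := le_biSup (fun t => ENNReal.ofReal (ϕ t)) hb
  have hmaps : Set.MapsTo ϕ J J' := by
    intro t ht
    obtain ⟨b, hb, htb⟩ := hJb t ht
    have h1 : ϕ t < ϕ b := hmono ht hb htb
    have h0 : 0 ≤ ϕ t := by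
      have := hmono.monotoneOn hJ0 ht ht.1
      rwa [hϕ0] at this
    refine ⟨h0, ?_⟩
    calc ENNReal.ofReal (ϕ t) < ENNReal.ofReal (ϕ b) :=
      (ENNReal.ofReal_lt_ofReal_iff (lt_of_le_of_lt h0 h1)).2 h1
    _ ≤ T := le_biSup (fun t => ENNReal.ofReal (ϕ t)) hb
  have hsurj : Set.SurjOn ϕ J J' := by
    intro s hs
    obtain ⟨hs0, hsT⟩ := hs
    rw [lt_iSup_iff] at hsT
    obtain ⟨t1, hsT⟩ := hsT
    rw [lt_iSup_iff] at hsT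
    obtain ⟨ht1, hsT⟩ := hsT
    have hst1 : s < ϕ t1 := by
      by_contra h
      exact absurd (ENNReal.ofReal_le_ofReal (not_lt.1 h)) (not_le.2 hsT)
    have := intermediate_value_Icc ht1.1 (hcontIcc t1 ht1)
    have hmem : s ∈ Set.Icc (ϕ 0) (ϕ t1) := by
      rw [hϕ0]; exact ⟨hs0, hst1.le⟩
    obtain ⟨t, htmem, hts⟩ := this hmem
    exact ⟨t, hJdown ht1 htmem.1 htmem.2, hts⟩
  have hbij : Set.BijOn ϕ J J' := ⟨hmaps, hmono.injOn, hsurj⟩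
  set ψ := Function.invFunOn ϕ J with hψdef
  have hinv : Set.InvOn ψ ϕ J J' := hbij.invOn_invFunOn
  have hψmaps : Set.MapsTo ψ J' J := hsurj.mapsTo_invFunOn
  refine ⟨hT0, hcont, hmono, hbij, ψ, hψmaps, hinv, ?_⟩
  have hψ0 : ψ 0 = 0 := by
    have := hinv.1 hJ0
    rwa [hϕ0] at this
  have h0J' : (0:ℝ) ∈ J' := ⟨le_rfl, by simpa using hT0⟩
  have hψmono : StrictMonoOn ψ J' := by
    intro s1 h1 s2 h2 h12
    have k1 := hψmaps h1
    have k2 := hψmaps h2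
    by_contra h
    push_neg at h
    have := hmono.monotoneOn k2 k1 h
    rw [hinv.2 h1, hinv.2 h2] at this
    exact absurd h12 (not_lt.2 this)
  intro s hs
  rcases eq_or_lt_of_le hs.1 with h0s | h0s
  · rw [← h0s, intervalIntegral.integral_same, hψ0]
  set a := ψ s with ha
  have haJ : a ∈ J := hψmaps hs
  have hϕa : ϕ a = s := hinv.2 hs
  have ha0 : 0 < a := by
    have := hψmono h0J' hs h0s
    rwa [hψ0] at this
  obtain ⟨b, hbJ, hab⟩ := hJb a haJ
  set F := fun u => c (X (min (max u 0) b)) with hFdef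
  have hFrc := clampF_rc c hc_cont ζ X hX_rc b hbJ.1 hbJ.2
  have hFll := clampF_ll c hc_cont hc_pos ζ X hX_ll b hbJ.1 hbJ.2
  have hFmeas : Measurable F := meas_of_rightCont F hFrc
  obtain ⟨ε, hε0, hεF⟩ := lb_of_cadlag F hFrc hFll (fun u => hc_pos _) 0 b
  have hFeq : ∀ u ∈ Set.Icc 0 b, F u = c (X u) := fun u hu => by
    simp only [hFdef, max_eq_left hu.1, min_eq_left hu.2]
  have hIccJ' : Set.Icc 0 s ⊆ J' := fun w hw =>
    ⟨hw.1, lt_of_le_of_lt (ENNReal.ofReal_le_ofReal hw.2) hs.2⟩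
  have hψle : ∀ v ∈ Set.Icc 0 s, ψ v ∈ Set.Icc 0 a := by
    intro v hv
    exact ⟨(hψmaps (hIccJ' hv)).1, hψmono.monotoneOn (hIccJ' hv) hs hv.2⟩
  have hψmonoIcc : StrictMonoOn ψ (Set.Icc 0 s) := fun x hx y hy hxy =>
    hψmono (hIccJ' hx) (hIccJ' hy) hxy
  -- continuity of ψ on [0, s]
  have hright : ∀ v ∈ Set.Ico 0 s, ContinuousWithinAt ψ (Set.Ici v) v := by
    intro v hv
    refine StrictMonoOn.continuousWithinAt_right_of_exists_between hψmonoIcc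
      (Filter.mem_of_superset (Icc_mem_nhdsGE_of_mem (Set.left_mem_Ico.2 hv.2))
        (fun w hw => ⟨hv.1.trans hw.1, hw.2⟩)) ?_
    intro β hβ
    have hvJ' : v ∈ J' := hIccJ' ⟨hv.1, hv.2.le⟩
    have hψv_lt_a : ψ v < a := hψmono hvJ' hs hv.2
    rcases le_or_gt a β with hcase | hcase
    · exact ⟨s, ⟨hs.1, le_rfl⟩, hψv_lt_a, hcase⟩
    · have h1 : ψ v < (ψ v + β) / 2 := by linarith
      have h2 : (ψ v + β) / 2 < β := by linarith
      have hψv0 : 0 ≤ ψ v := (hψmaps hvJ').1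
      have ht'J : (ψ v + β) / 2 ∈ J := hJdown haJ (by linarith) (by linarith)
      refine ⟨ϕ ((ψ v + β) / 2), ⟨?_, ?_⟩, ?_, ?_⟩
      · have := hmono.monotoneOn hJ0 ht'J ht'J.1
        rwa [hϕ0] at this
      · have := hmono.monotoneOn ht'J haJ (by linarith : (ψ v + β) / 2 ≤ a)
        rwa [hϕa] at this
      · rw [hinv.1 ht'J]; exact h1
      · rw [hinv.1 ht'J]; exact h2.le
  have hleft : ∀ v ∈ Set.Ioc 0 s, ContinuousWithinAt ψ (Set.Iic v) v := by
    intro v hv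
    refine StrictMonoOn.continuousWithinAt_left_of_exists_between hψmonoIcc
      (Filter.mem_of_superset (Icc_mem_nhdsLE_of_mem hv)
        (fun w hw => hw)) ?_
    intro β hβ
    have hvJ' : v ∈ J' := hIccJ' ⟨hv.1.le, hv.2⟩
    have hψv_pos : 0 < ψ v := by
      have := hψmono h0J' hvJ' hv.1
      rwa [hψ0] at this
    rcases le_or_gt β 0 with hcase | hcase
    · exact ⟨0, ⟨le_rfl, hs.1⟩, by rw [hψ0]; exact ⟨hcase, hψv_pos⟩⟩
    · have h1 : β < (β + ψ v) / 2 := by linarith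
      have h2 : (β + ψ v) / 2 < ψ v := by linarith
      have hψva : ψ v ≤ a := (hψle v ⟨hv.1.le, hv.2⟩).2
      have ht'J : (β + ψ v) / 2 ∈ J := hJdown haJ (by linarith) (by linarith)
      refine ⟨ϕ ((β + ψ v) / 2), ⟨?_, ?_⟩, ?_, ?_⟩
      · have := hmono.monotoneOn hJ0 ht'J ht'J.1
        rwa [hϕ0] at this
      · have h3 := hmono.monotoneOn ht'J (hψmaps hvJ') h2.le
        rw [hinv.2 hvJ'] at h3
        exact h3.trans hv.2
      · rw [hinv.1 ht'J]; exact h1.le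
      · rw [hinv.1 ht'J]; exact h2
  have hψcont : ContinuousOn ψ (Set.Icc 0 s) := by
    intro v hv
    rcases eq_or_lt_of_le hv.1 with hv0 | hv0
    · subst hv0
      exact (hright 0 ⟨le_rfl, h0s⟩).mono (fun w hw => hw.1)
    rcases eq_or_lt_of_le hv.2 with hvs | hvs
    · subst hvs
      exact (hleft v ⟨hv0, le_rfl⟩).mono (fun w hw => hw.2)
    · refine ((hright v ⟨hv.1, hvs⟩).union (hleft v ⟨hv0, hv.2⟩)).mono ?_
      intro w _
      rcases le_total v w with h | h
      exacts [Or.inl h, Or.inr h]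
  -- integrability of the integrand
  have hclamp_s : Continuous (fun v : ℝ => min (max v 0) s) :=
    (continuous_id.max continuous_const).min continuous_const
  have hψc : Continuous (fun v => ψ (min (max v 0) s)) :=
    hψcont.comp_continuous hclamp_s
      (fun v => ⟨le_min (le_max_right v 0) hs.1, min_le_right _ _⟩)
  have hψcb : ∀ v : ℝ, ψ (min (max v 0) s) ∈ Set.Icc 0 b := by
    intro v
    have := hψle _ ⟨le_min (le_max_right v 0) hs.1, min_le_right _ _⟩
    exact ⟨this.1, this.2.trans hab.le⟩
  have hint : IntervalIntegrable (fun v => (c (X (ψ v)))⁻¹) MeasureTheory.volume 0 s := by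
    rw [intervalIntegrable_iff_integrableOn_Ioc_of_le h0s.le]
    have hG : IntegrableOn (fun v => (F (ψ (min (max v 0) s)))⁻¹)
        (Set.Ioc 0 s) MeasureTheory.volume := by
      refine ⟨((hFmeas.comp hψc.measurable).inv).aestronglyMeasurable.restrict, ?_⟩
      refine HasFiniteIntegral.restrict_of_bounded (C := ε⁻¹) measure_Ioc_lt_top ?_
      refine (ae_restrict_iff' measurableSet_Ioc).2 (Filter.Eventually.of_forall fun v _ => ?_)
      have h1 : ε ≤ F (ψ (min (max v 0) s)) := hεF _ (hψcb v)
      rw [Real.norm_eq_abs, abs_of_nonneg (inv_nonneg.2 (hε0.le.trans h1))]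
      exact inv_anti₀ hε0 h1
    refine hG.congr_fun (fun v hv => ?_) measurableSet_Ioc
    have hv' : min (max v 0) s = v := by rw [max_eq_left hv.1.le, min_eq_left hv.2]
    beta_reduce
    rw [hv']
    exact congrArg Inv.inv (hFeq (ψ v)
      ⟨(hψle v ⟨hv.1.le, hv.2⟩).1, (hψle v ⟨hv.1.le, hv.2⟩).2.trans hab.le⟩)
  -- right derivative of ψ
  have hderiv : ∀ v ∈ Set.Ioo 0 s,
      HasDerivWithinAt ψ ((c (X (ψ v)))⁻¹) (Set.Ioi v) v := by
    intro v hv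
    have hvJ' : v ∈ J' := hIccJ' ⟨hv.1.le, hv.2.le⟩
    have htJ : ψ v ∈ J := hψmaps hvJ'
    have ht0 : 0 < ψ v := by
      have := hψmono h0J' hvJ' hv.1
      rwa [hψ0] at this
    have hta : ψ v < a := hψmono hvJ' hs hv.2
    have htb : ψ v < b := hta.trans hab
    have hϕt : ϕ (ψ v) = v := hinv.2 hvJ'
    have hmeasAt : StronglyMeasurableAtFilter (fun u => c (X u))
        (nhdsWithin (ψ v) (Set.Ioi (ψ v))) MeasureTheory.volume := by
      refine ⟨Set.Ioo (ψ v) b, Ioo_mem_nhdsGT_of_mem ⟨le_rfl, htb⟩, ?_⟩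
      refine (hFmeas.aestronglyMeasurable.restrict).congr ?_
      exact (ae_restrict_mem measurableSet_Ioo).mono fun x hx =>
        hFeq x ⟨ht0.le.trans hx.1.le, hx.2.le⟩
    have hcwa : ContinuousWithinAt (fun u => c (X u)) (Set.Ioi (ψ v)) (ψ v) :=
      (hc_cont.continuousAt.comp_continuousWithinAt
        (hX_rc (ψ v) htJ.1 htJ.2)).mono Set.Ioi_subset_Ici_self
    have hϕd : HasDerivWithinAt ϕ (c (X (ψ v))) (Set.Ici (ψ v)) (ψ v) :=
      intervalIntegral.integral_hasDerivWithinAt_right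
        (key_int b hbJ 0 (ψ v) ⟨le_rfl, hbJ.1⟩ ⟨ht0.le, htb.le⟩) hmeasAt hcwa
    have hslopeϕ : Filter.Tendsto (slope ϕ (ψ v)) (nhdsWithin (ψ v) (Set.Ioi (ψ v)))
        (nhds (c (X (ψ v)))) := by
      have := hasDerivWithinAt_iff_tendsto_slope.1 hϕd
      rwa [Set.Ici_sdiff_left] at this
    have hψt : Filter.Tendsto ψ (nhdsWithin v (Set.Ioi v))
        (nhdsWithin (ψ v) (Set.Ioi (ψ v))) := by
      rw [tendsto_nhdsWithin_iff]
      constructor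
      · have h1 : ContinuousWithinAt ψ (Set.Icc 0 s) v := hψcont v ⟨hv.1.le, hv.2.le⟩
        have h2 : Filter.Tendsto ψ (nhdsWithin v (Set.Ioc v s)) (nhds (ψ v)) :=
          h1.mono (fun w hw => ⟨hv.1.le.trans hw.1.le, hw.2⟩)
        rwa [nhdsWithin_Ioc_eq_nhdsGT hv.2] at h2
      · refine Filter.eventually_of_mem (Ioc_mem_nhdsGT_of_mem ⟨le_rfl, hv.2⟩) fun w hw => ?_
        exact hψmono hvJ' (hIccJ' ⟨hv.1.le.trans hw.1.le, hw.2⟩) hw.1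
    have hcomp : Filter.Tendsto (fun w => (slope ϕ (ψ v) (ψ w))⁻¹)
        (nhdsWithin v (Set.Ioi v)) (nhds (c (X (ψ v)))⁻¹) :=
      (hslopeϕ.comp hψt).inv₀ (ne_of_gt (hc_pos _))
    have hcongr : ∀ᶠ w in nhdsWithin v (Set.Ioi v),
        (slope ϕ (ψ v) (ψ w))⁻¹ = slope ψ v w := by
      refine Filter.eventually_of_mem (Ioc_mem_nhdsGT_of_mem ⟨le_rfl, hv.2⟩) fun w hw => ?_
      have hwJ' : w ∈ J' := hIccJ' ⟨hv.1.le.trans hw.1.le, hw.2⟩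
      rw [slope_def_field, slope_def_field, inv_div, hinv.2 hwJ', hϕt]
    rw [hasDerivWithinAt_iff_tendsto_slope' (s := Set.Ioi v) (x := v) (by simp)]
    exact Filter.Tendsto.congr' hcongr hcomp
  have hFTC := intervalIntegral.integral_eq_sub_of_hasDeriv_right_of_le h0s.le
    hψcont hderiv hint
  rw [hFTC, hψ0, sub_zero]
end
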